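/- arXiv:2504.17061 — 7 statements merged into one kernel-verified Lean document; each statement's English description precedes it below -/
import Mathlib

section
/- Let ε ≥ 0, let X be a nonempty set, and let u₀, u₁, …, u_N : X → ℝ be functions (N ≥ 1). The following are equivalent: (i) there exist real numbers a₁, …, a_N and a bounded function e : X → ℝ with ω(e) ≤ ε such that u₀(x) = Σ_{i=1}^N a_i u_i(x) + e(x) for all x ∈ X; (ii) there exists a utilitarian aggregator w ∈ W with ‖u₀ − w‖∞ ≤ ε/2. Moreover, the equivalence continues to hold when in (i) one additionally requires a_i ≥ 0 for all i (respectively a_i > 0 for all i) and in (ii) the set W is replaced by W₊ (respectively W₊₊). -/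
lemma key_aux {X : Type*} [Nonempty X] {ε : ℝ} (hε : 0 ≤ ε) (u₀ f : X → ℝ) :
    (∃ e : X → ℝ, BddAbove (Set.range e) ∧ BddBelow (Set.range e) ∧
        sSup (Set.range e) - sInf (Set.range e) ≤ ε ∧
        ∀ x, u₀ x = f x + e x) ↔
      (∃ b : ℝ, ∀ x, |u₀ x - (f x + b)| ≤ ε / 2) := by
  constructor
  · rintro ⟨e, hba, hbb, hosc, heq⟩
    refine ⟨(sSup (Set.range e) + sInf (Set.range e)) / 2, fun x => ?_⟩
    have h1 : e x ≤ sSup (Set.range e) := le_csSup hba ⟨x, rfl⟩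
    have h2 : sInf (Set.range e) ≤ e x := csInf_le hbb ⟨x, rfl⟩
    have : u₀ x - (f x + (sSup (Set.range e) + sInf (Set.range e)) / 2)
        = e x - (sSup (Set.range e) + sInf (Set.range e)) / 2 := by rw [heq x]; ring
    rw [this, abs_le]
    constructor <;> linarith
  · rintro ⟨b, hb⟩
    refine ⟨fun x => u₀ x - f x, ?_, ?_, ?_, fun x => by ring⟩
    · refine ⟨b + ε / 2, ?_⟩
      rintro y ⟨x, rfl⟩
      have := (abs_le.1 (hb x)).2; dsimp; linarith
    · refine ⟨b - ε / 2, ?_⟩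
      rintro y ⟨x, rfl⟩
      have := (abs_le.1 (hb x)).1; dsimp; linarith
    · have h1 : sSup (Set.range fun x => u₀ x - f x) ≤ b + ε / 2 := by
        apply csSup_le (Set.range_nonempty _)
        rintro y ⟨x, rfl⟩; have := (abs_le.1 (hb x)).2; linarith
      have h2 : b - ε / 2 ≤ sInf (Set.range fun x => u₀ x - f x) := by
        apply le_csInf (Set.range_nonempty _)
        rintro y ⟨x, rfl⟩; have := (abs_le.1 (hb x)).1; linarith
      linarith


/-- Proposition: equivalent forms of approximate utilitarian aggregation.
Let `ε ≥ 0`, `X` nonempty, `u₀, u₁, …, u_N : X → ℝ` with `N ≥ 1`.  The following are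
equivalent: (i) there exist reals `a₁,…,a_N` and a bounded function `e : X → ℝ` with
oscillation `ω(e) ≤ ε` such that `u₀ = Σ aᵢ uᵢ + e`; (ii) there is a utilitarian
aggregator `w = Σ aᵢ uᵢ + b` with `‖u₀ − w‖∞ ≤ ε/2`.  The equivalence also holds when
one requires `aᵢ ≥ 0` for all `i` (resp. `aᵢ > 0` for all `i`). -/
theorem stmt0 {X : Type*} [Nonempty X] {N : ℕ} (hN : 1 ≤ N) {ε : ℝ} (hε : 0 ≤ ε)
    (u₀ : X → ℝ) (u : Fin N → X → ℝ) :
    (((∃ (a : Fin N → ℝ) (e : X → ℝ), BddAbove (Set.range e) ∧ BddBelow (Set.range e) ∧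
          sSup (Set.range e) - sInf (Set.range e) ≤ ε ∧
          ∀ x, u₀ x = (∑ i, a i * u i x) + e x) ↔
        (∃ (a : Fin N → ℝ) (b : ℝ),
          ∀ x, |u₀ x - ((∑ i, a i * u i x) + b)| ≤ ε / 2)) ∧
      ((∃ (a : Fin N → ℝ) (e : X → ℝ), (∀ i, 0 ≤ a i) ∧
          BddAbove (Set.range e) ∧ BddBelow (Set.range e) ∧
          sSup (Set.range e) - sInf (Set.range e) ≤ ε ∧
          ∀ x, u₀ x = (∑ i, a i * u i x) + e x) ↔
        (∃ (a : Fin N → ℝ) (b : ℝ), (∀ i, 0 ≤ a i) ∧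
          ∀ x, |u₀ x - ((∑ i, a i * u i x) + b)| ≤ ε / 2)) ∧
      ((∃ (a : Fin N → ℝ) (e : X → ℝ), (∀ i, 0 < a i) ∧
          BddAbove (Set.range e) ∧ BddBelow (Set.range e) ∧
          sSup (Set.range e) - sInf (Set.range e) ≤ ε ∧
          ∀ x, u₀ x = (∑ i, a i * u i x) + e x) ↔
        (∃ (a : Fin N → ℝ) (b : ℝ), (∀ i, 0 < a i) ∧
          ∀ x, |u₀ x - ((∑ i, a i * u i x) + b)| ≤ ε / 2))) := by
  refine ⟨?_, ?_, ?_⟩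
  · exact exists_congr fun a => key_aux hε u₀ (fun x => ∑ i, a i * u i x)
  · exact exists_congr fun a => by
      simp only [exists_and_left]
      exact and_congr_right fun _ => key_aux hε u₀ (fun x => ∑ i, a i * u i x)
  · exact exists_congr fun a => by
      simp only [exists_and_left]
      exact and_congr_right fun _ => key_aux hε u₀ (fun x => ∑ i, a i * u i x)
end

section
/- Let (X, u₀, {u₁,…,u_N}) be a setting with vN-M utilities in which X is additionally a compact subset of a real topological vector space and u₀, u₁, …, u_N are continuous. Define η : X × X × ℝ₊^N → ℝ by η(x, y, a) = u₀(y) − u₀(x) + Σ_{i=1}^N a_i (u_i(x) − u_i(y)). Then η has the minimax property: max_{(x,y)∈X×X} inf_{a∈ℝ₊^N} η(x, y, a) = min_{a∈ℝ₊^N} max_{(x,y)∈X×X} η(x, y, a), where in particular the outer maximum on the left-hand side and the outer minimum on the right-hand side are attained. -/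
/-- The function `η(x, y, a) = u₀(y) − u₀(x) + Σᵢ aᵢ (uᵢ(x) − uᵢ(y))`. -/
def eta {E : Type*} {N : ℕ} (u₀ : E → ℝ) (u : Fin N → E → ℝ)
    (x y : E) (a : Fin N → ℝ) : ℝ :=
  u₀ y - u₀ x + ∑ i, a i * (u i x - u i y)


open Filter Topology

private lemma tau_lemma {L A B : ℝ} (h : ∀ τ : ℝ, 0 ≤ τ → L < A + τ * B) : 0 ≤ B := by
  by_contra hB
  push_neg at hB
  have h0 := h 0 le_rfl
  have hAL : 0 < A - L := by linarith
  have hτ : (0:ℝ) ≤ (A - L) / (-B) := div_nonneg hAL.le (by linarith)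
  have h2 := h ((A - L) / (-B)) hτ
  have h4 : (A - L) / (-B) * (-B) = A - L := div_mul_cancel₀ _ (neg_ne_zero.mpr hB.ne)
  have h3 : (A - L) / (-B) * B = -(A - L) := by
    calc (A - L) / (-B) * B = -((A - L) / (-B) * (-B)) := by ring
    _ = -(A - L) := by rw [h4]
  linarith

private lemma pairing {N : ℕ} (f : ((Fin N → ℝ) × ℝ) →L[ℝ] ℝ) (w : Fin N → ℝ) (t : ℝ) :
    f (w, t) = ∑ i, w i * f (Pi.single i 1, 0) + t * f (0, 1) := by
  have hdec : (w, t) = (∑ i, w i • ((Pi.single i 1 : Fin N → ℝ), (0:ℝ)))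
      + t • ((0 : Fin N → ℝ), (1:ℝ)) := by
    refine Prod.ext ?_ ?_
    · simp only [Prod.fst_add, Prod.fst_sum, Prod.smul_fst, Prod.smul_snd, smul_eq_mul]
      funext j
      simp [Finset.sum_apply, Pi.single_apply]
    · simp [Prod.snd_sum]
  rw [hdec, map_add, map_sum, map_smul, smul_eq_mul]
  congr 1
  refine Finset.sum_congr rfl fun i _ => ?_
  rw [map_smul, smul_eq_mul]

private lemma sep {N : ℕ} (E I : Finset (Fin N)) (hdisj : Disjoint E I)
    (V : Set ((Fin N → ℝ) × ℝ)) (hVne : V.Nonempty) (hVcomp : IsCompact V)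
    (hVconv : Convex ℝ V) (c : ℝ)
    (hub : ∀ v ∈ V, (∀ i ∈ E, v.1 i = 0) → (∀ i ∈ I, 0 ≤ v.1 i) → v.2 ≤ c) :
    ∃ b : (Fin N → ℝ) × ℝ, b ≠ 0 ∧ 0 ≤ b.2 ∧ (∀ i ∈ I, 0 ≤ b.1 i) ∧
      (∀ i, i ∉ E → i ∉ I → b.1 i = 0) ∧
      ∀ v ∈ V, (∑ i, b.1 i * v.1 i) + b.2 * v.2 ≤ b.2 * c := by
  classical
  obtain ⟨x₀, hx₀⟩ := hVne
  -- step 1: for every `m`, a normalized separating functional for the `1/(m+1)`-enlarged problem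
  have Hm : ∀ m : ℕ, ∃ b : (Fin N → ℝ) × ℝ, ‖b‖ = 1 ∧ 0 ≤ b.2 ∧ (∀ i ∈ I, 0 ≤ b.1 i) ∧
      (∀ i, i ∉ E → i ∉ I → b.1 i = 0) ∧
      ∀ v ∈ V, (∑ i, b.1 i * v.1 i) + b.2 * v.2 ≤ b.2 * (c + 1/(m+1)) := by
    intro m
    set σ : ℝ := 1/(m+1) with hσdef
    have hσ : 0 < σ := by positivity
    set Q : Set ((Fin N → ℝ) × ℝ) :=
      {v | (∀ i ∈ E, v.1 i = 0) ∧ (∀ i ∈ I, 0 ≤ v.1 i) ∧ c + σ ≤ v.2} with hQdef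
    have hQconv : Convex ℝ Q := by
      intro p hp q hq α β hα hβ hαβ
      obtain ⟨hp1, hp2, hp3⟩ := hp
      obtain ⟨hq1, hq2, hq3⟩ := hq
      refine ⟨fun i hi => ?_, fun i hi => ?_, ?_⟩
      · simp only [Prod.fst_add, Prod.smul_fst, Pi.add_apply, Pi.smul_apply, smul_eq_mul]
        rw [hp1 i hi, hq1 i hi]; ring
      · simp only [Prod.fst_add, Prod.smul_fst, Pi.add_apply, Pi.smul_apply, smul_eq_mul]
        have := hp2 i hi; have := hq2 i hi; positivity
      · simp only [Prod.snd_add, Prod.smul_snd, smul_eq_mul]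
        have hs1 : α * (c + σ) ≤ α * p.2 := mul_le_mul_of_nonneg_left hp3 hα
        have hs2 : β * (c + σ) ≤ β * q.2 := mul_le_mul_of_nonneg_left hq3 hβ
        have hsum : α * (c + σ) + β * (c + σ) = c + σ := by rw [← add_mul, hαβ, one_mul]
        linarith
    have hQclosed : IsClosed Q := by
      have h1 : IsClosed {v : (Fin N → ℝ) × ℝ | ∀ i ∈ E, v.1 i = 0} := by
        have : {v : (Fin N → ℝ) × ℝ | ∀ i ∈ E, v.1 i = 0}
            = ⋂ i ∈ E, {v : (Fin N → ℝ) × ℝ | v.1 i = 0} := by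
          ext v; simp
        rw [this]
        exact isClosed_biInter fun i _ =>
          isClosed_eq ((continuous_apply i).comp continuous_fst) continuous_const
      have h2 : IsClosed {v : (Fin N → ℝ) × ℝ | ∀ i ∈ I, 0 ≤ v.1 i} := by
        have : {v : (Fin N → ℝ) × ℝ | ∀ i ∈ I, 0 ≤ v.1 i}
            = ⋂ i ∈ I, {v : (Fin N → ℝ) × ℝ | 0 ≤ v.1 i} := by
          ext v; simp
        rw [this]
        exact isClosed_biInter fun i _ =>
          isClosed_le continuous_const ((continuous_apply i).comp continuous_fst)
      have h3 : IsClosed {v : (Fin N → ℝ) × ℝ | c + σ ≤ v.2} :=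
        isClosed_le continuous_const continuous_snd
      have : Q = {v : (Fin N → ℝ) × ℝ | ∀ i ∈ E, v.1 i = 0}
          ∩ ({v : (Fin N → ℝ) × ℝ | ∀ i ∈ I, 0 ≤ v.1 i}
            ∩ {v : (Fin N → ℝ) × ℝ | c + σ ≤ v.2}) := by
        ext v; simp [hQdef, and_assoc]
      rw [this]
      exact h1.inter (h2.inter h3)
    have hQdisj : Disjoint V Q := by
      rw [Set.disjoint_left]
      intro v hv hvQ
      have := hub v hv hvQ.1 hvQ.2.1
      have := hvQ.2.2
      linarith
    obtain ⟨f, uu, vv, h1, h2, h3⟩ :=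
      geometric_hahn_banach_compact_closed hVconv hVcomp hQconv hQclosed hQdisj
    set b : (Fin N → ℝ) × ℝ := (fun i => f (Pi.single i 1, 0), f (0,1)) with hbdef
    have hpr : ∀ x : (Fin N → ℝ) × ℝ, (∑ i, b.1 i * x.1 i) + b.2 * x.2 = f x := by
      intro x
      have hp2 := pairing f x.1 x.2
      rw [Prod.mk.eta] at hp2
      rw [hp2]
      congr 1
      · exact Finset.sum_congr rfl fun i _ => mul_comm _ _
      · exact mul_comm _ _
    set q₀ : (Fin N → ℝ) × ℝ := ((0 : Fin N → ℝ), c + σ) with hq₀def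
    have hq₀ : q₀ ∈ Q := ⟨fun i _ => rfl, fun i _ => le_rfl, le_rfl⟩
    set L : ℝ := f x₀ with hLdef
    have hLQ : ∀ q ∈ Q, L < f q := fun q hq => lt_trans (lt_trans (h1 x₀ hx₀) h2) (h3 q hq)
    -- b.2 ≥ 0
    have hbt : 0 ≤ b.2 := by
      apply tau_lemma (L := L) (A := f q₀)
      intro τ hτ
      have hmem : q₀ + τ • ((0 : Fin N → ℝ), (1:ℝ)) ∈ Q := by
        refine ⟨fun i _ => ?_, fun i _ => ?_, ?_⟩
        · simp [hq₀def]
        · simp [hq₀def]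
        · simp only [Prod.snd_add, Prod.smul_snd, smul_eq_mul, hq₀def]
          simp; linarith
      have := hLQ _ hmem
      rwa [map_add, map_smul, smul_eq_mul] at this
    -- I-coordinates nonnegative
    have hbI : ∀ i ∈ I, 0 ≤ b.1 i := by
      intro i hi
      apply tau_lemma (L := L) (A := f q₀)
      intro τ hτ
      have hmem : q₀ + τ • ((Pi.single i 1 : Fin N → ℝ), (0:ℝ)) ∈ Q := by
        refine ⟨fun j hj => ?_, fun j hj => ?_, ?_⟩
        · have hji : j ≠ i := fun h => (Finset.disjoint_left.mp hdisj hj) (h ▸ hi)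
          simp only [Prod.fst_add, Prod.smul_fst, Pi.add_apply, Pi.smul_apply, smul_eq_mul,
            hq₀def]
          simp [Pi.single_eq_of_ne hji]
        · simp only [Prod.fst_add, Prod.smul_fst, Pi.add_apply, Pi.smul_apply, smul_eq_mul,
            hq₀def]
          simp only [Pi.zero_apply, zero_add]
          rw [Pi.single_apply]
          split_ifs <;> simp [hτ]
        · simp [hq₀def]
      have := hLQ _ hmem
      rwa [map_add, map_smul, smul_eq_mul] at this
    -- coordinates outside E ∪ I vanish
    have hbzero : ∀ i, i ∉ E → i ∉ I → b.1 i = 0 := by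
      intro i hiE hiI
      have haux : ∀ s : ℝ, q₀ + ((s • (Pi.single i 1 : Fin N → ℝ)), (0:ℝ)) ∈ Q := by
        intro s
        refine ⟨fun j hj => ?_, fun j hj => ?_, ?_⟩
        · have hji : j ≠ i := fun h => hiE (h ▸ hj)
          simp only [Prod.fst_add, Pi.add_apply, Pi.smul_apply, smul_eq_mul, hq₀def]
          simp [Pi.single_eq_of_ne hji]
        · have hji : j ≠ i := fun h => hiI (h ▸ hj)
          simp only [Prod.fst_add, Pi.add_apply, Pi.smul_apply, smul_eq_mul, hq₀def]
          simp [Pi.single_eq_of_ne hji]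
        · simp [hq₀def]
      have hpos : 0 ≤ b.1 i := by
        apply tau_lemma (L := L) (A := f q₀)
        intro τ hτ
        have := hLQ _ (haux τ)
        have heq : q₀ + ((τ • (Pi.single i 1 : Fin N → ℝ)), (0:ℝ))
            = q₀ + τ • ((Pi.single i 1 : Fin N → ℝ), (0:ℝ)) := by
          refine Prod.ext ?_ ?_ <;> simp
        rw [heq, map_add, map_smul, smul_eq_mul] at this
        exact this
      have hneg : 0 ≤ -(b.1 i) := by
        apply tau_lemma (L := L) (A := f q₀)
        intro τ hτ
        have := hLQ _ (haux (-τ))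
        have heq : q₀ + (((-τ) • (Pi.single i 1 : Fin N → ℝ)), (0:ℝ))
            = q₀ + τ • (-((Pi.single i 1 : Fin N → ℝ), (0:ℝ))) := by
          refine Prod.ext ?_ ?_
          · funext j
            simp
            try ring
          · simp
        rw [heq, map_add, map_smul, map_neg, smul_eq_mul] at this
        simpa [mul_neg] using this
      linarith
    have hfq₀ : f q₀ = b.2 * (c + σ) := by
      rw [← hpr q₀]
      simp [hq₀def]
    have hVineq : ∀ v ∈ V, (∑ i, b.1 i * v.1 i) + b.2 * v.2 ≤ b.2 * (c + σ) := by
      intro v hv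
      rw [hpr v, ← hfq₀]
      exact le_of_lt (lt_trans (lt_trans (h1 v hv) h2) (h3 q₀ hq₀))
    have hbne : b ≠ 0 := by
      intro h0
      have h1' : f x₀ = 0 := by rw [← hpr x₀, h0]; simp
      have h2' : f q₀ = 0 := by rw [← hpr q₀, h0]; simp
      have := hLQ q₀ hq₀
      rw [hLdef] at this
      rw [h1', h2'] at this
      exact lt_irrefl 0 this
    -- normalize
    set r : ℝ := ‖b‖⁻¹ with hrdef
    have hr : 0 < r := by
      rw [hrdef]
      exact inv_pos.mpr (norm_pos_iff.mpr hbne)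
    refine ⟨r • b, norm_smul_inv_norm hbne, ?_, ?_, ?_, ?_⟩
    · simp only [Prod.smul_snd, smul_eq_mul]
      positivity
    · intro i hi
      simp only [Prod.smul_fst, Pi.smul_apply, smul_eq_mul]
      exact mul_nonneg hr.le (hbI i hi)
    · intro i hiE hiI
      simp only [Prod.smul_fst, Pi.smul_apply, smul_eq_mul]
      exact mul_eq_zero_of_right r (hbzero i hiE hiI)
    · intro v hv
      have h := hVineq v hv
      have : (∑ i, (r • b).1 i * v.1 i) + (r • b).2 * v.2
          = r * ((∑ i, b.1 i * v.1 i) + b.2 * v.2) := by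
        simp only [Prod.smul_fst, Prod.smul_snd, Pi.smul_apply, smul_eq_mul]
        rw [mul_add, Finset.mul_sum]
        congr 1
        · exact Finset.sum_congr rfl fun i _ => by ring
        · ring
      rw [this]
      have h2' : (r • b).2 * (c + σ) = r * (b.2 * (c + σ)) := by
        simp only [Prod.smul_snd, smul_eq_mul]; ring
      rw [h2']
      exact mul_le_mul_of_nonneg_left h hr.le
  -- step 2: pass to the limit along a subsequence
  choose bs hbs using Hm
  have hmem : ∀ m, bs m ∈ Metric.sphere (0 : (Fin N → ℝ) × ℝ) 1 :=
    fun m => mem_sphere_zero_iff_norm.mpr (hbs m).1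
  obtain ⟨b, hbmem, φ, hφ, hconv⟩ :=
    (isCompact_sphere (0 : (Fin N → ℝ) × ℝ) 1).tendsto_subseq hmem
  have hsnd : Tendsto (fun n => (bs (φ n)).2) atTop (𝓝 b.2) :=
    (continuous_snd.tendsto b).comp hconv
  have hfst : ∀ i, Tendsto (fun n => (bs (φ n)).1 i) atTop (𝓝 (b.1 i)) :=
    fun i => (((continuous_apply i).comp continuous_fst).tendsto b).comp hconv
  have hbne : b ≠ 0 := by
    intro h0
    have := mem_sphere_zero_iff_norm.mp hbmem
    rw [h0, norm_zero] at this
    exact zero_ne_one this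
  have hσtend : Tendsto (fun n => (1:ℝ)/(φ n + 1)) atTop (𝓝 0) :=
    tendsto_one_div_add_atTop_nhds_zero_nat.comp hφ.tendsto_atTop
  refine ⟨b, hbne, ?_, ?_, ?_, ?_⟩
  · exact ge_of_tendsto' hsnd fun n => (hbs (φ n)).2.1
  · intro i hi
    exact ge_of_tendsto' (hfst i) fun n => (hbs (φ n)).2.2.1 i hi
  · intro i hiE hiI
    have hzero : Tendsto (fun n => (bs (φ n)).1 i) atTop (𝓝 0) := by
      have he : (fun n => (bs (φ n)).1 i) = fun _ => (0:ℝ) :=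
        funext fun n => (hbs (φ n)).2.2.2.1 i hiE hiI
      rw [he]
      exact tendsto_const_nhds
    exact tendsto_nhds_unique (hfst i) hzero
  · intro v hv
    have hlhs : Tendsto (fun n => (∑ i, (bs (φ n)).1 i * v.1 i) + (bs (φ n)).2 * v.2)
        atTop (𝓝 ((∑ i, b.1 i * v.1 i) + b.2 * v.2)) := by
      apply Tendsto.add
      · exact tendsto_finset_sum _ fun i _ => (hfst i).mul tendsto_const_nhds
      · exact hsnd.mul tendsto_const_nhds
    have hrhs : Tendsto (fun n => (bs (φ n)).2 * (c + 1/(φ n + 1)))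
        atTop (𝓝 (b.2 * (c + 0))) :=
      hsnd.mul (tendsto_const_nhds.add hσtend)
    have := le_of_tendsto_of_tendsto' hlhs hrhs fun n => (hbs (φ n)).2.2.2.2 v hv
    simpa using this

private lemma btpos_case {N : ℕ} {E I : Finset (Fin N)} {V : Set ((Fin N → ℝ) × ℝ)} {c : ℝ}
    {b : (Fin N → ℝ) × ℝ} (hbt : 0 < b.2) (hbI : ∀ i ∈ I, 0 ≤ b.1 i)
    (hbz : ∀ i, i ∉ E → i ∉ I → b.1 i = 0)
    (hineq : ∀ v ∈ V, (∑ i, b.1 i * v.1 i) + b.2 * v.2 ≤ b.2 * c) :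
    ∃ a : Fin N → ℝ, (∀ i ∈ I, 0 ≤ a i) ∧ (∀ i, i ∉ E → i ∉ I → a i = 0) ∧
      ∀ v ∈ V, v.2 + ∑ i, a i * v.1 i ≤ c := by
  refine ⟨fun i => b.1 i / b.2, fun i hi => div_nonneg (hbI i hi) hbt.le,
    fun i h1 h2 => by show b.1 i / b.2 = 0; rw [hbz i h1 h2, zero_div], ?_⟩
  intro v hv
  have h := hineq v hv
  have hsum : ∑ i, b.1 i / b.2 * v.1 i = (∑ i, b.1 i * v.1 i) / b.2 := by
    rw [Finset.sum_div]; exact Finset.sum_congr rfl fun i _ => by ring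
  rw [hsum]
  have h3 : (∑ i, b.1 i * v.1 i) / b.2 ≤ c - v.2 :=
    (div_le_iff₀ hbt).mpr (by nlinarith)
  linarith

private lemma keyduality {N : ℕ} (k : ℕ) :
    ∀ (E I : Finset (Fin N)), Disjoint E I → E.card + I.card ≤ k →
    ∀ (V : Set ((Fin N → ℝ) × ℝ)), V.Nonempty → IsCompact V → Convex ℝ V →
    (∀ v ∈ V, -v ∈ V) → ∀ c : ℝ,
    (∀ v ∈ V, (∀ i ∈ E, v.1 i = 0) → (∀ i ∈ I, 0 ≤ v.1 i) → v.2 ≤ c) →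
    ∃ a : Fin N → ℝ, (∀ i ∈ I, 0 ≤ a i) ∧ (∀ i, i ∉ E → i ∉ I → a i = 0) ∧
      ∀ v ∈ V, v.2 + ∑ i, a i * v.1 i ≤ c := by
  induction k with
  | zero =>
    intro E I hdisj hcard V hVne hVcomp hVconv hVsym c hub
    have hE : E = ∅ := Finset.card_eq_zero.mp (by omega)
    have hI : I = ∅ := Finset.card_eq_zero.mp (by omega)
    subst hE; subst hI
    obtain ⟨b, hbne, hbt, hbI, hbz, hineq⟩ :=
      sep ∅ ∅ (by simp) V hVne hVcomp hVconv c hub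
    have hbt' : 0 < b.2 := by
      rcases lt_or_eq_of_le hbt with h | h
      · exact h
      · exfalso
        apply hbne
        have h1 : b.1 = 0 :=
          funext fun i => hbz i (Finset.notMem_empty i) (Finset.notMem_empty i)
        exact Prod.ext (by simp [h1]) (by simp [← h])
    exact btpos_case hbt' hbI hbz hineq
  | succ k ih =>
    intro E I hdisj hcard V hVne hVcomp hVconv hVsym c hub
    classical
    obtain ⟨b, hbne, hbt, hbI, hbz, hineq⟩ := sep E I hdisj V hVne hVcomp hVconv c hub
    rcases lt_or_eq_of_le hbt with hbt' | hbt0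
    · exact btpos_case hbt' hbI hbz hineq
    · have hb2 : b.2 = 0 := hbt0.symm
      have hzero : ∀ v ∈ V, ∑ i, b.1 i * v.1 i = 0 := by
        intro v hv
        have h1 := hineq v hv
        have h2 := hineq (-v) (hVsym v hv)
        rw [hb2] at h1 h2
        simp only [zero_mul, add_zero] at h1 h2
        have h3 : ∑ i, b.1 i * (-v).1 i = -∑ i, b.1 i * v.1 i := by
          simp [mul_neg]
        rw [h3] at h2
        linarith
      by_cases hIb : ∃ j ∈ I, b.1 j ≠ 0
      · obtain ⟨j, hjI, hbj0⟩ := hIb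
        set S0 : Finset (Fin N) := I.filter (fun i => b.1 i ≠ 0) with hS0
        have hjS0 : j ∈ S0 := Finset.mem_filter.mpr ⟨hjI, hbj0⟩
        set E' : Finset (Fin N) := E ∪ S0.erase j with hE'
        set I' : Finset (Fin N) := I.filter (fun i => b.1 i = 0) with hI'
        have hdisj' : Disjoint E' I' := by
          rw [Finset.disjoint_left]
          intro i hi hiI'
          rcases Finset.mem_union.mp hi with h | h
          · exact (Finset.disjoint_left.mp hdisj h) (Finset.mem_filter.mp hiI').1
          · exact (Finset.mem_filter.mp (Finset.mem_of_mem_erase h)).2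
              (Finset.mem_filter.mp hiI').2
        have hcard' : E'.card + I'.card ≤ k := by
          have h1 : E'.card ≤ E.card + (S0.erase j).card := Finset.card_union_le _ _
          have h2 := Finset.card_erase_of_mem hjS0
          have hpos := Finset.card_pos.mpr ⟨j, hjS0⟩
          have h3 : I'.card + S0.card = I.card := by
            rw [hI', hS0]
            exact Finset.card_filter_add_card_filter_not (fun i => b.1 i = 0)
          omega
        have hub' : ∀ v ∈ V, (∀ i ∈ E', v.1 i = 0) → (∀ i ∈ I', 0 ≤ v.1 i) → v.2 ≤ c := by
          intro v hv hE'v hI'v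
          apply hub v hv
          · intro i hi; exact hE'v i (Finset.mem_union_left _ hi)
          · intro i hi
            by_cases hbi : b.1 i = 0
            · exact hI'v i (Finset.mem_filter.mpr ⟨hi, hbi⟩)
            · by_cases hij : i = j
              · have hterms : ∀ x ∈ Finset.univ, x ≠ j → b.1 x * v.1 x = 0 := by
                  intro x _ hxj
                  by_cases hxE : x ∈ E
                  · rw [hE'v x (Finset.mem_union_left _ hxE), mul_zero]
                  · by_cases hxI : x ∈ I
                    · by_cases hbx : b.1 x = 0
                      · rw [hbx, zero_mul]
                      · have hmem : x ∈ S0.erase j :=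
                          Finset.mem_erase.mpr ⟨hxj, Finset.mem_filter.mpr ⟨hxI, hbx⟩⟩
                        rw [hE'v x (Finset.mem_union_right _ hmem), mul_zero]
                    · rw [hbz x hxE hxI, zero_mul]
                have hj0 : b.1 j * v.1 j = 0 :=
                  (Finset.sum_eq_single j hterms
                    (fun h => absurd (Finset.mem_univ j) h)).symm.trans (hzero v hv)
                have hvj : v.1 j = 0 := by
                  rcases mul_eq_zero.mp hj0 with h | h
                  · exact absurd h hbj0
                  · exact h
                rw [hij, hvj]
              · have hmem : i ∈ S0.erase j :=
                  Finset.mem_erase.mpr ⟨hij, Finset.mem_filter.mpr ⟨hi, hbi⟩⟩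
                rw [hE'v i (Finset.mem_union_right _ hmem)]
        obtain ⟨a', ha'I, ha'z, ha'ineq⟩ :=
          ih E' I' hdisj' hcard' V hVne hVcomp hVconv hVsym c hub'
        set lam : ℝ := ∑ i ∈ I, |a' i| / b.1 i with hlam
        have hlam_nonneg : 0 ≤ lam :=
          Finset.sum_nonneg fun i hi => div_nonneg (abs_nonneg _) (hbI i hi)
        have hlam_ge : ∀ i ∈ I, b.1 i ≠ 0 → |a' i| ≤ lam * b.1 i := by
          intro i hi hbi
          have hbipos : 0 < b.1 i := lt_of_le_of_ne (hbI i hi) (Ne.symm hbi)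
          have h1 : |a' i| / b.1 i ≤ lam :=
            Finset.single_le_sum (f := fun i => |a' i| / b.1 i)
              (fun x hx => div_nonneg (abs_nonneg _) (hbI x hx)) hi
          calc |a' i| = |a' i| / b.1 i * b.1 i := by field_simp
          _ ≤ lam * b.1 i := mul_le_mul_of_nonneg_right h1 hbipos.le
        refine ⟨fun i => a' i + lam * b.1 i, ?_, ?_, ?_⟩
        · intro i hi
          show 0 ≤ a' i + lam * b.1 i
          by_cases hbi : b.1 i = 0
          · rw [hbi, mul_zero, add_zero]
            exact ha'I i (Finset.mem_filter.mpr ⟨hi, hbi⟩)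
          · have := hlam_ge i hi hbi
            linarith [neg_abs_le (a' i)]
        · intro i hiE hiI
          show a' i + lam * b.1 i = 0
          rw [hbz i hiE hiI, mul_zero, add_zero]
          apply ha'z i
          · intro hmem
            rcases Finset.mem_union.mp hmem with h | h
            · exact hiE h
            · exact hiI (Finset.mem_filter.mp (Finset.mem_of_mem_erase h)).1
          · intro hmem
            exact hiI (Finset.mem_filter.mp hmem).1
        · intro v hv
          show v.2 + ∑ i, (a' i + lam * b.1 i) * v.1 i ≤ c
          have h1 := ha'ineq v hv
          have h2 := hzero v hv
          have hsplit : ∑ i, (a' i + lam * b.1 i) * v.1 i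
              = (∑ i, a' i * v.1 i) + lam * ∑ i, b.1 i * v.1 i := by
            rw [Finset.mul_sum, ← Finset.sum_add_distrib]
            exact Finset.sum_congr rfl fun i _ => by ring
          rw [hsplit, h2, mul_zero, add_zero]
          exact h1
      · push_neg at hIb
        have hEb : ∃ e ∈ E, b.1 e ≠ 0 := by
          by_contra h
          push_neg at h
          apply hbne
          have h1 : b.1 = 0 := funext fun i => by
            by_cases hiE : i ∈ E
            · exact h i hiE
            · by_cases hiI : i ∈ I
              · exact hIb i hiI
              · exact hbz i hiE hiI
          exact Prod.ext (by simp [h1]) (by simp [hb2])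
        obtain ⟨e₀, he₀E, hbe₀⟩ := hEb
        set E' := E.erase e₀ with hE'
        have hdisj' : Disjoint E' I :=
          Finset.disjoint_of_subset_left (Finset.erase_subset _ _) hdisj
        have hcard' : E'.card + I.card ≤ k := by
          have hEc : E'.card = E.card - 1 := by
            rw [hE']; exact Finset.card_erase_of_mem he₀E
          have hpos := Finset.card_pos.mpr ⟨e₀, he₀E⟩
          omega
        have hub' : ∀ v ∈ V, (∀ i ∈ E', v.1 i = 0) → (∀ i ∈ I, 0 ≤ v.1 i) → v.2 ≤ c := by
          intro v hv hE'v hIv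
          apply hub v hv _ hIv
          intro i hiE
          by_cases hie : i = e₀
          · have hterms : ∀ x ∈ Finset.univ, x ≠ e₀ → b.1 x * v.1 x = 0 := by
              intro x _ hxe
              by_cases hxE : x ∈ E
              · rw [hE'v x (Finset.mem_erase.mpr ⟨hxe, hxE⟩), mul_zero]
              · by_cases hxI : x ∈ I
                · rw [hIb x hxI, zero_mul]
                · rw [hbz x hxE hxI, zero_mul]
            have he0 : b.1 e₀ * v.1 e₀ = 0 :=
              (Finset.sum_eq_single e₀ hterms
                (fun h => absurd (Finset.mem_univ e₀) h)).symm.trans (hzero v hv)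
            have hv0 : v.1 e₀ = 0 := by
              rcases mul_eq_zero.mp he0 with h | h
              · exact absurd h hbe₀
              · exact h
            rw [hie, hv0]
          · exact hE'v i (Finset.mem_erase.mpr ⟨hie, hiE⟩)
        obtain ⟨a', ha'I, ha'z, ha'ineq⟩ :=
          ih E' I hdisj' hcard' V hVne hVcomp hVconv hVsym c hub'
        refine ⟨a', ha'I, ?_, ha'ineq⟩
        intro i hiE hiI
        exact ha'z i (fun h => hiE (Finset.mem_of_mem_erase h)) hiI

private def Amap {E : Type*} {N : ℕ} (u₀ : E → ℝ) (u : Fin N → E → ℝ) (p : E × E) :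
    (Fin N → ℝ) × ℝ :=
  (fun i => u i p.1 - u i p.2, u₀ p.2 - u₀ p.1)

private lemma Amap_fst {E : Type*} {N : ℕ} (u₀ : E → ℝ) (u : Fin N → E → ℝ) (p : E × E)
    (i : Fin N) : (Amap u₀ u p).1 i = u i p.1 - u i p.2 := rfl

private lemma Amap_snd {E : Type*} {N : ℕ} (u₀ : E → ℝ) (u : Fin N → E → ℝ) (p : E × E) :
    (Amap u₀ u p).2 = u₀ p.2 - u₀ p.1 := rfl

private lemma eta_Amap {E : Type*} {N : ℕ} (u₀ : E → ℝ) (u : Fin N → E → ℝ) (p : E × E)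
    (a : Fin N → ℝ) :
    eta u₀ u p.1 p.2 a = (Amap u₀ u p).2 + ∑ i, a i * (Amap u₀ u p).1 i := rfl

/-- minimax property of `η`.  In a setting with vN-M utilities where
`X` is a compact subset of a real topological vector space and `u₀, u₁, …, u_N` are
continuous, `η` has the minimax property
`max_{(x,y)∈X×X} inf_{a∈ℝ₊^N} η(x,y,a) = min_{a∈ℝ₊^N} max_{(x,y)∈X×X} η(x,y,a)`,
with the outer maximum on the left and the outer minimum on the right attained
(the inner infimum is taken in `ℝ ∪ {−∞}`, i.e. in `EReal`; the inner maximum on the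
right is attained as well). -/
theorem stmt2 {E : Type*} [AddCommGroup E] [Module ℝ E] [TopologicalSpace E]
    [IsTopologicalAddGroup E] [ContinuousSMul ℝ E]
    {N : ℕ} (hN : 1 ≤ N) (X : Set E) (hXne : X.Nonempty) (hXconv : Convex ℝ X)
    (hXcomp : IsCompact X)
    (u₀ : E → ℝ) (u : Fin N → E → ℝ)
    (hu₀c : ContinuousOn u₀ X) (huc : ∀ i, ContinuousOn (u i) X)
    (haff₀ : ∀ x ∈ X, ∀ y ∈ X, ∀ l : ℝ, 0 ≤ l → l ≤ 1 →
      u₀ (l • x + (1 - l) • y) = l * u₀ x + (1 - l) * u₀ y)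
    (haff : ∀ i : Fin N, ∀ x ∈ X, ∀ y ∈ X, ∀ l : ℝ, 0 ≤ l → l ≤ 1 →
      u i (l • x + (1 - l) • y) = l * u i x + (1 - l) * u i y) :
    ∃ x' ∈ X, ∃ y' ∈ X, ∃ a' : Fin N → ℝ, (∀ i, 0 ≤ a' i) ∧
      -- the outer maximum on the left-hand side is attained at (x', y')
      (∀ x ∈ X, ∀ y ∈ X,
        (⨅ a : {a : Fin N → ℝ // ∀ i, 0 ≤ a i}, ((eta u₀ u x y a.1 : ℝ) : EReal)) ≤
          ⨅ a : {a : Fin N → ℝ // ∀ i, 0 ≤ a i}, ((eta u₀ u x' y' a.1 : ℝ) : EReal)) ∧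
      -- the outer minimum on the right-hand side is attained at a'
      (∀ a : Fin N → ℝ, (∀ i, 0 ≤ a i) →
        sSup ((fun p : E × E => eta u₀ u p.1 p.2 a') '' (X ×ˢ X)) ≤
          sSup ((fun p : E × E => eta u₀ u p.1 p.2 a) '' (X ×ˢ X))) ∧
      -- the inner maximum on the right-hand side is attained
      (∃ x'' ∈ X, ∃ y'' ∈ X,
        eta u₀ u x'' y'' a' = sSup ((fun p : E × E => eta u₀ u p.1 p.2 a') '' (X ×ˢ X))) ∧
      -- the two values agree
      (⨅ a : {a : Fin N → ℝ // ∀ i, 0 ≤ a i}, ((eta u₀ u x' y' a.1 : ℝ) : EReal)) =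
        ((sSup ((fun p : E × E => eta u₀ u p.1 p.2 a') '' (X ×ˢ X)) : ℝ) : EReal) := by
  classical
  set A : E × E → (Fin N → ℝ) × ℝ := Amap u₀ u with hA
  set V : Set ((Fin N → ℝ) × ℝ) := A '' (X ×ˢ X) with hV
  have hXXne : (X ×ˢ X).Nonempty := hXne.prod hXne
  have hXXcomp : IsCompact (X ×ˢ X) := hXcomp.prod hXcomp
  have hAcont : ContinuousOn A (X ×ˢ X) := by
    apply ContinuousOn.prodMk
    · apply continuousOn_pi.mpr
      intro i
      exact ((huc i).comp continuousOn_fst fun p hp => hp.1).sub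
        ((huc i).comp continuousOn_snd fun p hp => hp.2)
    · exact (hu₀c.comp continuousOn_snd fun p hp => hp.2).sub
        (hu₀c.comp continuousOn_fst fun p hp => hp.1)
  have hVcomp : IsCompact V := hXXcomp.image_of_continuousOn hAcont
  have hVne : V.Nonempty := hXXne.image A
  have hVconv : Convex ℝ V := by
    rintro v1 ⟨p, hp, rfl⟩ v2 ⟨q, hq, rfl⟩ α β hα hβ hαβ
    have hα1 : α ≤ 1 := by linarith
    have hβ1 : β = 1 - α := by linarith
    refine ⟨α • p + β • q, ⟨?_, ?_⟩, ?_⟩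
    · show (α • p + β • q).1 ∈ X
      simp only [Prod.fst_add, Prod.smul_fst]
      exact hXconv hp.1 hq.1 hα hβ hαβ
    · show (α • p + β • q).2 ∈ X
      simp only [Prod.snd_add, Prod.smul_snd]
      exact hXconv hp.2 hq.2 hα hβ hαβ
    · have hfx : (α • p + β • q).1 = α • p.1 + (1 - α) • q.1 := by
        simp only [Prod.fst_add, Prod.smul_fst, hβ1]
      have hfy : (α • p + β • q).2 = α • p.2 + (1 - α) • q.2 := by
        simp only [Prod.snd_add, Prod.smul_snd, hβ1]
      refine Prod.ext ?_ ?_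
      · funext i
        show u i (α • p + β • q).1 - u i (α • p + β • q).2
            = (α • A p + β • A q).1 i
        rw [hfx, hfy, haff i p.1 hp.1 q.1 hq.1 α hα hα1,
          haff i p.2 hp.2 q.2 hq.2 α hα hα1]
        simp only [Prod.fst_add, Prod.smul_fst, Pi.add_apply, Pi.smul_apply, smul_eq_mul,
          hA, Amap_fst]
        rw [hβ1]; ring
      · show u₀ (α • p + β • q).2 - u₀ (α • p + β • q).1 = (α • A p + β • A q).2
        rw [hfx, hfy, haff₀ p.1 hp.1 q.1 hq.1 α hα hα1,
          haff₀ p.2 hp.2 q.2 hq.2 α hα hα1]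
        simp only [Prod.snd_add, Prod.smul_snd, smul_eq_mul, hA, Amap_snd]
        rw [hβ1]; ring
  have hVsym : ∀ v ∈ V, -v ∈ V := by
    rintro v ⟨p, hp, rfl⟩
    refine ⟨(p.2, p.1), ⟨hp.2, hp.1⟩, ?_⟩
    refine Prod.ext ?_ ?_
    · funext i
      show u i p.2 - u i p.1 = (-(A p)).1 i
      simp only [Prod.fst_neg, Pi.neg_apply, hA, Amap_fst]
      ring
    · show u₀ p.1 - u₀ p.2 = (-(A p)).2
      simp only [Prod.snd_neg, hA, Amap_snd]
      ring
  -- the feasible set and the primal optimum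
  have hGclosed : IsClosed {v : (Fin N → ℝ) × ℝ | ∀ i, 0 ≤ v.1 i} := by
    have : {v : (Fin N → ℝ) × ℝ | ∀ i, 0 ≤ v.1 i}
        = ⋂ i, {v : (Fin N → ℝ) × ℝ | 0 ≤ v.1 i} := by ext v; simp
    rw [this]
    exact isClosed_iInter fun i =>
      isClosed_le continuous_const ((continuous_apply i).comp continuous_fst)
  set F : Set ((Fin N → ℝ) × ℝ) := V ∩ {v | ∀ i, 0 ≤ v.1 i} with hF
  have hFcomp : IsCompact F := hVcomp.inter_right hGclosed
  obtain ⟨x₀, hx₀⟩ := hXne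
  have hFne : F.Nonempty := by
    refine ⟨A (x₀, x₀), ⟨Set.mem_image_of_mem A ⟨hx₀, hx₀⟩, ?_⟩⟩
    intro i
    show 0 ≤ u i x₀ - u i x₀
    simp
  obtain ⟨vstar, hvstarF, hmax⟩ := hFcomp.exists_isMaxOn hFne continuous_snd.continuousOn
  set c : ℝ := vstar.2 with hc
  have hub : ∀ v ∈ V, (∀ i ∈ (∅ : Finset (Fin N)), v.1 i = 0) →
      (∀ i ∈ (Finset.univ : Finset (Fin N)), 0 ≤ v.1 i) → v.2 ≤ c := by
    intro v hv _ hI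
    exact hmax ⟨hv, fun i => hI i (Finset.mem_univ i)⟩
  obtain ⟨a', ha'I, _ha'z, hkey⟩ :=
    keyduality (N := N) N ∅ Finset.univ (by simp)
      (by simp [Finset.card_univ]) V hVne hVcomp hVconv hVsym c hub
  have ha' : ∀ i, 0 ≤ a' i := fun i => ha'I i (Finset.mem_univ i)
  obtain ⟨hvstarV, hfeas⟩ := hvstarF
  obtain ⟨pstar, hpstar, hAps⟩ := hvstarV
  -- key facts
  have F1 : ∀ a : Fin N → ℝ, (∀ i, 0 ≤ a i) → c ≤ eta u₀ u pstar.1 pstar.2 a := by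
    intro a ha
    rw [eta_Amap]
    have : (0:ℝ) ≤ ∑ i, a i * (Amap u₀ u pstar).1 i := by
      apply Finset.sum_nonneg
      intro i _
      apply mul_nonneg (ha i)
      have := hfeas i
      rw [← hAps] at this
      exact this
    have h2 : (Amap u₀ u pstar).2 = c := by rw [← hA, hAps]
    linarith
  have F2 : ∀ p ∈ X ×ˢ X, eta u₀ u p.1 p.2 a' ≤ c := by
    intro p hp
    rw [eta_Amap]
    have := hkey (A p) (Set.mem_image_of_mem A hp)
    rw [hA] at this
    linarith
  have F3 : eta u₀ u pstar.1 pstar.2 a' = c :=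
    le_antisymm (F2 pstar hpstar) (F1 a' ha')
  have F4 : eta u₀ u pstar.1 pstar.2 (0 : Fin N → ℝ) = c := by
    rw [eta_Amap]
    have h2 : (Amap u₀ u pstar).2 = c := by rw [← hA, hAps]
    simp [h2]
  -- suprema
  have hims : ∀ a : Fin N → ℝ, (fun p : E × E => eta u₀ u p.1 p.2 a) '' (X ×ˢ X)
      = (fun v : (Fin N → ℝ) × ℝ => v.2 + ∑ i, a i * v.1 i) '' V := by
    intro a
    rw [hV, Set.image_image]
    rfl
  have hbdd : ∀ a : Fin N → ℝ,
      BddAbove ((fun p : E × E => eta u₀ u p.1 p.2 a) '' (X ×ˢ X)) := by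
    intro a
    rw [hims]
    refine IsCompact.bddAbove (hVcomp.image ?_)
    exact continuous_snd.add (continuous_finset_sum _ fun i _ =>
      continuous_const.mul ((continuous_apply i).comp continuous_fst))
  have hne : ∀ a : Fin N → ℝ,
      ((fun p : E × E => eta u₀ u p.1 p.2 a) '' (X ×ˢ X)).Nonempty :=
    fun a => hXXne.image _
  have hSsup : sSup ((fun p : E × E => eta u₀ u p.1 p.2 a') '' (X ×ˢ X)) = c := by
    apply le_antisymm
    · apply csSup_le (hne a')
      rintro z ⟨p, hp, rfl⟩
      exact F2 p hp
    · rw [← F3]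
      exact le_csSup (hbdd a') ⟨pstar, hpstar, rfl⟩
  -- the infimum at (x', y')
  have hInf : (⨅ a : {a : Fin N → ℝ // ∀ i, 0 ≤ a i},
      ((eta u₀ u pstar.1 pstar.2 a.1 : ℝ) : EReal)) = ((c : ℝ) : EReal) := by
    apply le_antisymm
    · have := iInf_le (fun a : {a : Fin N → ℝ // ∀ i, 0 ≤ a i} =>
        ((eta u₀ u pstar.1 pstar.2 a.1 : ℝ) : EReal)) ⟨0, fun i => le_rfl⟩
      rwa [F4] at this
    · apply le_iInf
      intro a
      exact EReal.coe_le_coe_iff.mpr (F1 a.1 a.2)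
  refine ⟨pstar.1, hpstar.1, pstar.2, hpstar.2, a', ha', ?_, ?_, ?_, ?_⟩
  · -- bullet 1
    intro x hx y hy
    rw [hInf]
    have hexists : ∃ a : {a : Fin N → ℝ // ∀ i, 0 ≤ a i}, eta u₀ u x y a.1 ≤ c := by
      by_cases hf : ∀ i, 0 ≤ u i x - u i y
      · refine ⟨⟨0, fun i => le_rfl⟩, ?_⟩
        have hmem : A (x, y) ∈ F :=
          ⟨Set.mem_image_of_mem A ⟨hx, hy⟩, fun i => hf i⟩
        have hle := hmax hmem
        have heq : eta u₀ u x y (0 : Fin N → ℝ)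
            = (Amap u₀ u (x,y)).2 + ∑ i, (0:Fin N → ℝ) i * (Amap u₀ u (x,y)).1 i :=
          eta_Amap u₀ u (x,y) 0
        rw [heq]
        simp only [Pi.zero_apply, zero_mul, Finset.sum_const_zero, add_zero]
        exact hle
      · push_neg at hf
        obtain ⟨i, hi⟩ := hf
        set w : ℝ := u i x - u i y with hw
        set t : ℝ := u₀ y - u₀ x with ht
        set s : ℝ := max 0 (t - c) / (-w) with hs
        have hwneg : w < 0 := by linarith
        have hsnn : 0 ≤ s := div_nonneg (le_max_left _ _) (by linarith)
        refine ⟨⟨fun j => if j = i then s else 0, ?_⟩, ?_⟩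
        · intro j
          dsimp only
          split_ifs
          · exact hsnn
          · exact le_rfl
        · have hsum : ∑ j, (if j = i then s else 0) * (u j x - u j y) = s * w := by
            rw [Finset.sum_eq_single i]
            · rw [if_pos rfl, hw]
            · intro j _ hj
              rw [if_neg hj, zero_mul]
            · intro h; exact absurd (Finset.mem_univ i) h
          have hsw : s * w = -(max 0 (t - c)) := by
            have hne : -w ≠ 0 := by linarith
            calc s * w = -(max 0 (t - c) / (-w) * (-w)) := by rw [hs]; ring
            _ = -(max 0 (t - c)) := by rw [div_mul_cancel₀ _ hne]
          show u₀ y - u₀ x + ∑ j, (if j = i then s else 0) * (u j x - u j y) ≤ c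
          rw [hsum, hsw]
          have := le_max_right 0 (t - c)
          have h2 : u₀ y - u₀ x = t := ht.symm
          rw [h2]
          linarith
    obtain ⟨a₀, ha₀⟩ := hexists
    refine le_trans (iInf_le _ a₀) ?_
    exact EReal.coe_le_coe_iff.mpr ha₀
  · -- bullet 2
    intro a ha
    rw [hSsup]
    refine le_trans (F1 a ha) ?_
    exact le_csSup (hbdd a) ⟨pstar, hpstar, rfl⟩
  · -- bullet 3
    exact ⟨pstar.1, hpstar.1, pstar.2, hpstar.2, F3.trans hSsup.symm⟩
  · -- bullet 4
    rw [hInf, hSsup]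
end

section
/- Let (X, u₀, {u₁,…,u_N}) be a setting with vN-M utilities in which X is additionally a compact subset of a real topological vector space and u₀, u₁, …, u_N are continuous. Let V = {(x,y) ∈ X × X : u₀(y) ≥ u₀(x) and u_i(x) ≥ u_i(y) for all i = 1,…,N}. Then there exists a utilitarian aggregator w ∈ W₊ such that ‖u₀ − w‖∞ ≤ (1/2) · sup{u₀(y) − u₀(x) : (x,y) ∈ V}. -/
section Aux

lemma combo_lt {a b u v u' v' : ℝ} (ha : 0 ≤ a) (hb : 0 ≤ b) (hab : a + b = 1)
    (h : u < v) (h' : u' < v') : a * u + b * u' < a * v + b * v' := by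
  rcases eq_or_lt_of_le ha with rfl | ha'
  · have hb1 : b = 1 := by linarith
    subst hb1; simpa using h'
  · have h1 : a * u < a * v := by exact (mul_lt_mul_iff_right₀ ha').2 h
    have h2 : b * u' ≤ b * v' := mul_le_mul_of_nonneg_left h'.le hb
    linarith

lemma le_of_forall_le_add_inv {a b : ℝ} (h : ∀ n : ℕ, a ≤ b + 1 / (n + 1)) : a ≤ b := by
  refine le_of_forall_pos_le_add fun ε hε => ?_
  obtain ⟨n, hn⟩ := exists_nat_one_div_lt hε
  exact (h n).trans (by linarith)

end Aux


lemma isClosed_coneFinset {ι V : Type*} [DecidableEq ι] [NormedAddCommGroup V]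
    [NormedSpace ℝ V] [FiniteDimensional ℝ V] (f : ι → V) (s : Finset ι) :
    IsClosed {x : V | ∃ μ : ι → ℝ, (∀ i, 0 ≤ μ i) ∧ ∑ i ∈ s, μ i • f i = x} := by
  classical
  induction s using Finset.strongInduction with
  | _ s ih =>
    by_cases hLI : LinearIndependent ℝ (fun i : ↥s => f i)
    · -- independent case: closed embedding image of closed positive orthant
      let g : (↥s → ℝ) →ₗ[ℝ] V :=
        { toFun := fun ν => ∑ i : ↥s, ν i • f i
          map_add' := by
            intro ν ν'; simp [add_smul, Finset.sum_add_distrib]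
          map_smul' := by
            intro c ν; simp [smul_smul, Finset.smul_sum] }
      have hginj : LinearMap.ker g = ⊥ := by
        rw [LinearMap.ker_eq_bot']
        intro ν hν
        have := (Fintype.linearIndependent_iff.1 hLI) ν hν
        funext i; exact this i
      have hemb := LinearMap.isClosedEmbedding_of_injective (f := g) hginj
      have hset : {x : V | ∃ μ : ι → ℝ, (∀ i, 0 ≤ μ i) ∧ ∑ i ∈ s, μ i • f i = x}
          = g '' {ν : ↥s → ℝ | ∀ i, 0 ≤ ν i} := by
        ext x
        constructor
        · rintro ⟨μ, hμ, rfl⟩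
          refine ⟨fun i => μ i, fun i => hμ i, ?_⟩
          show ∑ i : ↥s, μ i • f i = _
          rw [← Finset.sum_attach s (fun i => μ i • f i)]
          rfl
        · rintro ⟨ν, hν, rfl⟩
          refine ⟨fun i => if h : i ∈ s then ν ⟨i, h⟩ else 0, ?_, ?_⟩
          · intro i; by_cases h : i ∈ s <;> simp [h, hν _]
          · show _ = ∑ i : ↥s, ν i • f i
            rw [← Finset.sum_attach s (fun i => (if h : i ∈ s then ν ⟨i, h⟩ else 0) • f i)]
            refine Finset.sum_congr rfl ?_
            intro i _
            simp [i.2]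
      rw [hset]
      exact hemb.isClosedMap _ (by
        have : {ν : ↥s → ℝ | ∀ i, 0 ≤ ν i} = ⋂ i, {ν : ↥s → ℝ | 0 ≤ ν i} := by
          ext ν; simp [Set.mem_iInter]
        rw [this]
        exact isClosed_iInter fun i => isClosed_le continuous_const (continuous_apply i))
    · -- dependent case
      obtain ⟨lam, hlamsum, i₀, hi₀⟩ := Fintype.not_linearIndependent_iff.1 hLI
      -- wlog there exists i with 0 < lam i
      obtain ⟨lam, hlamsum, i₁, hi₁⟩ :
          ∃ lam : ↥s → ℝ, ∑ i : ↥s, lam i • f ↑i = 0 ∧ ∃ i, 0 < lam i := by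
        rcases lt_trichotomy (lam i₀) 0 with h | h | h
        · refine ⟨-lam, by simpa using congrArg Neg.neg hlamsum, i₀, by simpa using h⟩
        · exact absurd h hi₀
        · exact ⟨lam, hlamsum, i₀, h⟩
      have hset : {x : V | ∃ μ : ι → ℝ, (∀ i, 0 ≤ μ i) ∧ ∑ i ∈ s, μ i • f i = x}
          = ⋃ (i : ↥s) (_ : 0 < lam i),
              {x : V | ∃ μ : ι → ℝ, (∀ j, 0 ≤ μ j) ∧ ∑ j ∈ s.erase ↑i, μ j • f j = x} := by
        ext x
        simp only [Set.mem_iUnion, Set.mem_setOf_eq]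
        constructor
        · rintro ⟨μ, hμ, rfl⟩
          -- find the minimizer of μ i / lam i over positive lam i
          have hTne : (Finset.univ.filter fun i : ↥s => 0 < lam i).Nonempty :=
            ⟨i₁, by simp [hi₁]⟩
          obtain ⟨j₀, hj₀mem, hj₀min⟩ :=
            Finset.exists_min_image _ (fun i : ↥s => μ ↑i / lam i) hTne
          have hj₀pos : 0 < lam j₀ := (Finset.mem_filter.1 hj₀mem).2
          set cc := μ ↑j₀ / lam j₀ with hcc
          have hccnn : 0 ≤ cc := div_nonneg (hμ _) hj₀pos.le
          -- extended lambda
          set lam' : ι → ℝ := fun j => if h : j ∈ s then lam ⟨j, h⟩ else 0 with hlam'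
          set μ' : ι → ℝ := fun j => μ j - cc * lam' j with hμ'
          have hμ'nn : ∀ j, 0 ≤ μ' j := by
            intro j
            by_cases h : j ∈ s
            · by_cases hpos : 0 < lam ⟨j, h⟩
              · have := hj₀min ⟨j, h⟩ (by simp [hpos])
                have : cc * lam ⟨j, h⟩ ≤ μ j := by
                  rw [hcc]
                  calc μ ↑j₀ / lam j₀ * lam ⟨j, h⟩ ≤ μ j / lam ⟨j, h⟩ * lam ⟨j, h⟩ := by
                        apply mul_le_mul_of_nonneg_right this hpos.le
                    _ = μ j := div_mul_cancel₀ _ hpos.ne'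
                simp only [hμ', hlam', dif_pos h]
                linarith
              · have : lam ⟨j, h⟩ ≤ 0 := le_of_not_gt hpos
                have : 0 ≤ -(cc * lam ⟨j, h⟩) := by
                  rw [neg_nonneg]
                  exact mul_nonpos_of_nonneg_of_nonpos hccnn this
                simp only [hμ', hlam', dif_pos h]
                have := hμ j
                linarith
            · simp only [hμ', hlam', dif_neg h]
              simpa using hμ j
          have hsum' : ∑ j ∈ s, μ' j • f j = ∑ j ∈ s, μ j • f j := by
            have h1 : ∑ j ∈ s, lam' j • f j = 0 := by
              rw [← Finset.sum_attach s (fun j => lam' j • f j)]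
              rw [← hlamsum]
              refine Finset.sum_congr rfl ?_
              intro i _
              simp [hlam', i.2]
            calc ∑ j ∈ s, μ' j • f j
                = ∑ j ∈ s, (μ j • f j - cc • (lam' j • f j)) := by
                  refine Finset.sum_congr rfl ?_
                  intro j _
                  simp [hμ', sub_smul, smul_smul]
              _ = ∑ j ∈ s, μ j • f j - cc • ∑ j ∈ s, lam' j • f j := by
                  rw [Finset.sum_sub_distrib, Finset.smul_sum]
              _ = ∑ j ∈ s, μ j • f j := by rw [h1, smul_zero, sub_zero]
          have hμ'j₀ : μ' ↑j₀ = 0 := by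
            simp only [hμ', hlam', dif_pos j₀.2, hcc]
            have : lam j₀ ≠ 0 := hj₀pos.ne'
            have hco : (⟨↑j₀, j₀.2⟩ : ↥s) = j₀ := by simp
            rw [hco]
            field_simp
            ring
          refine ⟨j₀, hj₀pos, μ', hμ'nn, ?_⟩
          calc ∑ j ∈ s.erase ↑j₀, μ' j • f j
              = μ' ↑j₀ • f ↑j₀ + ∑ j ∈ s.erase ↑j₀, μ' j • f j := by
                rw [hμ'j₀, zero_smul, zero_add]
            _ = ∑ j ∈ s, μ' j • f j := Finset.add_sum_erase s (fun j => μ' j • f j) j₀.2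
            _ = ∑ j ∈ s, μ j • f j := hsum'
        · rintro ⟨i, hipos, μ, hμ, rfl⟩
          refine ⟨fun j => if j = ↑i then 0 else μ j, ?_, ?_⟩
          · intro j; by_cases h : j = ↑i <;> simp [h, hμ _]
          · calc ∑ j ∈ s, (if j = ↑i then 0 else μ j) • f j
                = (if (i:ι) = ↑i then 0 else μ ↑i) • f ↑i
                    + ∑ j ∈ s.erase ↑i, (if j = ↑i then 0 else μ j) • f j :=
                  (Finset.add_sum_erase s _ i.2).symm
              _ = ∑ j ∈ s.erase ↑i, μ j • f j := by
                  rw [if_pos rfl, zero_smul, zero_add]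
                  exact Finset.sum_congr rfl fun j hj => by
                    rw [if_neg (Finset.ne_of_mem_erase hj)]
      rw [hset]
      refine isClosed_iUnion_of_finite fun i => ?_
      refine isClosed_iUnion_of_finite fun hi => ?_
      exact ih (s.erase ↑i) (Finset.erase_ssubset i.2)


set_option maxHeartbeats 1000000 in
/-- In a setting with vN-M utilities where `X` is a compact subset of
a real topological vector space and `u₀, u₁, …, u_N` are continuous, with
`V = {(x,y) ∈ X × X : u₀(y) ≥ u₀(x) ∧ ∀ i, uᵢ(x) ≥ uᵢ(y)}`, there exists a utilitarian
aggregator `w = Σᵢ aᵢ uᵢ + b` with all `aᵢ ≥ 0` such that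
`‖u₀ − w‖∞ ≤ (1/2) · sup{u₀(y) − u₀(x) : (x,y) ∈ V}`. -/
theorem stmt4 {E : Type*} [AddCommGroup E] [Module ℝ E] [TopologicalSpace E]
    [IsTopologicalAddGroup E] [ContinuousSMul ℝ E]
    {N : ℕ} (hN : 1 ≤ N) (X : Set E) (hXne : X.Nonempty) (hXconv : Convex ℝ X)
    (hXcomp : IsCompact X)
    (u₀ : E → ℝ) (u : Fin N → E → ℝ)
    (hu₀c : ContinuousOn u₀ X) (huc : ∀ i, ContinuousOn (u i) X)
    (haff₀ : ∀ x ∈ X, ∀ y ∈ X, ∀ l : ℝ, 0 ≤ l → l ≤ 1 →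
      u₀ (l • x + (1 - l) • y) = l * u₀ x + (1 - l) * u₀ y)
    (haff : ∀ i : Fin N, ∀ x ∈ X, ∀ y ∈ X, ∀ l : ℝ, 0 ≤ l → l ≤ 1 →
      u i (l • x + (1 - l) • y) = l * u i x + (1 - l) * u i y) :
    ∃ (a : Fin N → ℝ) (b : ℝ), (∀ i, 0 ≤ a i) ∧
      ∀ x ∈ X, |u₀ x - ((∑ i, a i * u i x) + b)| ≤
        (1 / 2) * sSup ((fun p : E × E => u₀ p.2 - u₀ p.1) ''
          {p ∈ X ×ˢ X | u₀ p.1 ≤ u₀ p.2 ∧ ∀ i, u i p.2 ≤ u i p.1}) := by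
  classical
  obtain ⟨x₀, hx₀⟩ := hXne
  set Sd : Set ℝ := ((fun p : E × E => u₀ p.2 - u₀ p.1) ''
      {p ∈ X ×ˢ X | u₀ p.1 ≤ u₀ p.2 ∧ ∀ i, u i p.2 ≤ u i p.1}) with hSd
  set d : ℝ := sSup Sd with hd
  obtain ⟨C, hC⟩ := hXcomp.exists_bound_of_continuousOn hu₀c
  have hC0 : 0 ≤ C := le_trans (norm_nonneg _) (hC x₀ hx₀)
  set Φ : E → (Fin N → ℝ) × ℝ := fun x => (fun i => u i x, u₀ x) with hΦ
  set K : Set ((Fin N → ℝ) × ℝ) := Φ '' X with hK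
  have hp₀ : Φ x₀ ∈ K := ⟨x₀, hx₀, rfl⟩
  have hKconv : Convex ℝ K := by
    rintro p ⟨x, hx, rfl⟩ q ⟨y, hy, rfl⟩ a b ha hb hab
    have hb' : b = 1 - a := by linarith
    subst hb'
    have ha1 : a ≤ 1 := by linarith
    refine ⟨a • x + (1 - a) • y, hXconv hx hy ha hb (by ring), ?_⟩
    rw [Prod.ext_iff]
    constructor
    · funext i
      simp only [hΦ, Prod.fst_add, Prod.smul_fst, Pi.add_apply, Pi.smul_apply, smul_eq_mul]
      exact haff i x hx y hy a ha ha1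
    · simp only [hΦ, Prod.snd_add, Prod.smul_snd, smul_eq_mul]
      exact haff₀ x hx y hy a ha ha1
  have hKcomp : IsCompact K := by
    refine hXcomp.image_of_continuousOn ?_
    exact ContinuousOn.prodMk (continuousOn_pi.2 fun i => huc i) hu₀c
  have h0Sd : (0 : ℝ) ∈ Sd :=
    ⟨(x₀, x₀), ⟨⟨hx₀, hx₀⟩, le_rfl, fun i => le_rfl⟩, sub_self _⟩
  have hSdbdd : BddAbove Sd := by
    refine ⟨2 * C, ?_⟩
    rintro t ⟨p, ⟨⟨h1, h2⟩, _, _⟩, rfl⟩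
    have e1 := abs_le.1 ((Real.norm_eq_abs _) ▸ hC p.1 h1)
    have e2 := abs_le.1 ((Real.norm_eq_abs _) ▸ hC p.2 h2)
    simp only
    linarith [e1.1, e1.2, e2.1, e2.2]
  have hd0 : 0 ≤ d := le_csSup hSdbdd h0Sd
  -- upper semicontinuity of the dominance gap
  have husc : ∀ ε > 0, ∃ δ > 0, ∀ p ∈ K, ∀ q ∈ K,
      (∀ i, q.1 i ≤ p.1 i + δ) → q.2 - p.2 ≤ d + ε := by
    intro ε hε
    by_contra hcon
    push_neg at hcon
    set F : ℕ → Set (((Fin N → ℝ) × ℝ) × ((Fin N → ℝ) × ℝ)) := fun n =>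
      {pq | pq.1 ∈ K ∧ pq.2 ∈ K ∧ (∀ i, pq.2.1 i ≤ pq.1.1 i + 1 / (n + 1)) ∧
        d + ε ≤ pq.2.2 - pq.1.2} with hF
    have hinv : ∀ n : ℕ, (1 : ℝ) / (n + 1 + 1) ≤ 1 / (n + 1) := by
      intro n
      apply one_div_le_one_div_of_le (by positivity)
      linarith
    have hFsub : ∀ n, F (n + 1) ⊆ F n := by
      rintro n pq ⟨h1, h2, h3, h4⟩
      refine ⟨h1, h2, fun i => le_trans (h3 i) ?_, h4⟩
      have := hinv n
      push_cast at this ⊢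
      linarith
    have hFne : ∀ n, (F n).Nonempty := by
      intro n
      obtain ⟨p, hp, q, hq, h3, h4⟩ := hcon (1 / (n + 1)) (by positivity)
      exact ⟨(p, q), hp, hq, h3, h4.le⟩
    have hFcl : ∀ n, IsClosed (F n) := by
      intro n
      have heq : F n = (Prod.fst ⁻¹' K) ∩ (Prod.snd ⁻¹' K) ∩
          (⋂ i, {pq : ((Fin N → ℝ) × ℝ) × ((Fin N → ℝ) × ℝ) |
            pq.2.1 i ≤ pq.1.1 i + 1 / (n + 1)}) ∩
          {pq : ((Fin N → ℝ) × ℝ) × ((Fin N → ℝ) × ℝ) | d + ε ≤ pq.2.2 - pq.1.2} := by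
        ext pq
        simp only [hF, Set.mem_setOf_eq, Set.mem_inter_iff, Set.mem_preimage, Set.mem_iInter]
        tauto
      rw [heq]
      refine IsClosed.inter (IsClosed.inter (IsClosed.inter ?_ ?_) ?_) ?_
      · exact hKcomp.isClosed.preimage continuous_fst
      · exact hKcomp.isClosed.preimage continuous_snd
      · refine isClosed_iInter fun i => isClosed_le ?_ ?_
        · exact (continuous_apply i).comp (continuous_fst.comp continuous_snd)
        · exact (((continuous_apply i).comp (continuous_fst.comp continuous_fst)).add
            continuous_const)
      · exact isClosed_le continuous_const
          ((continuous_snd.comp continuous_snd).sub (continuous_snd.comp continuous_fst))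
    have hF0 : IsCompact (F 0) := by
      refine (hKcomp.prod hKcomp).of_isClosed_subset (hFcl 0) ?_
      rintro pq ⟨h1, h2, _, _⟩
      exact ⟨h1, h2⟩
    obtain ⟨⟨p, q⟩, hpq⟩ :=
      IsCompact.nonempty_iInter_of_sequence_nonempty_isCompact_isClosed F hFsub hFne hF0 hFcl
    have hmem : ∀ n, (p, q) ∈ F n := Set.mem_iInter.1 hpq
    obtain ⟨hpK, hqK, _, h4⟩ := hmem 0
    have hdom : ∀ i, q.1 i ≤ p.1 i := by
      intro i
      refine le_of_forall_le_add_inv fun n => ?_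
      exact (hmem n).2.2.1 i
    obtain ⟨x, hx, rfl⟩ := hpK
    obtain ⟨y, hy, rfl⟩ := hqK
    have hmemSd : u₀ y - u₀ x ∈ Sd := by
      refine ⟨(x, y), ⟨⟨hx, hy⟩, ?_, fun i => hdom i⟩, rfl⟩
      have : d + ε ≤ u₀ y - u₀ x := h4
      linarith
    have := le_csSup hSdbdd hmemSd
    have h4' : d + ε ≤ u₀ y - u₀ x := h4
    linarith
  -- separation step
  have hsep : ∀ ε > 0, ∃ v : (Fin N → ℝ) × ℝ, (∀ i, 0 ≤ v.1 i) ∧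
      ∀ x ∈ X, |u₀ x - ((∑ i, v.1 i * u i x) + v.2)| ≤ d / 2 + ε := by
    intro ε hε
    obtain ⟨δ, hδpos, hδ⟩ := husc (2 * ε) (by linarith)
    set δ2 : ℝ := δ / 2 with hδ2
    have hδ2pos : 0 < δ2 := by positivity
    set D : ℝ := d + 2 * ε with hD
    set ebasis : Fin N → (Fin N → ℝ) := fun i => fun j => if i = j then 1 else 0 with hebasis
    have hebnn : ∀ i j, 0 ≤ ebasis i j := by
      intro i j
      rw [hebasis]
      dsimp only
      split <;> norm_num
    set A₀ : Set ((Fin N → ℝ) × ℝ) :=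
      {z | ∃ p ∈ K, (∀ i, p.1 i - δ2 < z.1 i) ∧ z.2 < p.2 - D / 2} with hA₀
    set B : Set ((Fin N → ℝ) × ℝ) :=
      {z | ∃ q ∈ K, (∀ i, z.1 i ≤ q.1 i + δ2) ∧ q.2 + D / 2 ≤ z.2} with hB
    have hA₀open : IsOpen A₀ := by
      have heq : A₀ = ⋃ p ∈ K, ((⋂ i, {z : (Fin N → ℝ) × ℝ | p.1 i - δ2 < z.1 i}) ∩
          {z : (Fin N → ℝ) × ℝ | z.2 < p.2 - D / 2}) := by
        ext z
        simp only [hA₀, Set.mem_setOf_eq, Set.mem_iUnion, Set.mem_inter_iff, Set.mem_iInter]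
        tauto
      rw [heq]
      refine isOpen_biUnion fun p _ => IsOpen.inter ?_ ?_
      · exact isOpen_iInter_of_finite fun i =>
          isOpen_lt continuous_const ((continuous_apply i).comp continuous_fst)
      · exact isOpen_lt continuous_snd continuous_const
    have hA₀conv : Convex ℝ A₀ := by
      rintro z ⟨p, hp, h1, h2⟩ z' ⟨p', hp', h1', h2'⟩ a b ha hb hab
      refine ⟨a • p + b • p', hKconv hp hp' ha hb hab, ?_, ?_⟩
      · intro i
        have hcl := combo_lt ha hb hab (h1 i) (h1' i)
        have heq1 : a * (p.1 i - δ2) + b * (p'.1 i - δ2) = a * p.1 i + b * p'.1 i - δ2 := by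
          linear_combination (-δ2) * hab
        simp only [Prod.fst_add, Prod.smul_fst, Pi.add_apply, Pi.smul_apply, smul_eq_mul]
        linarith
      · have hcl := combo_lt ha hb hab h2 h2'
        have heq1 : a * (p.2 - D / 2) + b * (p'.2 - D / 2) = a * p.2 + b * p'.2 - D / 2 := by
          linear_combination (-(D / 2)) * hab
        simp only [Prod.snd_add, Prod.smul_snd, smul_eq_mul]
        linarith
    have hBconv : Convex ℝ B := by
      rintro z ⟨q, hq, h1, h2⟩ z' ⟨q', hq', h1', h2'⟩ a b ha hb hab
      refine ⟨a • q + b • q', hKconv hq hq' ha hb hab, ?_, ?_⟩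
      · intro i
        have e1 := mul_le_mul_of_nonneg_left (h1 i) ha
        have e2 := mul_le_mul_of_nonneg_left (h1' i) hb
        have heq1 : a * (q.1 i + δ2) + b * (q'.1 i + δ2) = a * q.1 i + b * q'.1 i + δ2 := by
          linear_combination δ2 * hab
        simp only [Prod.fst_add, Prod.smul_fst, Pi.add_apply, Pi.smul_apply, smul_eq_mul]
        linarith
      · have e1 := mul_le_mul_of_nonneg_left h2 ha
        have e2 := mul_le_mul_of_nonneg_left h2' hb
        have heq1 : a * (q.2 + D / 2) + b * (q'.2 + D / 2) = a * q.2 + b * q'.2 + D / 2 := by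
          linear_combination (D / 2) * hab
        simp only [Prod.snd_add, Prod.smul_snd, smul_eq_mul]
        linarith
    have hdisj : Disjoint A₀ B := by
      rw [Set.disjoint_left]
      rintro z ⟨p, hp, h1, h2⟩ ⟨q, hq, h1', h2'⟩
      have hcond : ∀ i, p.1 i ≤ q.1 i + δ := by
        intro i
        have := h1 i
        have := h1' i
        have hδeq : δ = δ2 + δ2 := by rw [hδ2]; ring
        linarith
      have hb := hδ q hq p hp hcond
      have hDe : D = d + 2 * ε := hD
      linarith
    obtain ⟨f, c, hfA, hfB⟩ := geometric_hahn_banach_open hA₀conv hA₀open hBconv hdisj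
    set β : ℝ := f (0, 1) with hβ
    set g : (Fin N → ℝ) → ℝ := fun w => f (w, 0) with hg
    have hsplit : ∀ (w : Fin N → ℝ) (r : ℝ), f (w, r) = g w + r * β := by
      intro w r
      have heq : (w, r) = (w, (0 : ℝ)) + r • ((0 : Fin N → ℝ), (1 : ℝ)) := by
        refine Prod.ext_iff.2 ⟨by simp, by simp⟩
      rw [heq, map_add, map_smul]
      simp [hβ, hg, smul_eq_mul]
    have hA₀mem : ∀ p ∈ K, ∀ r : ℝ, r < p.2 - D / 2 → ((p.1, r) : (Fin N → ℝ) × ℝ) ∈ A₀ := by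
      intro p hp r hr
      exact ⟨p, hp, fun i => by simp only; linarith, hr⟩
    have hBmem : ∀ p ∈ K, ∀ r : ℝ, p.2 + D / 2 ≤ r → ((p.1, r) : (Fin N → ℝ) × ℝ) ∈ B := by
      intro p hp r hr
      exact ⟨p, hp, fun i => by simp only; linarith, hr⟩
    have hβnn : 0 ≤ β := by
      by_contra h
      push_neg at h
      set r : ℝ := min ((Φ x₀).2 - D / 2 - 1) ((c - g (Φ x₀).1) / β) with hr
      have hr1 : r < (Φ x₀).2 - D / 2 :=
        lt_of_le_of_lt (min_le_left _ _) (by linarith)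
      have hlt := hfA _ (hA₀mem _ hp₀ r hr1)
      rw [hsplit] at hlt
      have hr2 : r ≤ (c - g (Φ x₀).1) / β := min_le_right _ _
      have hge : c - g (Φ x₀).1 ≤ r * β := by
        have := mul_le_mul_of_nonpos_right hr2 h.le
        rwa [div_mul_cancel₀ _ (ne_of_lt h)] at this
      linarith
    have hgnn : ∀ i, g (ebasis i) ≤ 0 := by
      intro i
      by_contra h
      push_neg at h
      have hbase := hfA _ (hA₀mem _ hp₀ ((Φ x₀).2 - D / 2 - 1) (by linarith))
      rw [hsplit] at hbase
      obtain ⟨M, hMpos, hMval⟩ : ∃ M : ℝ, 0 < M ∧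
          M * g (ebasis i)
            = c - g (Φ x₀).1 - ((Φ x₀).2 - D / 2 - 1) * β + g (ebasis i) := by
        refine ⟨(c - g (Φ x₀).1 - ((Φ x₀).2 - D / 2 - 1) * β) / g (ebasis i) + 1, ?_, ?_⟩
        · have h9 : 0 < (c - g (Φ x₀).1 - ((Φ x₀).2 - D / 2 - 1) * β) / g (ebasis i) :=
            div_pos (by linarith) h
          linarith
        · field_simp
      have hmem : (((Φ x₀).1 + M • ebasis i, (Φ x₀).2 - D / 2 - 1) :
          (Fin N → ℝ) × ℝ) ∈ A₀ := by
        refine ⟨Φ x₀, hp₀, fun j => ?_, by simp only; linarith⟩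
        have := mul_nonneg hMpos.le (hebnn i j)
        simp only [Pi.add_apply, Pi.smul_apply, smul_eq_mul]
        linarith
      have hlt := hfA _ hmem
      have hcalc : f ((Φ x₀).1 + M • ebasis i, (Φ x₀).2 - D / 2 - 1)
          = g (Φ x₀).1 + ((Φ x₀).2 - D / 2 - 1) * β + M * g (ebasis i) := by
        have heq : (((Φ x₀).1 + M • ebasis i, (Φ x₀).2 - D / 2 - 1) : (Fin N → ℝ) × ℝ)
            = ((Φ x₀).1, (Φ x₀).2 - D / 2 - 1) + M • (ebasis i, (0 : ℝ)) := by
          refine Prod.ext_iff.2 ⟨by simp, by simp⟩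
        rw [heq, map_add, map_smul, hsplit]
        simp only [smul_eq_mul, hg]
        try ring
      rw [hcalc] at hlt
      linarith
    have hβpos : 0 < β := by
      rcases eq_or_lt_of_le hβnn with heq0 | h
      · exfalso
        have h1 := hfA _ (hA₀mem _ hp₀ ((Φ x₀).2 - D / 2 - 1) (by linarith))
        have h2 := hfB _ (hBmem _ hp₀ ((Φ x₀).2 + D / 2) le_rfl)
        rw [hsplit] at h1 h2
        rw [← heq0] at h1 h2
        simp only [mul_zero, add_zero] at h1 h2
        linarith
      · exact h
    have bound1 : ∀ p ∈ K, g p.1 + (p.2 - D / 2) * β ≤ c := by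
      intro p hp
      refine le_of_forall_pos_le_add fun η hη => ?_
      have hη' : 0 < η / β := by positivity
      have hlt := hfA _ (hA₀mem _ hp (p.2 - D / 2 - η / β) (by linarith))
      rw [hsplit] at hlt
      have hcancel : (η / β) * β = η := div_mul_cancel₀ _ hβpos.ne'
      nlinarith [hlt]
    have bound2 : ∀ p ∈ K, c ≤ g p.1 + (p.2 + D / 2) * β := by
      intro p hp
      have := hfB _ (hBmem _ hp (p.2 + D / 2) le_rfl)
      rwa [hsplit] at this
    have hglin : ∀ w : Fin N → ℝ, g w = ∑ i, w i * g (ebasis i) := by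
      intro w
      have := LinearMap.pi_apply_eq_sum_univ
        ((f : (Fin N → ℝ) × ℝ →ₗ[ℝ] ℝ).comp (LinearMap.inl ℝ (Fin N → ℝ) ℝ)) w
      simpa [hg, hebasis, smul_eq_mul] using this
    refine ⟨(fun i => -g (ebasis i) / β, c / β),
      fun i => div_nonneg (neg_nonneg.2 (hgnn i)) hβpos.le, ?_⟩
    intro x hx
    have hpK : Φ x ∈ K := ⟨x, hx, rfl⟩
    have hb1 := bound1 _ hpK
    have hb2 := bound2 _ hpK
    have hfst : (Φ x).1 = fun i => u i x := rfl
    have hsnd : (Φ x).2 = u₀ x := rfl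
    rw [hfst, hsnd] at hb1 hb2
    have hgval : g (fun i => u i x) = ∑ i, u i x * g (ebasis i) := hglin _
    have hval : ((∑ i, -g (ebasis i) / β * u i x) + c / β)
        = (c - g (fun i => u i x)) / β := by
      rw [hgval]
      have hterm : ∀ i : Fin N, -g (ebasis i) / β * u i x
          = -(u i x * g (ebasis i)) / β := fun i => by ring
      rw [Finset.sum_congr rfl fun i _ => hterm i, ← Finset.sum_div, ← add_div]
      rw [Finset.sum_neg_distrib]
      ring
    simp only
    rw [hval]
    have hub : (c - g (fun i => u i x)) / β ≤ u₀ x + D / 2 := by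
      rw [div_le_iff₀ hβpos]
      linarith
    have hlb : u₀ x - D / 2 ≤ (c - g (fun i => u i x)) / β := by
      rw [le_div_iff₀ hβpos]
      linarith
    rw [abs_le]
    constructor
    · have : D = d + 2 * ε := hD
      linarith
    · have : D = d + 2 * ε := hD
      linarith
  -- limit machinery
  set Φ' : E → (Fin N → ℝ) × ℝ := fun x => (fun i => u i x, 1) with hΦ'
  obtain ⟨sset, hsub, hspan, hli⟩ := exists_linearIndependent ℝ (Φ' '' X)
  have hsfin : sset.Finite := hli.setFinite
  set s' : Finset ((Fin N → ℝ) × ℝ) := hsfin.toFinset with hs'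
  have hs'coe : (↑s' : Set ((Fin N → ℝ) × ℝ)) = sset := hsfin.coe_toFinset
  set bil : ((Fin N → ℝ) × ℝ) →ₗ[ℝ] ((Fin N → ℝ) × ℝ) →ₗ[ℝ] ℝ :=
    LinearMap.mk₂ ℝ (fun v w => (∑ i, v.1 i * w.1 i) + v.2 * w.2)
      (by
        intro m₁ m₂ n
        simp only [Prod.fst_add, Prod.snd_add, Pi.add_apply, add_mul, Finset.sum_add_distrib]
        ring)
      (by
        intro c₀ m n
        simp only [Prod.smul_fst, Prod.smul_snd, Pi.smul_apply, smul_eq_mul, mul_assoc,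
          smul_eq_mul]
        rw [mul_add, Finset.mul_sum])
      (by
        intro m n₁ n₂
        simp only [Prod.fst_add, Prod.snd_add, Pi.add_apply, mul_add, Finset.sum_add_distrib]
        ring)
      (by
        intro c₀ m n
        simp only [Prod.smul_fst, Prod.smul_snd, Pi.smul_apply, smul_eq_mul]
        rw [mul_add, Finset.mul_sum]
        congr 1
        · exact Finset.sum_congr rfl fun i _ => by ring
        · ring) with hbil
  have hbilapp : ∀ v w : (Fin N → ℝ) × ℝ, bil v w = (∑ i, v.1 i * w.1 i) + v.2 * w.2 := by
    intro v w
    rw [hbil]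
    rfl
  set L : ((Fin N → ℝ) × ℝ) →ₗ[ℝ] (↥s' → ℝ) :=
    LinearMap.pi (fun w : ↥s' => bil.flip ↑w) with hL
  have hLapp : ∀ (v : (Fin N → ℝ) × ℝ) (w : ↥s'), L v w = bil v ↑w := by
    intro v w
    rw [hL]
    rfl
  have hbilΦ : ∀ (v : (Fin N → ℝ) × ℝ) (x : E),
      bil v (Φ' x) = (∑ i, v.1 i * u i x) + v.2 := by
    intro v x
    rw [hbilapp]
    simp [hΦ']
  have hcex : ∀ x, x ∈ X → ∃ cf : ((Fin N → ℝ) × ℝ) → ℝ,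
      ∑ w ∈ s', cf w • w = Φ' x := by
    intro x hx
    have hmem : Φ' x ∈ Submodule.span ℝ (↑s' : Set ((Fin N → ℝ) × ℝ)) := by
      rw [hs'coe, hspan]
      exact Submodule.subset_span ⟨x, hx, rfl⟩
    exact (Submodule.mem_span_finset.1 hmem).imp fun _ h => h.2
  choose cf hcf using hcex
  have hkey : ∀ (v : (Fin N → ℝ) × ℝ) (x : E) (hx : x ∈ X),
      ∑ w ∈ s'.attach, cf x hx ↑w * L v w = bil v (Φ' x) := by
    intro v x hx
    calc ∑ w ∈ s'.attach, cf x hx ↑w * L v w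
        = ∑ w ∈ s'.attach, cf x hx ↑w * bil v ↑w := by
          refine Finset.sum_congr rfl fun w _ => ?_
          rw [hLapp]
      _ = ∑ w ∈ s', cf x hx w * bil v w :=
          Finset.sum_attach s' (fun w => cf x hx w * bil v w)
      _ = ∑ w ∈ s', bil v (cf x hx w • w) := by
          refine Finset.sum_congr rfl fun w _ => ?_
          rw [map_smul, smul_eq_mul]
      _ = bil v (∑ w ∈ s', cf x hx w • w) := (map_sum _ _ _).symm
      _ = bil v (Φ' x) := by rw [hcf]
  -- description of the image cone
  set gen : (Fin N ⊕ Bool) → (Fin N → ℝ) × ℝ :=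
    Sum.elim (fun i => (fun j => if i = j then (1 : ℝ) else 0, (0 : ℝ)))
      (fun b => ((0 : Fin N → ℝ), if b then (1 : ℝ) else -1)) with hgen
  have hgensum : ∀ μ : (Fin N ⊕ Bool) → ℝ, (∑ j, μ j • gen j)
      = (fun i => μ (Sum.inl i), μ (Sum.inr true) - μ (Sum.inr false)) := by
    intro μ
    rw [Fintype.sum_sum_type]
    refine Prod.ext_iff.2 ⟨?_, ?_⟩
    · rw [Prod.fst_add, Prod.fst_sum, Prod.fst_sum]
      funext i
      simp [hgen, Finset.sum_apply, Pi.smul_apply, smul_eq_mul, mul_ite, mul_one, mul_zero,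
        Finset.sum_ite_eq']
    · rw [Prod.snd_add, Prod.snd_sum, Prod.snd_sum]
      simp [hgen, Fintype.sum_bool]
      ring
  have hPdesc : ∀ v : (Fin N → ℝ) × ℝ, (∀ i, 0 ≤ v.1 i) ↔
      (∃ μ : (Fin N ⊕ Bool) → ℝ, (∀ j, 0 ≤ μ j) ∧ ∑ j, μ j • gen j = v) := by
    intro v
    constructor
    · intro hv
      refine ⟨Sum.elim (fun i => v.1 i)
        (fun b => if b then max v.2 0 else max (-v.2) 0), ?_, ?_⟩
      · rintro (i | b)
        · exact hv i
        · cases b <;> simp [le_max_right]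
      · rw [hgensum]
        refine Prod.ext_iff.2 ⟨by funext i; simp, ?_⟩
        simp only [Sum.elim_inr, if_true, if_false]
        exact max_zero_sub_max_neg_zero_eq_self v.2
    · rintro ⟨μ, hμ, hsum⟩
      intro i
      rw [← hsum, hgensum]
      exact hμ _
  have hLPdesc : L '' {v : (Fin N → ℝ) × ℝ | ∀ i, 0 ≤ v.1 i} =
      {y : ↥s' → ℝ | ∃ μ : (Fin N ⊕ Bool) → ℝ, (∀ j, 0 ≤ μ j) ∧
        ∑ j ∈ Finset.univ, μ j • L (gen j) = y} := by
    ext y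
    constructor
    · rintro ⟨v, hv, rfl⟩
      obtain ⟨μ, hμ, hsum⟩ := (hPdesc v).1 hv
      refine ⟨μ, hμ, ?_⟩
      rw [← hsum, map_sum]
      exact Finset.sum_congr rfl fun j _ => by rw [map_smul]
    · rintro ⟨μ, hμ, rfl⟩
      refine ⟨∑ j, μ j • gen j, (hPdesc _).2 ⟨μ, hμ, rfl⟩, ?_⟩
      rw [map_sum]
      exact Finset.sum_congr rfl fun j _ => by rw [map_smul]
  have hLPclosed : IsClosed (L '' {v : (Fin N → ℝ) × ℝ | ∀ i, 0 ≤ v.1 i}) := by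
    rw [hLPdesc]
    exact isClosed_coneFinset (fun j => L (gen j)) Finset.univ
  -- the constraint sets
  set Γ : ℕ → Set (↥s' → ℝ) := fun n =>
    {y | ∀ x (hx : x ∈ X), |u₀ x - ∑ w ∈ s'.attach, cf x hx ↑w * y w| ≤ d / 2 + 1 / (n + 1)}
    with hΓ
  have hΓcl : ∀ n, IsClosed (Γ n) := by
    intro n
    have heq : Γ n = ⋂ (x) (hx : x ∈ X),
        {y : ↥s' → ℝ | |u₀ x - ∑ w ∈ s'.attach, cf x hx ↑w * y w| ≤ d / 2 + 1 / (n + 1)} := by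
      ext y
      simp only [hΓ, Set.mem_setOf_eq, Set.mem_iInter]
    rw [heq]
    refine isClosed_iInter fun x => isClosed_iInter fun hx => ?_
    have hcont : Continuous fun y : ↥s' → ℝ =>
        |u₀ x - ∑ w ∈ s'.attach, cf x hx ↑w * y w| := by
      refine Continuous.abs (Continuous.sub continuous_const ?_)
      exact continuous_finset_sum _ fun w _ => continuous_const.mul (continuous_apply _)
    exact isClosed_le hcont continuous_const
  set T : ℕ → Set (↥s' → ℝ) := fun n =>
    (L '' {v : (Fin N → ℝ) × ℝ | ∀ i, 0 ≤ v.1 i}) ∩ Γ n with hT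
  have hTsub : ∀ n, T (n + 1) ⊆ T n := by
    intro n
    refine Set.inter_subset_inter_right _ ?_
    intro y hy x hx
    refine (hy x hx).trans ?_
    have : (1 : ℝ) / (n + 1 + 1) ≤ 1 / (n + 1) := by
      apply one_div_le_one_div_of_le (by positivity)
      linarith
    push_cast at this ⊢
    linarith
  have hTne : ∀ n, (T n).Nonempty := by
    intro n
    obtain ⟨v, hv1, hv2⟩ := hsep (1 / (n + 1)) (by positivity)
    refine ⟨L v, ⟨v, hv1, rfl⟩, ?_⟩
    intro x hx
    rw [hkey v x hx, hbilΦ]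
    exact hv2 x hx
  have hTcl : ∀ n, IsClosed (T n) := fun n => hLPclosed.inter (hΓcl n)
  have hT0 : IsCompact (T 0) := by
    set R : ℝ := C + (d / 2 + 1) with hR
    have hR0 : 0 ≤ R := by
      rw [hR]
      have : (0:ℝ) ≤ d / 2 + 1 := by linarith
      linarith
    refine (isCompact_closedBall (0 : ↥s' → ℝ) R).of_isClosed_subset (hTcl 0) ?_
    rintro y ⟨⟨v, hvP, rfl⟩, hyΓ⟩
    rw [Metric.mem_closedBall, dist_zero_right]
    rw [pi_norm_le_iff_of_nonneg hR0]
    intro w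
    have hwX : (↑w : (Fin N → ℝ) × ℝ) ∈ Φ' '' X := by
      apply hsub
      rw [← hs'coe]
      exact w.2
    obtain ⟨xw, hxw, hxweq⟩ := hwX
    have h1 : L v w = bil v (Φ' xw) := by
      rw [hLapp, hxweq]
    have h2 := hyΓ xw hxw
    rw [hkey v xw hxw] at h2
    have h3 := hC xw hxw
    rw [Real.norm_eq_abs] at h3 ⊢
    rw [h1]
    have h4 := abs_le.1 h2
    have h5 := abs_le.1 h3
    have hcast : (0:ℝ) + 1 = 1 := by norm_num
    rw [abs_le]
    constructor
    · have := h4.2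
      push_cast at this
      rw [hR]
      linarith [h5.1]
    · have := h4.1
      push_cast at this
      rw [hR]
      linarith [h5.2]
  obtain ⟨y, hy⟩ :=
    IsCompact.nonempty_iInter_of_sequence_nonempty_isCompact_isClosed T hTsub hTne hT0 hTcl
  have hymem : ∀ n, y ∈ T n := Set.mem_iInter.1 hy
  obtain ⟨⟨v, hvP, hvL⟩, _⟩ := hymem 0
  refine ⟨v.1, v.2, hvP, ?_⟩
  intro x hx
  have hbound : ∀ n : ℕ, |u₀ x - ((∑ i, v.1 i * u i x) + v.2)| ≤ d / 2 + 1 / (n + 1) := by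
    intro n
    have hyn := (hymem n).2 x hx
    rw [← hvL, hkey v x hx, hbilΦ] at hyn
    push_cast at hyn ⊢
    exact hyn
  have hfin := le_of_forall_le_add_inv hbound
  have : (1:ℝ) / 2 * d = d / 2 := by ring
  rw [hd] at hfin
  linarith [hfin]
end

section
/- Let ε ≥ 0 and let (X, u₀, {u₁,…,u_N}) be a setting with vN-M utilities in which X is additionally a compact subset of a real topological vector space and u₀, u₁, …, u_N are continuous. The following are equivalent: (i) the pair (u₀, {u₁,…,u_N}) satisfies ε-Semistrong Pareto; (ii) there exists a utilitarian aggregator w ∈ W₊ with ‖u₀ − w‖∞ ≤ ε/2. -/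
open Finset Filter Topology

lemma hb_decomp {N : ℕ} (f : ((Fin N → ℝ) × ℝ) →L[ℝ] ℝ) (z : (Fin N → ℝ) × ℝ) :
    f z = (∑ i, f (Pi.single i 1, 0) * z.1 i) + f (0, 1) * z.2 := by
  have hz : z = (∑ i, z.1 i • ((Pi.single i 1 : Fin N → ℝ), (0:ℝ))) + z.2 • ((0 : Fin N → ℝ), (1:ℝ)) := by
    ext j
    · simp [Prod.fst_sum, Finset.sum_apply, Pi.single_apply, mul_ite]
    · simp [Prod.snd_sum]
  conv_lhs => rw [hz]
  rw [map_add, map_sum, map_smul]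
  simp only [map_smul, smul_eq_mul]
  rw [Finset.sum_congr rfl (fun i (_ : i ∈ Finset.univ) => mul_comm (z.1 i) (f (Pi.single i 1, 0))), mul_comm]

lemma step1 {N : ℕ} {ε δ : ℝ} (hδ : 0 < δ) {D : Set ((Fin N → ℝ) × ℝ)}
    (hDconv : Convex ℝ D) (hDcomp : IsCompact D) (h0 : (0 : (Fin N → ℝ) × ℝ) ∈ D)
    (hH : ∀ z ∈ D, (∀ i, z.1 i ≤ 0) → z.2 ≤ ε) :
    ∃ a : Fin N → ℝ, (∀ i, 0 ≤ a i) ∧ ∀ z ∈ D, z.2 ≤ ε + δ + ∑ i, a i * z.1 i := by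
  set Q : Set ((Fin N → ℝ) × ℝ) := {z | (∀ i, z.1 i ≤ 0) ∧ ε + δ ≤ z.2} with hQ
  have hQconv : Convex ℝ Q := by
    intro z hz w hw p q hp hq hpq
    constructor
    · intro i
      have := hz.1 i; have := hw.1 i
      simp only [Prod.fst_add, Prod.smul_fst, Pi.add_apply, Pi.smul_apply, smul_eq_mul]
      nlinarith
    · have h1 := hz.2; have h2 := hw.2
      simp only [Prod.snd_add, Prod.smul_snd, smul_eq_mul]
      have h3 : p * (ε + δ) + q * (ε + δ) = ε + δ := by rw [← add_mul, hpq, one_mul]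
      nlinarith [mul_le_mul_of_nonneg_left h1 hp, mul_le_mul_of_nonneg_left h2 hq]
  have hQclosed : IsClosed Q := by
    have h1 : IsClosed {z : (Fin N → ℝ) × ℝ | ∀ i, z.1 i ≤ 0} := by
      have : {z : (Fin N → ℝ) × ℝ | ∀ i, z.1 i ≤ 0} = ⋂ i, {z | z.1 i ≤ 0} := by
        ext z; simp
      rw [this]
      exact isClosed_iInter fun i =>
        isClosed_le ((continuous_apply i).comp continuous_fst) continuous_const
    exact h1.inter (isClosed_le continuous_const continuous_snd)
  have hdisj : Disjoint D Q := by
    rw [Set.disjoint_left]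
    intro z hzD hzQ
    have := hH z hzD hzQ.1
    linarith [hzQ.2]
  obtain ⟨f, u, v, hfu, huv, hfv⟩ :=
    geometric_hahn_banach_compact_closed hDconv hDcomp hQconv hQclosed hdisj
  set c : ℝ := f (0, 1) with hc
  set α : Fin N → ℝ := fun i => f (Pi.single i 1, 0) with hα
  have hdec : ∀ z : (Fin N → ℝ) × ℝ, f z = (∑ i, α i * z.1 i) + c * z.2 := hb_decomp f
  -- value of f on points (-t • single i 1, ε + δ)
  have hQmem : ∀ (t : ℝ) (i : Fin N), 0 ≤ t → ((-t) • (Pi.single i 1 : Fin N → ℝ), ε + δ) ∈ Q := by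
    intro t i ht
    refine ⟨fun j => ?_, le_refl _⟩
    simp only [Pi.smul_apply, smul_eq_mul, Pi.single_apply]
    by_cases h : j = i <;> simp [h] <;> nlinarith
  have hval : ∀ (t : ℝ) (i : Fin N), f ((-t) • (Pi.single i 1 : Fin N → ℝ), ε + δ) = -t * α i + c * (ε + δ) := by
    intro t i
    rw [hdec]
    simp only
    congr 1
    rw [Finset.sum_eq_single i]
    · simp [mul_comm]
    · intro j _ hj
      simp [Pi.single_apply, hj]
    · simp
  have hQ0 : ((0 : Fin N → ℝ), ε + δ) ∈ Q := ⟨fun i => le_refl 0, le_refl _⟩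
  have hval0 : f ((0 : Fin N → ℝ), ε + δ) = c * (ε + δ) := by
    rw [hdec]; simp
  have hαle : ∀ i, α i ≤ 0 := by
    intro i
    by_contra h
    push_neg at h
    have ht : (0:ℝ) ≤ (c * (ε + δ) - v) / α i + 1 ∨ True := Or.inr trivial
    set t : ℝ := max 0 ((c * (ε + δ) - v) / α i + 1) with htdef
    have ht0 : 0 ≤ t := le_max_left _ _
    have := hfv _ (hQmem t i ht0)
    rw [hval t i] at this
    have htbig : (c * (ε + δ) - v) / α i + 1 ≤ t := le_max_right _ _
    have : v < -t * α i + c * (ε + δ) := this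
    rw [div_add' _ _ _ (ne_of_gt h)] at htbig
    have := (div_le_iff₀ h).mp htbig
    nlinarith
  have hcpos : 0 < c := by
    rcases lt_trichotomy c 0 with hneg | hzero | hpos
    · -- take second coordinate large
      set M : ℝ := max (ε + δ) ((v - 1) / c) with hM
      have hMQ : ((0 : Fin N → ℝ), M) ∈ Q := ⟨fun i => le_refl 0, le_max_left _ _⟩
      have := hfv _ hMQ
      rw [hdec] at this
      simp only [Prod.fst] at this
      have hsum0 : (∑ i, α i * (0 : Fin N → ℝ) i) = 0 := by simp
      rw [hsum0, zero_add] at this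
      have hM2 : (v - 1) / c ≤ M := le_max_right _ _
      have := (div_le_iff_of_neg hneg).mp hM2
      nlinarith
    · exfalso
      have h1 := hfu 0 h0
      have h2 := hfv _ hQ0
      rw [hval0, hzero] at h2
      rw [map_zero] at h1
      simp at h2
      linarith
    · exact hpos
  refine ⟨fun i => -α i / c, fun i => div_nonneg (by linarith [hαle i]) hcpos.le, ?_⟩
  intro z hz
  have h1 := hfu z hz
  have h2 := hfv _ hQ0
  rw [hval0] at h2
  rw [hdec z] at h1
  -- (∑ α i z.1 i) + c z.2 < u < v < c (ε+δ)
  have key : (∑ i, α i * z.1 i) + c * z.2 < c * (ε + δ) := by linarith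
  have hmul : c * (∑ i, (-α i / c) * z.1 i) = ∑ i, -(α i * z.1 i) := by
    rw [Finset.mul_sum]
    exact Finset.sum_congr rfl fun i _ => by field_simp
  have target : c * z.2 ≤ c * (ε + δ + ∑ i, (-α i / c) * z.1 i) := by
    rw [mul_add, hmul, Finset.sum_neg_distrib]
    linarith
  exact le_of_mul_le_mul_left target hcpos

lemma arith1 {η μ NN : ℝ} (hμ : 0 < μ) (hη : 0 < η)
    (he : η * (2*NN*μ + 2) = μ) : 2*(η*NN) < 1 := by nlinarith

lemma arith2 {η μ NN s : ℝ} (hμ : 0 < μ) (hη : 0 < η)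
    (he : η * (2*NN*μ + 2) = μ) (hsμ : μ ≤ s) (hf : 2*(1-η*NN)*s ≤ s + η) : False := by
  have h1 : 2*(η*NN) < 1 := arith1 hμ hη he
  have h5 : s * (1 - 2*(η*NN)) ≤ η := by nlinarith
  have h6 : μ * (1 - 2*(η*NN)) ≤ s * (1 - 2*(η*NN)) :=
    mul_le_mul_of_nonneg_right hsμ (by linarith)
  nlinarith

section core
variable {N : ℕ} {ε : ℝ} {D : Set ((Fin N → ℝ) × ℝ)}

lemma step1' (hδpos : ∀ (δ:ℝ), 0 < δ → ∃ a : Fin N → ℝ, (∀ i, 0 ≤ a i) ∧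
      ∀ z ∈ D, z.2 ≤ ε + δ + ∑ i, a i * z.1 i)
    (hDcomp : IsCompact D)
    (hDsymm : ∀ z ∈ D, -z ∈ D)
    (h0 : (0 : (Fin N → ℝ) × ℝ) ∈ D) :
    ∃ a : Fin N → ℝ, (∀ i, 0 ≤ a i) ∧ ∀ z ∈ D, z.2 ≤ ε + ∑ i, a i * z.1 i := by
  classical
  set A : ℕ → Set (Fin N → ℝ) := fun n =>
    {a | (∀ i, 0 ≤ a i) ∧ ∀ z ∈ D, z.2 ≤ ε + 1/(n+1) + ∑ i, a i * z.1 i} with hA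
  have hAne : ∀ n, (A n).Nonempty := by
    intro n
    obtain ⟨a, ha1, ha2⟩ := hδpos (1/(n+1)) (by positivity)
    exact ⟨a, ha1, ha2⟩
  have hsumcont : ∀ w : Fin N → ℝ, Continuous (fun a : Fin N → ℝ => ∑ i, a i * w i) :=
    fun w => continuous_finset_sum _ fun i _ => (continuous_apply i).mul continuous_const
  have hAclosed : ∀ n, IsClosed (A n) := by
    intro n
    have h1 : IsClosed {a : Fin N → ℝ | ∀ i, 0 ≤ a i} := by
      have : {a : Fin N → ℝ | ∀ i, 0 ≤ a i} = ⋂ i, {a | 0 ≤ a i} := by ext; simp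
      rw [this]
      exact isClosed_iInter fun i => isClosed_le continuous_const (continuous_apply i)
    have h2 : IsClosed {a : Fin N → ℝ | ∀ z ∈ D, z.2 ≤ ε + 1/(n+1) + ∑ i, a i * z.1 i} := by
      have : {a : Fin N → ℝ | ∀ z ∈ D, z.2 ≤ ε + 1/(n+1) + ∑ i, a i * z.1 i}
          = ⋂ z ∈ D, {a | z.2 ≤ ε + 1/(n+1) + ∑ i, a i * z.1 i} := by ext; simp
      rw [this]
      exact isClosed_biInter fun z _ => isClosed_le continuous_const
        (continuous_const.add (hsumcont z.1))
    exact h1.inter h2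
  have hAmono : ∀ m n : ℕ, m ≤ n → A n ⊆ A m := by
    intro m n hmn a ha
    refine ⟨ha.1, fun z hz => ?_⟩
    have := ha.2 z hz
    have hle : (1:ℝ)/(n+1) ≤ 1/(m+1) := by
      apply one_div_le_one_div_of_le (by positivity)
      exact_mod_cast by omega
    linarith
  set n2 : (Fin N → ℝ) → ℝ := fun a => ∑ i, (a i)^2 with hn2
  have hn2cont : Continuous n2 := continuous_finset_sum _ fun i _ => (continuous_apply i).pow 2
  have hn2nonneg : ∀ a, 0 ≤ n2 a := fun a => Finset.sum_nonneg fun i _ => sq_nonneg _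
  have hcoord : ∀ (a : Fin N → ℝ) (i), 0 ≤ a i → a i ≤ Real.sqrt (n2 a) := by
    intro a i hi
    exact Real.le_sqrt_of_sq_le
      (Finset.single_le_sum (fun j _ => sq_nonneg (a j)) (Finset.mem_univ i))
  -- minimal norm selection
  have hsel : ∀ n, ∃ a ∈ A n, ∀ b ∈ A n, n2 a ≤ n2 b := by
    intro n
    obtain ⟨a₀, ha₀⟩ := hAne n
    set R := Real.sqrt (n2 a₀) with hR
    set K := A n ∩ Set.pi Set.univ (fun _ : Fin N => Set.Icc (0:ℝ) R) with hK
    have hKcomp : IsCompact K := by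
      apply IsCompact.of_isClosed_subset (isCompact_univ_pi fun _ => isCompact_Icc)
      · exact (hAclosed n).inter (isClosed_set_pi fun i _ => isClosed_Icc)
      · exact Set.inter_subset_right
    have ha₀K : a₀ ∈ K := by
      refine ⟨ha₀, fun i _ => ⟨ha₀.1 i, hcoord a₀ i (ha₀.1 i)⟩⟩
    obtain ⟨a, haK, hamin⟩ := hKcomp.exists_isMinOn ⟨a₀, ha₀K⟩ hn2cont.continuousOn
    rw [isMinOn_iff] at hamin
    refine ⟨a, haK.1, fun b hb => ?_⟩
    by_contra hlt
    push_neg at hlt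
    have h1 : n2 a ≤ n2 a₀ := hamin a₀ ha₀K
    have hbK : b ∈ K := by
      refine ⟨hb, fun i _ => ⟨hb.1 i, ?_⟩⟩
      calc b i ≤ Real.sqrt (n2 b) := hcoord b i (hb.1 i)
        _ ≤ R := Real.sqrt_le_sqrt (by linarith)
    exact absurd (hamin b hbK) (not_le.mpr hlt)
  choose aa haA hamin using hsel
  by_cases hbdd : ∃ C, ∀ n, n2 (aa n) ≤ C
  · -- bounded case
    obtain ⟨C, hC⟩ := hbdd
    set R := Real.sqrt C with hRdef
    have hbox : ∀ n, aa n ∈ Set.pi Set.univ (fun _ : Fin N => Set.Icc (0:ℝ) R) := by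
      intro n
      refine fun i _ => ⟨(haA n).1 i, ?_⟩
      calc aa n i ≤ Real.sqrt (n2 (aa n)) := hcoord _ i ((haA n).1 i)
        _ ≤ R := Real.sqrt_le_sqrt (hC n)
    obtain ⟨abar, habar, φ, hφ, hconv⟩ :=
      (isCompact_univ_pi fun _ : Fin N => isCompact_Icc).tendsto_subseq hbox
    refine ⟨abar, fun i => (habar i (Set.mem_univ i)).1, fun z hz => ?_⟩
    have hev : ∀ k, z.2 ≤ ε + 1/(φ k+1) + ∑ i, aa (φ k) i * z.1 i :=
      fun k => (haA (φ k)).2 z hz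
    have hlim : Tendsto (fun k => ε + 1/((φ k : ℝ)+1) + ∑ i, aa (φ k) i * z.1 i)
        atTop (𝓝 (ε + 0 + ∑ i, abar i * z.1 i)) := by
      apply Tendsto.add
      · apply Tendsto.add tendsto_const_nhds
        exact tendsto_one_div_add_atTop_nhds_zero_nat.comp hφ.tendsto_atTop
      · exact ((hsumcont z.1).tendsto abar).comp hconv
    have := ge_of_tendsto' hlim (fun k => hev k)
    simpa using this
  · exfalso
    push_neg at hbdd
    have hmono2 : Monotone fun n => n2 (aa n) := fun m n hmn =>
      hamin m (aa n) (hAmono m n hmn (haA n))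
    have htop : Tendsto (fun n => n2 (aa n)) atTop atTop :=
      tendsto_atTop_atTop_of_monotone hmono2 (fun C => (hbdd C).imp fun n hn => hn.le)
    set r : ℕ → ℝ := fun n => Real.sqrt (n2 (aa n)) with hr
    set ah : ℕ → Fin N → ℝ := fun n => (r n)⁻¹ • aa n with hah
    have hrtop : Tendsto r atTop atTop := by
      apply tendsto_atTop_atTop_of_monotone (fun m n hmn => Real.sqrt_le_sqrt (hmono2 hmn))
      intro C
      obtain ⟨n, hn⟩ := hbdd ((max C 0)^2)
      refine ⟨n, ?_⟩
      calc C ≤ max C 0 := le_max_left _ _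
        _ = Real.sqrt ((max C 0)^2) := (Real.sqrt_sq (le_max_right _ _)).symm
        _ ≤ r n := Real.sqrt_le_sqrt hn.le
    have hahunit : ∀ n, 1 ≤ r n → n2 (ah n) = 1 := by
      intro n hrn
      have hrsq : r n ^ 2 = n2 (aa n) := Real.sq_sqrt (hn2nonneg _)
      have hne : r n ≠ 0 := by linarith
      have h1 : n2 (ah n) = ((r n)⁻¹)^2 * n2 (aa n) := by
        simp only [n2, hah, Pi.smul_apply, smul_eq_mul, mul_pow, ← Finset.mul_sum]
      rw [h1, ← hrsq]
      field_simp
    have hahbox : ∀ᶠ n in atTop, ah n ∈ Set.pi Set.univ (fun _ : Fin N => Set.Icc (0:ℝ) 1) := by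
      filter_upwards [hrtop.eventually_ge_atTop 1] with n hrn
      have hrpos : (0:ℝ) < r n := by linarith
      intro i _
      have h1 : aa n i ≤ r n := hcoord _ i ((haA n).1 i)
      have h2 : ah n i = aa n i / r n := by simp [hah, div_eq_inv_mul]
      constructor
      · rw [h2]; exact div_nonneg ((haA n).1 i) hrpos.le
      · rw [h2, div_le_one hrpos]; exact h1
    obtain ⟨astar, hastar, φ, hφ, hconv⟩ :=
      (isCompact_univ_pi fun _ : Fin N => isCompact_Icc).tendsto_subseq' hahbox.frequently
    have hrφtop : Tendsto (fun k => r (φ k)) atTop atTop := hrtop.comp hφ.tendsto_atTop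
    have hastar01 : ∀ i, 0 ≤ astar i ∧ astar i ≤ 1 := by
      intro i
      have := hastar i (Set.mem_univ i)
      exact ⟨this.1, this.2⟩
    have hn2astar : n2 astar = 1 := by
      have h1 : Tendsto (fun k => n2 (ah (φ k))) atTop (𝓝 (n2 astar)) :=
        (hn2cont.tendsto astar).comp hconv
      have h2 : (fun k => n2 (ah (φ k))) =ᶠ[atTop] (fun _ => (1:ℝ)) := by
        filter_upwards [hrφtop.eventually_ge_atTop 1] with k hk
        exact hahunit (φ k) hk
      exact tendsto_nhds_unique (h1.congr' h2) tendsto_const_nhds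
    have horth0 : ∀ z ∈ D, 0 ≤ ∑ i, astar i * z.1 i := by
      intro z hz
      have hineq : ∀ᶠ k in atTop,
          (z.2 - ε - 1) * (r (φ k))⁻¹ ≤ ∑ i, ah (φ k) i * z.1 i := by
        filter_upwards [hrφtop.eventually_ge_atTop 1] with k hk
        have hrpos : (0:ℝ) < r (φ k) := by linarith
        have h1 : z.2 - ε - 1 ≤ ∑ i, aa (φ k) i * z.1 i := by
          have h2 := (haA (φ k)).2 z hz
          have h3 : 1/((φ k:ℝ)+1) ≤ 1 := by
            rw [div_le_one (by positivity)]
            simp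
          linarith
        calc (z.2 - ε - 1) * (r (φ k))⁻¹
            ≤ (∑ i, aa (φ k) i * z.1 i) * (r (φ k))⁻¹ :=
              mul_le_mul_of_nonneg_right h1 (inv_nonneg.mpr hrpos.le)
          _ = ∑ i, ah (φ k) i * z.1 i := by
              rw [Finset.sum_mul]
              exact Finset.sum_congr rfl fun i _ => by
                simp [hah, Pi.smul_apply, smul_eq_mul]; ring
      have hL : Tendsto (fun k => (z.2 - ε - 1) * (r (φ k))⁻¹) atTop (𝓝 0) := by
        have := hrφtop.inv_tendsto_atTop
        simpa using tendsto_const_nhds.mul this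
      have hR : Tendsto (fun k => ∑ i, ah (φ k) i * z.1 i) atTop
          (𝓝 (∑ i, astar i * z.1 i)) := ((hsumcont z.1).tendsto astar).comp hconv
      exact le_of_tendsto_of_tendsto hL hR hineq
    have horth : ∀ z ∈ D, ∑ i, astar i * z.1 i = 0 := by
      intro z hz
      have h1 := horth0 z hz
      have h2 := horth0 (-z) (hDsymm z hz)
      have h3 : ∑ i, astar i * (-z).1 i = - ∑ i, astar i * z.1 i := by
        simp [Prod.fst_neg, mul_neg, ← Finset.sum_neg_distrib]
      rw [h3] at h2
      linarith
    set S := Finset.univ.filter (fun i => 0 < astar i) with hS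
    have hSne : S.Nonempty := by
      rw [Finset.filter_nonempty_iff]
      by_contra h
      push_neg at h
      have : ∀ i, astar i = 0 := fun i =>
        le_antisymm (h i (Finset.mem_univ i)) (hastar01 i).1
      have : n2 astar = 0 := by simp [n2, this]
      rw [hn2astar] at this
      norm_num at this
    obtain ⟨iμ, hiμS, hiμmin⟩ := S.exists_min_image astar hSne
    set μ := astar iμ with hμ
    have hμpos : 0 < μ := (Finset.mem_filter.mp hiμS).2
    have hdenpos : (0:ℝ) < 2*N*μ + 2 := by positivity
    set η := μ / (2*N*μ + 2) with hη
    have hηpos : 0 < η := by positivity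
    have hetaeq : η * (2*N*μ + 2) = μ := by
      rw [hη]; field_simp
    have hημ2 : η ≤ μ/2 := by
      rw [hη]
      apply div_le_div_of_nonneg_left hμpos.le two_pos
      nlinarith [mul_nonneg (mul_nonneg (by norm_num : (0:ℝ) ≤ 2) (Nat.cast_nonneg N)) hμpos.le]
    obtain ⟨k, hk1, hk2⟩ :=
      ((Metric.tendsto_nhds.mp hconv η hηpos).and (hrφtop.eventually_ge_atTop 1)).exists
    set n := φ k with hndef
    have hrn : 1 ≤ r n := hk2
    have hrnpos : (0:ℝ) < r n := by linarith
    have hcoordest : ∀ i, |ah n i - astar i| < η := by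
      intro i
      calc |ah n i - astar i| = dist (ah n i) (astar i) := (Real.dist_eq _ _).symm
        _ ≤ dist (ah n) astar := dist_le_pi_dist _ _ i
        _ < η := hk1
    have haheq : ∀ i, aa n i = r n * ah n i := by
      intro i
      simp only [hah, Pi.smul_apply, smul_eq_mul]
      field_simp
    obtain ⟨i₀, hi₀S, hi₀min⟩ := S.exists_min_image (fun j => aa n j / astar j) hSne
    set t := aa n i₀ / astar i₀ with ht
    set s := astar i₀ with hsdef
    have hspos : 0 < s := (Finset.mem_filter.mp hi₀S).2
    have hsμ : μ ≤ s := hiμmin i₀ hi₀S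
    have hsle1 : s ≤ 1 := (hastar01 i₀).2
    have hts : t * s = aa n i₀ := by
      rw [ht]; field_simp
    have hahlow : ∀ i, astar i - η ≤ ah n i := fun i => by
      have := abs_lt.mp (hcoordest i); linarith [this.1]
    have hahup : ∀ i, ah n i ≤ astar i + η := fun i => by
      have := abs_lt.mp (hcoordest i); linarith [this.2]
    have haalow : r n * (s - η) ≤ aa n i₀ := by
      rw [haheq i₀]
      exact mul_le_mul_of_nonneg_left (hahlow i₀) hrnpos.le
    have haaup : aa n i₀ ≤ r n * (s + η) := by
      rw [haheq i₀]
      exact mul_le_mul_of_nonneg_left (hahup i₀) hrnpos.le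
    have htpos : 0 < t := by
      have h1 : 0 < t * s := by
        rw [hts]
        calc (0:ℝ) < r n * (μ/2) := by positivity
          _ ≤ r n * (s - η) := by
              apply mul_le_mul_of_nonneg_left _ hrnpos.le
              linarith
          _ ≤ aa n i₀ := haalow
      by_contra htn
      push_neg at htn
      nlinarith
    set b := fun i => aa n i - t * astar i with hb
    have hbnonneg : ∀ i, 0 ≤ b i := by
      intro i
      by_cases hi : 0 < astar i
      · have hiS : i ∈ S := Finset.mem_filter.mpr ⟨Finset.mem_univ i, hi⟩
        have h1 : t ≤ aa n i / astar i := hi₀min i hiS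
        have h2 : t * astar i ≤ aa n i := by
          rw [← div_mul_cancel₀ (aa n i) (ne_of_gt hi)]
          exact mul_le_mul_of_nonneg_right h1 hi.le
        simp only [hb]; linarith
      · have hi0 : astar i = 0 := le_antisymm (not_lt.mp hi) (hastar01 i).1
        simp only [hb, hi0, mul_zero, sub_zero]
        exact (haA n).1 i
    have hbA : b ∈ A n := by
      refine ⟨hbnonneg, fun z hz => ?_⟩
      have h1 := (haA n).2 z hz
      have h2 : ∑ i, b i * z.1 i
          = (∑ i, aa n i * z.1 i) - t * ∑ i, astar i * z.1 i := by
        rw [Finset.mul_sum, ← Finset.sum_sub_distrib]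
        exact Finset.sum_congr rfl fun i _ => by simp only [hb]; ring
      rw [h2, horth z hz]
      simpa using h1
    have hminb : n2 (aa n) ≤ n2 b := hamin n b hbA
    set P := ∑ i, aa n i * astar i with hP
    have hexp : n2 b = n2 (aa n) - 2*t*P + t^2 * n2 astar := by
      calc n2 b = ∑ i, (b i)^2 := by simp only [hn2]
        _ = ∑ i, ((aa n i)^2 - 2*t*(aa n i * astar i) + t^2*(astar i)^2) :=
            Finset.sum_congr rfl fun i _ => by simp only [hb]; ring
        _ = (∑ i, (aa n i)^2) - 2*t*(∑ i, aa n i * astar i) + t^2*(∑ i, (astar i)^2) := by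
            rw [Finset.sum_add_distrib, Finset.sum_sub_distrib, ← Finset.mul_sum, ← Finset.mul_sum]
        _ = n2 (aa n) - 2*t*P + t^2 * n2 astar := by simp only [hn2, hP]
    have h2Pt : 2*P ≤ t := by
      rw [hexp, hn2astar, mul_one] at hminb
      have h1 : t * (2 * P) ≤ t * t := by ring_nf; ring_nf at hminb; linarith
      exact le_of_mul_le_mul_left h1 htpos
    have hsumastar : ∑ i, astar i ≤ (N:ℝ) := by
      calc ∑ i, astar i ≤ ∑ _i : Fin N, (1:ℝ) :=
            Finset.sum_le_sum fun i _ => (hastar01 i).2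
        _ = N := by simp
    have hPlow : r n * (1 - η * N) ≤ P := by
      have h1 : ∑ i, ah n i * astar i ≥ ∑ i, (astar i - η) * astar i :=
        Finset.sum_le_sum fun i _ =>
          mul_le_mul_of_nonneg_right (hahlow i) (hastar01 i).1
      have h2 : ∑ i, (astar i - η) * astar i = n2 astar - η * ∑ i, astar i := by
        simp only [hn2, Finset.mul_sum]
        rw [← Finset.sum_sub_distrib]
        exact Finset.sum_congr rfl fun i _ => by ring
      have h3 : P = r n * ∑ i, ah n i * astar i := by
        rw [hP, Finset.mul_sum]
        exact Finset.sum_congr rfl fun i _ => by rw [haheq i]; ring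
      rw [h3]
      apply mul_le_mul_of_nonneg_left _ hrnpos.le
      rw [h2, hn2astar] at h1
      have h4 : η * ∑ i, astar i ≤ η * N := mul_le_mul_of_nonneg_left hsumastar hηpos.le
      linarith
    -- final contradiction
    have hfin1 : 2 * (r n * (1 - η * N)) ≤ t := by linarith
    have hfin2 : t * s ≤ r n * (s + η) := by rw [hts]; exact haaup
    have hfin3 : 2 * (r n * (1 - η * N)) * s ≤ r n * (s + η) :=
      le_trans (mul_le_mul_of_nonneg_right hfin1 hspos.le) hfin2
    have hfin4 : 2 * (1 - η * N) * s ≤ s + η := by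
      by_contra hcon
      push_neg at hcon
      have hlt := mul_lt_mul_of_pos_left hcon hrnpos
      have heq : 2 * (r n * (1 - η * N)) * s = r n * (2 * (1 - η * N) * s) := by ring
      linarith [hfin3, heq ▸ hfin3]
    exact arith2 hμpos hηpos hetaeq hsμ hfin4



lemma coreFull {N : ℕ} {ε : ℝ} {D : Set ((Fin N → ℝ) × ℝ)}
    (hDne : D.Nonempty) (hDconv : Convex ℝ D) (hDcomp : IsCompact D)
    (hDsymm : ∀ z ∈ D, -z ∈ D)
    (hH : ∀ z ∈ D, (∀ i, z.1 i ≤ 0) → z.2 ≤ ε) :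
    ∃ a : Fin N → ℝ, (∀ i, 0 ≤ a i) ∧ ∀ z ∈ D, z.2 ≤ ε + ∑ i, a i * z.1 i := by
  have h0 : (0 : (Fin N → ℝ) × ℝ) ∈ D := by
    obtain ⟨z, hz⟩ := hDne
    have := hDconv hz (hDsymm z hz) (by norm_num : (0:ℝ) ≤ 1/2)
      (by norm_num : (0:ℝ) ≤ 1/2) (by norm_num)
    simpa using this
  exact step1' (fun δ hδ => step1 hδ hDconv hDcomp h0 hH) hDcomp hDsymm h0

/-- Theorem: aggregation with `ε`-Semistrong Pareto, compact case.
Let `ε ≥ 0` and let `(X, u₀, {u₁,…,u_N})` be a setting with vN-M utilities where `X`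
is a compact subset of a real topological vector space and all utilities are
continuous.  Then `ε`-Semistrong Pareto holds iff there is a utilitarian aggregator
`w = Σᵢ aᵢ uᵢ + b` with all `aᵢ ≥ 0` and `‖u₀ − w‖∞ ≤ ε/2`. -/
theorem stmt5 {E : Type*} [AddCommGroup E] [Module ℝ E] [TopologicalSpace E]
    [IsTopologicalAddGroup E] [ContinuousSMul ℝ E]
    {N : ℕ} (hN : 1 ≤ N) {ε : ℝ} (hε : 0 ≤ ε)
    (X : Set E) (hXne : X.Nonempty) (hXconv : Convex ℝ X) (hXcomp : IsCompact X)
    (u₀ : E → ℝ) (u : Fin N → E → ℝ)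
    (hu₀c : ContinuousOn u₀ X) (huc : ∀ i, ContinuousOn (u i) X)
    (haff₀ : ∀ x ∈ X, ∀ y ∈ X, ∀ l : ℝ, 0 ≤ l → l ≤ 1 →
      u₀ (l • x + (1 - l) • y) = l * u₀ x + (1 - l) * u₀ y)
    (haff : ∀ i : Fin N, ∀ x ∈ X, ∀ y ∈ X, ∀ l : ℝ, 0 ≤ l → l ≤ 1 →
      u i (l • x + (1 - l) • y) = l * u i x + (1 - l) * u i y) :
    (∀ x ∈ X, ∀ y ∈ X, (∀ i, u i y ≤ u i x) → u₀ y - ε ≤ u₀ x) ↔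
      (∃ (a : Fin N → ℝ) (b : ℝ), (∀ i, 0 ≤ a i) ∧
        ∀ x ∈ X, |u₀ x - ((∑ i, a i * u i x) + b)| ≤ ε / 2) := by
  constructor
  · intro hPar
    set F : E × E → (Fin N → ℝ) × ℝ :=
      fun p => (fun i => u i p.1 - u i p.2, u₀ p.1 - u₀ p.2) with hF
    set D : Set ((Fin N → ℝ) × ℝ) := F '' (X ×ˢ X) with hD
    have hFcont : ContinuousOn F (X ×ˢ X) := by
      apply ContinuousOn.prodMk
      · rw [continuousOn_pi]
        intro i
        exact ((huc i).comp continuous_fst.continuousOn fun p hp => hp.1).sub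
          ((huc i).comp continuous_snd.continuousOn fun p hp => hp.2)
      · exact (hu₀c.comp continuous_fst.continuousOn fun p hp => hp.1).sub
          (hu₀c.comp continuous_snd.continuousOn fun p hp => hp.2)
    have hDcomp : IsCompact D := (hXcomp.prod hXcomp).image_of_continuousOn hFcont
    obtain ⟨x₀, hx₀⟩ := id hXne
    have hDne : D.Nonempty := ⟨F (x₀, x₀), ⟨(x₀, x₀), ⟨hx₀, hx₀⟩, rfl⟩⟩
    have hDconv : Convex ℝ D := by
      rintro z₁ ⟨⟨x₁, y₁⟩, ⟨hx₁, hy₁⟩, rfl⟩ z₂ ⟨⟨x₂, y₂⟩, ⟨hx₂, hy₂⟩, rfl⟩ p q hp hq hpq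
      have hq' : q = 1 - p := by linarith
      subst hq'
      have hp1 : p ≤ 1 := by linarith
      refine ⟨(p • x₁ + (1-p) • x₂, p • y₁ + (1-p) • y₂),
        ⟨hXconv hx₁ hx₂ hp hq hpq, hXconv hy₁ hy₂ hp hq hpq⟩, ?_⟩
      have e1 : ∀ i : Fin N, u i (p • x₁ + (1-p) • x₂) = p * u i x₁ + (1-p) * u i x₂ :=
        fun i => haff i x₁ hx₁ x₂ hx₂ p hp hp1
      have e2 : ∀ i : Fin N, u i (p • y₁ + (1-p) • y₂) = p * u i y₁ + (1-p) * u i y₂ :=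
        fun i => haff i y₁ hy₁ y₂ hy₂ p hp hp1
      apply Prod.ext
      · funext i
        simp only [hF, Prod.fst_add, Prod.smul_fst, Pi.add_apply, Pi.smul_apply,
          smul_eq_mul]
        rw [e1 i, e2 i]
        ring
      · simp only [hF, Prod.snd_add, Prod.smul_snd, smul_eq_mul]
        rw [haff₀ x₁ hx₁ x₂ hx₂ p hp hp1, haff₀ y₁ hy₁ y₂ hy₂ p hp hp1]
        ring
    have hDsymm : ∀ z ∈ D, -z ∈ D := by
      rintro z ⟨⟨x, y⟩, ⟨hx, hy⟩, rfl⟩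
      refine ⟨(y, x), ⟨hy, hx⟩, ?_⟩
      apply Prod.ext
      · funext i
        simp [hF]
      · simp [hF]
    have hH : ∀ z ∈ D, (∀ i, z.1 i ≤ 0) → z.2 ≤ ε := by
      rintro z ⟨⟨x, y⟩, ⟨hx, hy⟩, rfl⟩ hneg
      have h1 : ∀ i, u i x ≤ u i y := by
        intro i
        have := hneg i
        simp only [hF] at this
        linarith
      have := hPar y hy x hx h1
      simp only [hF]
      linarith
    obtain ⟨a, ha, hineq⟩ := coreFull hDne hDconv hDcomp hDsymm hH
    have hkey : ∀ x ∈ X, ∀ y ∈ X,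
        u₀ x - u₀ y ≤ ε + ((∑ i, a i * u i x) - ∑ i, a i * u i y) := by
      intro x hx y hy
      have := hineq (F (x, y)) ⟨(x, y), ⟨hx, hy⟩, rfl⟩
      simp only [hF] at this
      have hsplit : ∑ i, a i * (u i x - u i y)
          = (∑ i, a i * u i x) - ∑ i, a i * u i y := by
        rw [← Finset.sum_sub_distrib]
        exact Finset.sum_congr rfl fun i _ => by ring
      rw [hsplit] at this
      exact this
    obtain ⟨g, hg⟩ : ∃ g : E → ℝ, g = fun x => u₀ x - ∑ i, a i * u i x := ⟨_, rfl⟩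
    have hgcont : ContinuousOn g X := by
      rw [hg]
      apply hu₀c.sub
      apply continuousOn_finset_sum
      intro i _
      exact continuousOn_const.mul (huc i)
    obtain ⟨xM, hxM, hMax⟩ := hXcomp.exists_isMaxOn hXne hgcont
    obtain ⟨xm, hxm, hMin⟩ := hXcomp.exists_isMinOn hXne hgcont
    rw [isMaxOn_iff] at hMax
    rw [isMinOn_iff] at hMin
    have hMm : g xM - g xm ≤ ε := by
      have := hkey xM hxM xm hxm
      simp only [hg]
      linarith
    refine ⟨a, (g xM + g xm)/2, ha, fun x hx => ?_⟩
    have h1 : g x ≤ g xM := hMax x hx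
    have h2 : g xm ≤ g x := hMin x hx
    have h3 : u₀ x - ((∑ i, a i * u i x) + (g xM + g xm)/2) = g x - (g xM + g xm)/2 := by
      simp only [hg]
      ring
    rw [h3, abs_le]
    constructor <;> linarith
  · rintro ⟨a, b, ha, hw⟩ x hx y hy hxy
    have hsum : ∑ i, a i * u i y ≤ ∑ i, a i * u i x :=
      Finset.sum_le_sum fun i _ => mul_le_mul_of_nonneg_left (hxy i) (ha i)
    have h1 := abs_le.mp (hw x hx)
    have h2 := abs_le.mp (hw y hy)
    linarith [h1.1, h1.2, h2.1, h2.2]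
end core
end

section
/- Let ε ≥ 0 and let (X, u₀, {u₁,…,u_N}) be a setting with vN-M utilities (no topological assumptions). The following are equivalent: (i) the pair (u₀, {u₁,…,u_N}) satisfies ε-Semistrong Pareto; (ii) there exists a utilitarian aggregator w ∈ W₊ with ‖u₀ − w‖∞ ≤ ε/2. -/
open Finset Pointwise

private lemma delta_le {A B k : ℝ} (h : ∀ δ : ℝ, 0 < δ → A + δ * k ≤ B) : A ≤ B := by
  by_contra hc
  push_neg at hc
  rcases le_or_gt 0 k with hk | hk
  · have h1 := h 1 one_pos
    nlinarith
  · have hδ : 0 < (A - B) / (2 * (-k)) := div_pos (by linarith) (by linarith)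
    have h2 := h _ hδ
    have h3 : (A - B) / (2 * (-k)) * k = -(A - B) / 2 := by
      have hk0 : k ≠ 0 := ne_of_lt hk
      field_simp
    rw [h3] at h2
    linarith

private lemma nonpos_of_affine {p c q : ℝ} (h : ∀ M : ℝ, 0 ≤ M → p + M * q ≤ c) : q ≤ 0 := by
  by_contra hq
  push_neg at hq
  have h0 := h 0 le_rfl
  have hM : (0:ℝ) ≤ (c - p + 1) / q := div_nonneg (by linarith) hq.le
  have h1 := h _ hM
  rw [div_mul_cancel₀ _ (ne_of_gt hq)] at h1
  linarith

private lemma combo_lt_s6 {z z' a a' la lb : ℝ} (h1 : a < z) (h2 : a' < z')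
    (hla : 0 ≤ la) (hlb : 0 ≤ lb) (hs : la + lb = 1) :
    la * a + lb * a' < la * z + lb * z' := by
  rcases eq_or_lt_of_le hla with h | h
  · have : lb = 1 := by linarith
    simp [← h, this]
    exact h2
  · exact add_lt_add_of_lt_of_le (mul_lt_mul_of_pos_left h1 h)
      (mul_le_mul_of_nonneg_left h2.le hlb)

/-- Separation of a convex set from the origin in `(Fin k → ℝ) × ℝ`. -/
private lemma sep0 {k : ℕ} (C : Set ((Fin k → ℝ) × ℝ)) (hC : Convex ℝ C)
    (h0 : (0 : (Fin k → ℝ) × ℝ) ∉ C) :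
    ∃ φ : (Fin k → ℝ) × ℝ, φ ≠ 0 ∧ ∀ c ∈ C, (∑ i, φ.1 i * c.1 i) + φ.2 * c.2 ≤ 0 := by
  classical
  set pr : ((Fin k → ℝ) × ℝ) → ((Fin k → ℝ) × ℝ) → ℝ :=
    fun f p => (∑ i, f.1 i * p.1 i) + f.2 * p.2 with hpr
  have prcont : ∀ c, Continuous fun f => pr f c := by
    intro c
    apply Continuous.add
    · exact continuous_finset_sum _ fun i _ =>
        ((continuous_apply i).comp continuous_fst).mul continuous_const
    · exact continuous_snd.mul continuous_const
  have hone : ((0 : Fin k → ℝ), (1:ℝ)) ∈ Metric.sphere (0 : (Fin k → ℝ) × ℝ) 1 := by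
    simp [Prod.norm_def]
  have key : (Metric.sphere (0 : (Fin k → ℝ) × ℝ) 1 ∩ ⋂ (c : ↥C), {f | pr f ↑c ≤ 0}).Nonempty := by
    by_contra hemp
    rw [Set.not_nonempty_iff_eq_empty] at hemp
    obtain ⟨u, hu⟩ := (isCompact_sphere (0 : (Fin k → ℝ) × ℝ) 1).elim_finite_subfamily_closed
      (fun c : ↥C => {f | pr f ↑c ≤ 0})
      (fun c => isClosed_le (prcont _) continuous_const) hemp
    rcases u.eq_empty_or_nonempty with rfl | ⟨c₀, hc₀⟩
    · have hmem : ((0 : Fin k → ℝ), (1:ℝ)) ∈ (∅ : Set ((Fin k → ℝ) × ℝ)) := by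
        rw [← hu]
        exact ⟨hone, by simp⟩
      simpa using hmem
    · -- separate 0 from the convex hull of the points of `u`
      set Z : Set ((Fin k → ℝ) × ℝ) := ↑(u.image (fun c : ↥C => (c : (Fin k → ℝ) × ℝ))) with hZ
      have hZC : Z ⊆ C := by
        intro z hz
        simp only [hZ, Finset.coe_image, Set.mem_image, Finset.mem_coe] at hz
        obtain ⟨c, _, rfl⟩ := hz
        exact c.2
      have hcomp : IsCompact (convexHull ℝ Z) := (u.image _).finite_toSet.isCompact_convexHull (𝕜 := ℝ)
      have hconv : Convex ℝ (convexHull ℝ Z) := convex_convexHull ℝ Z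
      have hdisj : Disjoint (convexHull ℝ Z) {(0 : (Fin k → ℝ) × ℝ)} := by
        rw [Set.disjoint_singleton_right]
        intro h0'
        exact h0 (convexHull_min hZC hC h0')
      obtain ⟨f, u₁, v₁, hfS, huv, hfT⟩ := geometric_hahn_banach_compact_closed hconv hcomp
        (convex_singleton _) isClosed_singleton hdisj
      have hv₁ : v₁ < 0 := by simpa using hfT 0 rfl
      set wf : Fin k → ℝ := fun i => f ((Pi.single i 1 : Fin k → ℝ), (0:ℝ)) with hwf
      set βf : ℝ := f ((0 : Fin k → ℝ), (1:ℝ)) with hβf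
      have hid : ∀ p : (Fin k → ℝ) × ℝ, f p = (∑ i, p.1 i * wf i) + p.2 * βf := by
        intro p
        have hp : p = (∑ i, p.1 i • ((Pi.single i 1 : Fin k → ℝ), (0:ℝ)))
            + p.2 • ((0 : Fin k → ℝ), (1:ℝ)) := by
          refine Prod.ext ?_ ?_
          · simp only [Prod.fst_add, Prod.fst_sum, Prod.smul_fst, Prod.smul_snd, smul_zero,
              add_zero]
            funext j
            simp only [Finset.sum_apply, Pi.smul_apply, Pi.single_apply, smul_eq_mul,
              mul_ite, mul_one, mul_zero]
            rw [eq_comm, Finset.sum_ite_eq Finset.univ j fun i => p.1 i]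
            simp
          · simp [Prod.snd_sum]
        calc f p = f ((∑ i, p.1 i • ((Pi.single i 1 : Fin k → ℝ), (0:ℝ)))
            + p.2 • ((0 : Fin k → ℝ), (1:ℝ))) := by rw [← hp]
        _ = (∑ i, p.1 i * wf i) + p.2 * βf := by
            rw [map_add, map_sum, map_smul]
            simp only [smul_eq_mul]
            congr 1
            apply Finset.sum_congr rfl
            intro i _
            rw [map_smul, smul_eq_mul]
      have hz₀ : ((c₀ : (Fin k → ℝ) × ℝ)) ∈ Z := by
        simp only [hZ, Finset.coe_image, Set.mem_image, Finset.mem_coe]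
        exact ⟨c₀, hc₀, rfl⟩
      have hfneg : ∀ z ∈ Z, f z < 0 :=
        fun z hz => lt_trans (lt_trans (hfS z (subset_convexHull ℝ Z hz)) huv) hv₁
      have hwβne : ((wf, βf) : (Fin k → ℝ) × ℝ) ≠ 0 := by
        intro h
        have h2 := hid (c₀ : (Fin k → ℝ) × ℝ)
        have hw0 : wf = 0 := congrArg Prod.fst h
        have hb0 : βf = 0 := congrArg Prod.snd h
        rw [hw0, hb0] at h2
        simp at h2
        exact absurd h2 (ne_of_lt (hfneg _ hz₀))
      set r : ℝ := ‖((wf, βf) : (Fin k → ℝ) × ℝ)‖ with hr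
      have hrpos : 0 < r := norm_pos_iff.mpr hwβne
      set φ : (Fin k → ℝ) × ℝ := r⁻¹ • ((wf, βf) : (Fin k → ℝ) × ℝ) with hφ
      have hφs : φ ∈ Metric.sphere (0 : (Fin k → ℝ) × ℝ) 1 := by
        simp only [Metric.mem_sphere, dist_zero_right, hφ, norm_smul, norm_inv,
          Real.norm_eq_abs, abs_of_pos hrpos]
        field_simp
        exact hr.symm
      have hφle : ∀ c ∈ Z, pr φ c ≤ 0 := by
        intro c hc
        have : pr φ c = r⁻¹ * f c := by
          rw [hid c, hpr]
          simp only [hφ, Prod.smul_fst, Prod.smul_snd, Pi.smul_apply, smul_eq_mul]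
          rw [mul_add, Finset.mul_sum]
          congr 1
          · apply Finset.sum_congr rfl
            intro i _
            ring
          · ring
        rw [this]
        exact mul_nonpos_of_nonneg_of_nonpos (inv_nonneg.mpr hrpos.le) (hfneg c hc).le
      have hmem : φ ∈ Metric.sphere (0 : (Fin k → ℝ) × ℝ) 1 ∩ ⋂ c ∈ u, {f | pr f ↑c ≤ 0} := by
        refine ⟨hφs, ?_⟩
        simp only [Set.mem_iInter]
        intro c hcu
        exact hφle _ (by
          simp only [hZ, Finset.coe_image, Set.mem_image, Finset.mem_coe]
          exact ⟨c, hcu, rfl⟩)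
      rw [hu] at hmem
      simpa using hmem
  obtain ⟨φ, hφs, hφi⟩ := key
  refine ⟨φ, ?_, ?_⟩
  · intro h
    rw [h] at hφs
    simp at hφs
  · intro c hc
    exact Set.mem_iInter.mp hφi ⟨c, hc⟩

/-- Separation of two disjoint convex sets in `(Fin k → ℝ) × ℝ`. -/
private lemma sepPair {k : ℕ} {S T : Set ((Fin k → ℝ) × ℝ)} (hS : Convex ℝ S)
    (hT : Convex ℝ T) (hd : Disjoint S T) :
    ∃ φ : (Fin k → ℝ) × ℝ, φ ≠ 0 ∧ ∀ p ∈ S, ∀ q ∈ T,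
      (∑ i, φ.1 i * p.1 i) + φ.2 * p.2 ≤ (∑ i, φ.1 i * q.1 i) + φ.2 * q.2 := by
  have hC : Convex ℝ (S - T) := hS.sub hT
  have h0 : (0 : (Fin k → ℝ) × ℝ) ∉ S - T := by
    intro h
    obtain ⟨p, hp, q, hq, hpq⟩ := h
    have : p = q := by
      have := sub_eq_zero.mp hpq
      exact this
    rw [this] at hp
    exact Set.disjoint_left.mp hd hp hq
  obtain ⟨φ, hφ, hle⟩ := sep0 _ hC h0
  refine ⟨φ, hφ, ?_⟩
  intro p hp q hq
  have hmem : p - q ∈ S - T := ⟨p, hp, q, hq, rfl⟩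
  have := hle _ hmem
  have hexp : (∑ i, φ.1 i * (p - q).1 i) + φ.2 * (p - q).2
      = ((∑ i, φ.1 i * p.1 i) + φ.2 * p.2) - ((∑ i, φ.1 i * q.1 i) + φ.2 * q.2) := by
    simp only [Prod.fst_sub, Prod.snd_sub, Pi.sub_apply, mul_sub]
    rw [Finset.sum_sub_distrib]
    ring
  rw [hexp] at this
  linarith

private lemma gen {E : Type*} [AddCommGroup E] [Module ℝ E] (ε : ℝ) (X : Set E)
    (hXne : X.Nonempty) (hXconv : Convex ℝ X) (u₀ : E → ℝ)
    (haff₀ : ∀ x ∈ X, ∀ y ∈ X, ∀ l : ℝ, 0 ≤ l → l ≤ 1 →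
      u₀ (l • x + (1 - l) • y) = l * u₀ x + (1 - l) * u₀ y) :
    ∀ (n : ℕ) (v : Fin n → E → ℝ) (σ : Fin n → Bool),
      (∀ i, ∀ x ∈ X, ∀ y ∈ X, ∀ l : ℝ, 0 ≤ l → l ≤ 1 →
        v i (l • x + (1 - l) • y) = l * v i x + (1 - l) * v i y) →
      (∀ x ∈ X, ∀ y ∈ X,
        (∀ i, (σ i = true → v i y ≤ v i x) ∧ (σ i = false → v i y = v i x)) →
        u₀ y - ε ≤ u₀ x) →
      ∃ (a : Fin n → ℝ) (b : ℝ), (∀ i, σ i = true → 0 ≤ a i) ∧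
        ∀ x ∈ X, |u₀ x - ((∑ i, a i * v i x) + b)| ≤ ε / 2 := by
  intro n
  induction n with
  | zero =>
    intro v σ _ hP
    obtain ⟨x₀, hx₀⟩ := hXne
    have hpareto : ∀ x ∈ X, ∀ y ∈ X, u₀ y - ε ≤ u₀ x := by
      intro x hx y hy
      exact hP x hx y hy (fun i => i.elim0)
    have hbddA : BddAbove (u₀ '' X) := by
      refine ⟨u₀ x₀ + ε, ?_⟩
      rintro r ⟨y, hy, rfl⟩
      have := hpareto x₀ hx₀ y hy
      linarith
    have hbddB : BddBelow (u₀ '' X) := by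
      refine ⟨u₀ x₀ - ε, ?_⟩
      rintro r ⟨y, hy, rfl⟩
      have := hpareto y hy x₀ hx₀
      linarith
    have hneA : (u₀ '' X).Nonempty := ⟨u₀ x₀, x₀, hx₀, rfl⟩
    set M := sSup (u₀ '' X) with hM
    set m := sInf (u₀ '' X) with hm
    have hMm : M ≤ m + ε := by
      apply csSup_le hneA
      rintro r ⟨y, hy, rfl⟩
      have : u₀ y - ε ≤ m := by
        apply le_csInf hneA
        rintro r' ⟨x, hx, rfl⟩
        have := hpareto x hx y hy
        linarith
      linarith
    refine ⟨fun i => 0, (M + m) / 2, fun i => i.elim0, ?_⟩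
    intro x hx
    have h1 : u₀ x ≤ M := le_csSup hbddA ⟨x, hx, rfl⟩
    have h2 : m ≤ u₀ x := csInf_le hbddB ⟨x, hx, rfl⟩
    rw [abs_le]
    constructor <;> simp <;> linarith
  | succ n ih =>
    intro v σ haffv hP
    classical
    obtain ⟨x₀, hx₀⟩ := hXne
    set S : Set ((Fin (n+1) → ℝ) × ℝ) :=
      {p | ∃ x ∈ X, (∀ i, (σ i = true → v i x < p.1 i) ∧ (σ i = false → p.1 i = v i x)) ∧
        p.2 < u₀ x - ε/2} with hSdef
    set T : Set ((Fin (n+1) → ℝ) × ℝ) :=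
      {p | ∃ y ∈ X, (∀ i, (σ i = true → p.1 i ≤ v i y) ∧ (σ i = false → p.1 i = v i y)) ∧
        u₀ y + ε/2 ≤ p.2} with hTdef
    have hSconv : Convex ℝ S := by
      rintro p ⟨x, hx, hpc, hpt⟩ q ⟨y, hy, hqc, hqt⟩ la lb hla hlb hlab
      obtain rfl : lb = 1 - la := by linarith
      refine ⟨la • x + (1 - la) • y, hXconv hx hy hla hlb hlab, ?_, ?_⟩
      · intro i
        have hv := haffv i x hx y hy la hla (by linarith)
        constructor
        · intro hσ
          have h1 := (hpc i).1 hσ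
          have h2 := (hqc i).1 hσ
          rw [hv]
          have : (la • p + (1-la) • q).1 i = la * p.1 i + (1-la) * q.1 i := by
            simp [smul_eq_mul]
          rw [this]
          exact combo_lt_s6 h1 h2 hla hlb hlab
        · intro hσ
          have h1 := (hpc i).2 hσ
          have h2 := (hqc i).2 hσ
          rw [hv]
          have : (la • p + (1-la) • q).1 i = la * p.1 i + (1-la) * q.1 i := by
            simp [smul_eq_mul]
          rw [this, h1, h2]
      · have hu := haff₀ x hx y hy la hla (by linarith)
        have : (la • p + (1-la) • q).2 = la * p.2 + (1-la) * q.2 := by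
          simp [smul_eq_mul]
        rw [this, hu]
        have := combo_lt_s6 hpt hqt hla hlb hlab
        nlinarith [this]
    have hTconv : Convex ℝ T := by
      rintro p ⟨x, hx, hpc, hpt⟩ q ⟨y, hy, hqc, hqt⟩ la lb hla hlb hlab
      obtain rfl : lb = 1 - la := by linarith
      refine ⟨la • x + (1 - la) • y, hXconv hx hy hla hlb hlab, ?_, ?_⟩
      · intro i
        have hv := haffv i x hx y hy la hla (by linarith)
        constructor
        · intro hσ
          have h1 := (hpc i).1 hσ
          have h2 := (hqc i).1 hσ
          rw [hv]
          have : (la • p + (1-la) • q).1 i = la * p.1 i + (1-la) * q.1 i := by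
            simp [smul_eq_mul]
          rw [this]
          exact add_le_add (mul_le_mul_of_nonneg_left h1 hla)
            (mul_le_mul_of_nonneg_left h2 hlb)
        · intro hσ
          have h1 := (hpc i).2 hσ
          have h2 := (hqc i).2 hσ
          rw [hv]
          have : (la • p + (1-la) • q).1 i = la * p.1 i + (1-la) * q.1 i := by
            simp [smul_eq_mul]
          rw [this, h1, h2]
      · have hu := haff₀ x hx y hy la hla (by linarith)
        have he : (la • p + (1-la) • q).2 = la * p.2 + (1-la) * q.2 := by
          simp [smul_eq_mul]
        rw [he, hu]
        have := add_le_add (mul_le_mul_of_nonneg_left hpt hla)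
          (mul_le_mul_of_nonneg_left hqt hlb)
        nlinarith [this]
    have hdisj : Disjoint S T := by
      rw [Set.disjoint_left]
      rintro p ⟨x, hx, hpc, hpt⟩ ⟨y, hy, hqc, hqt⟩
      have hcomp : ∀ i, (σ i = true → v i x ≤ v i y) ∧ (σ i = false → v i x = v i y) := by
        intro i
        constructor
        · intro hσ
          exact le_trans ((hpc i).1 hσ).le ((hqc i).1 hσ)
        · intro hσ
          rw [← (hpc i).2 hσ, (hqc i).2 hσ]
      have := hP y hy x hx hcomp
      linarith
    obtain ⟨φ, hφne, hsep⟩ := sepPair hSconv hTconv hdisj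
    set w : Fin (n+1) → ℝ := φ.1 with hwdef
    set β : ℝ := φ.2 with hβdef
    set Φ : E → ℝ := fun x => ∑ i, w i * v i x with hΦdef
    -- membership helpers
    have hSmem : ∀ x ∈ X, ∀ g : Fin (n+1) → ℝ,
        (∀ i, (σ i = true → 0 < g i) ∧ (σ i = false → g i = 0)) →
        ∀ t : ℝ, t < u₀ x - ε/2 → (((fun i => v i x + g i) : Fin (n+1) → ℝ), t) ∈ S := by
      intro x hx g hg t ht
      refine ⟨x, hx, ?_, ht⟩
      intro i
      constructor
      · intro hσ
        have := (hg i).1 hσ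
        simp only
        linarith
      · intro hσ
        have := (hg i).2 hσ
        simp only [this, add_zero]
    have hTmem : ∀ y ∈ X, ∀ t : ℝ, u₀ y + ε/2 ≤ t →
        (((fun i => v i y) : Fin (n+1) → ℝ), t) ∈ T := by
      intro y hy t ht
      exact ⟨y, hy, fun i => ⟨fun _ => le_rfl, fun _ => rfl⟩, ht⟩
    -- pairing computation
    have hpair : ∀ x (g : Fin (n+1) → ℝ) (t : ℝ),
        (∑ i, w i * ((fun i => v i x + g i) i)) + β * t
          = Φ x + (∑ i, w i * g i) + β * t := by
      intro x g t
      simp only [hΦdef, mul_add, Finset.sum_add_distrib]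
    have hsum_ite : ∀ δ : ℝ, (∑ i, w i * (if σ i = true then δ else 0))
        = δ * ∑ i, (if σ i = true then w i else 0) := by
      intro δ
      rw [Finset.mul_sum]
      apply Finset.sum_congr rfl
      intro i _
      by_cases h : σ i = true <;> simp [h, mul_comm]
    -- the basic S point at x₀
    have hg₀ : ∀ i : Fin (n+1), (σ i = true → (0:ℝ) < (if σ i = true then 1 else 0)) ∧
        (σ i = false → (if σ i = true then (1:ℝ) else 0) = 0) := by
      intro i
      constructor <;> intro h <;> simp [h]
    have hβ : 0 ≤ β := by
      have hge : ∀ M : ℝ, 0 ≤ M →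
          ((∑ i, w i * (v i x₀ + if σ i = true then 1 else 0)) + β * (u₀ x₀ - ε/2 - 1))
            - (Φ x₀ + β * (u₀ x₀ + ε/2)) + M * (-β) ≤ 0 := by
        intro M hM
        have hsp := hSmem x₀ hx₀ (fun i => if σ i = true then 1 else 0) hg₀
          (u₀ x₀ - ε/2 - 1) (by linarith)
        have htp := hTmem x₀ hx₀ (u₀ x₀ + ε/2 + M) (by linarith)
        have := hsep _ hsp _ htp
        simp only at this
        have h2 : (∑ i, w i * v i x₀) + β * (u₀ x₀ + ε/2 + M) = Φ x₀ + β * (u₀ x₀ + ε/2) + M * β := by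
          rw [hΦdef]
          ring
        rw [h2] at this
        linarith
      have := nonpos_of_affine (p := ((∑ i, w i * (v i x₀ + if σ i = true then 1 else 0))
        + β * (u₀ x₀ - ε/2 - 1)) - (Φ x₀ + β * (u₀ x₀ + ε/2))) (c := 0) (q := -β)
        (by intro M hM; linarith [hge M hM])
      linarith
    have hwneg : ∀ i₀, σ i₀ = true → w i₀ ≤ 0 := by
      intro i₀ hσi₀
      have hge : ∀ M : ℝ, 0 ≤ M →
          (((∑ i, w i * (v i x₀ + ((if σ i = true then 1 else 0) + (if i = i₀ then 0 else 0))))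
            + β * (u₀ x₀ - ε/2 - 1)) - (Φ x₀ + β * (u₀ x₀ + ε/2))) + M * (w i₀) ≤ 0 := by
        intro M hM
        have hgOK : ∀ i : Fin (n+1),
            (σ i = true → (0:ℝ) < (if σ i = true then 1 else 0) + (if i = i₀ then M else 0)) ∧
            (σ i = false → ((if σ i = true then (1:ℝ) else 0) + (if i = i₀ then M else 0)) = 0) := by
          intro i
          constructor
          · intro h
            by_cases hi : i = i₀ <;> simp [h, hi, hσi₀] <;> linarith
          · intro h
            have hne : i ≠ i₀ := by
              intro he
              rw [he, hσi₀] at h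
              simp [he, hσi₀] at h
            simp [h, hne]
        have hsp := hSmem x₀ hx₀
          (fun i => (if σ i = true then 1 else 0) + (if i = i₀ then M else 0)) hgOK
          (u₀ x₀ - ε/2 - 1) (by linarith)
        have htp := hTmem x₀ hx₀ (u₀ x₀ + ε/2) (by linarith)
        have hle := hsep _ hsp _ htp
        simp only at hle
        have hs1 : (∑ i, w i * (v i x₀ + ((if σ i = true then 1 else 0) + (if i = i₀ then M else 0))))
            = (∑ i, w i * (v i x₀ + ((if σ i = true then 1 else 0) + (if i = i₀ then 0 else 0))))
              + M * w i₀ := by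
          simp only [mul_add, Finset.sum_add_distrib]
          have e1 : (∑ i, w i * (if i = i₀ then M else 0)) = w i₀ * M := by
            rw [Finset.sum_congr rfl (fun i _ => by
              rw [mul_ite, mul_zero] : ∀ i ∈ Finset.univ, w i * (if i = i₀ then M else 0) = if i = i₀ then w i * M else 0)]
            rw [Finset.sum_ite_eq' Finset.univ i₀ (fun i => w i * M)]
            simp
          have e2 : (∑ i, w i * (if i = i₀ then (0:ℝ) else 0)) = 0 := by
            simp
          rw [e1, e2]
          ring
        rw [hs1] at hle
        have h2 : (∑ i, w i * v i x₀) + β * (u₀ x₀ + ε/2) = Φ x₀ + β * (u₀ x₀ + ε/2) := by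
          rw [hΦdef]
        rw [h2] at hle
        linarith
      exact nonpos_of_affine (c := 0) hge
    have hkey : ∀ x ∈ X, ∀ y ∈ X,
        Φ x + β * (u₀ x - ε/2) ≤ Φ y + β * (u₀ y + ε/2) := by
      intro x hx y hy
      apply delta_le (k := (∑ i, (if σ i = true then w i else 0)) - β)
      intro δ hδ
      have hgOK : ∀ i : Fin (n+1), (σ i = true → (0:ℝ) < (if σ i = true then δ else 0)) ∧
          (σ i = false → (if σ i = true then (δ:ℝ) else 0) = 0) := by
        intro i
        constructor <;> intro h <;> simp [h, hδ]
      have hsp := hSmem x hx (fun i => if σ i = true then δ else 0) hgOK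
        (u₀ x - ε/2 - δ) (by linarith)
      have htp := hTmem y hy (u₀ y + ε/2) le_rfl
      have hle := hsep _ hsp _ htp
      simp only at hle
      have hs1 : (∑ i, w i * (v i x + if σ i = true then δ else 0)) + β * (u₀ x - ε/2 - δ)
          = (Φ x + β * (u₀ x - ε/2)) + δ * ((∑ i, (if σ i = true then w i else 0)) - β) := by
        simp only [mul_add, Finset.sum_add_distrib, hsum_ite δ, hΦdef]
        ring
      have hs2 : (∑ i, w i * v i y) + β * (u₀ y + ε/2) = Φ y + β * (u₀ y + ε/2) := by
        rw [hΦdef]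
      rw [hs1, hs2] at hle
      exact hle
    rcases eq_or_lt_of_le hβ with hβ0 | hβpos
    · -- degenerate case : β = 0, reduce the number of utilities
      have hwne : w ≠ 0 := by
        intro h
        apply hφne
        have : φ = (w, β) := rfl
        rw [this, h, ← hβ0]
        rfl
      obtain ⟨j₀, hj₀⟩ : ∃ j, w j ≠ 0 := Function.ne_iff.mp hwne
      have hΦconst : ∀ x ∈ X, Φ x = Φ x₀ := by
        intro x hx
        have h1 := hkey x hx x₀ hx₀
        have h2 := hkey x₀ hx₀ x hx
        rw [← hβ0] at h1 h2
        simp only [zero_mul, add_zero] at h1 h2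
        linarith
      set K : ℝ := Φ x₀ with hK
      set ι : Fin n → Fin (n+1) := j₀.succAbove with hι
      set σ' : Fin n → Bool := fun i => if w (ι i) = 0 then σ (ι i) else false with hσ'
      have hP' : ∀ x ∈ X, ∀ y ∈ X,
          (∀ i, (σ' i = true → v (ι i) y ≤ v (ι i) x) ∧ (σ' i = false → v (ι i) y = v (ι i) x)) →
          u₀ y - ε ≤ u₀ x := by
        intro x hx y hy H
        apply hP x hx y hy
        have hEq : ∀ i : Fin n, w (ι i) ≠ 0 → v (ι i) y = v (ι i) x := by
          intro i hw
          apply (H i).2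
          simp [hσ', hw]
        have hj₀eq : v j₀ y = v j₀ x := by
          have hx' : Φ x = K := hΦconst x hx
          have hy' : Φ y = K := hΦconst y hy
          simp only [hΦdef] at hx' hy'
          rw [Fin.sum_univ_succAbove (fun k => w k * v k x) j₀] at hx'
          rw [Fin.sum_univ_succAbove (fun k => w k * v k y) j₀] at hy'
          have hterm : (∑ i, w (ι i) * v (ι i) y) = (∑ i, w (ι i) * v (ι i) x) := by
            apply Finset.sum_congr rfl
            intro i _
            by_cases hw : w (ι i) = 0
            · rw [hw]; ring
            · rw [hEq i hw]
          have : w j₀ * v j₀ y = w j₀ * v j₀ x := by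
            simp only [hι] at hterm ⊢
            linarith [hx', hy', hterm]
          exact mul_left_cancel₀ hj₀ this
        intro k
        by_cases hk : k = j₀
        · subst hk
          exact ⟨fun _ => le_of_eq hj₀eq, fun _ => hj₀eq⟩
        · obtain ⟨i, hi⟩ := Fin.exists_succAbove_eq hk
          have hi' : ι i = k := hi
          rw [← hi']
          constructor
          · intro hσ
            by_cases hw : w (ι i) = 0
            · exact (H i).1 (by simp [hσ', hw, hσ])
            · exact le_of_eq (hEq i hw)
          · intro hσ
            by_cases hw : w (ι i) = 0
            · exact (H i).2 (by simp [hσ', hw, hσ])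
            · exact hEq i hw
      obtain ⟨a', b', hsign', hbound'⟩ := ih (fun i => v (ι i)) σ'
        (fun i => haffv (ι i)) hP'
      -- choose the shift s
      set bnds : Fin n → ℝ := fun i =>
        if σ (ι i) = true ∧ w (ι i) ≠ 0 then a' i / (-(w (ι i))) else 0 with hbnds
      set s : ℝ := (insert (0:ℝ) (Finset.image bnds Finset.univ)).min'
        (Finset.insert_nonempty _ _) with hs
      have hs0 : s ≤ 0 := Finset.min'_le _ _ (Finset.mem_insert_self _ _)
      have hsb : ∀ i, s ≤ bnds i := fun i => Finset.min'_le _ _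
        (Finset.mem_insert_of_mem (Finset.mem_image_of_mem _ (Finset.mem_univ i)))
      -- assemble the coefficients
      set A : Fin (n+1) → ℝ := fun k =>
        if h : k = j₀ then 0 else a' (Fin.exists_succAbove_eq h).choose with hA
      have hAι : ∀ i : Fin n, A (ι i) = a' i := by
        intro i
        have hne : ι i ≠ j₀ := Fin.succAbove_ne j₀ i
        show (if h : ι i = j₀ then 0 else a' (Fin.exists_succAbove_eq h).choose) = a' i
        rw [dif_neg hne]
        congr 1
        exact Fin.succAbove_right_injective (Fin.exists_succAbove_eq hne).choose_spec
      have hAj₀ : A j₀ = 0 := by simp [hA]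
      refine ⟨fun k => A k + s * w k, b' - s * K, ?_, ?_⟩
      · intro k hσk
        show 0 ≤ A k + s * w k
        by_cases hk : k = j₀
        · rw [hk, hAj₀, zero_add]
          have hwj₀ : w j₀ < 0 := lt_of_le_of_ne (hwneg j₀ (hk ▸ hσk)) hj₀
          have := mul_nonneg (neg_nonneg.mpr hs0) (neg_nonneg.mpr hwj₀.le)
          nlinarith
        · obtain ⟨i, hi⟩ := Fin.exists_succAbove_eq hk
          have hi' : ι i = k := hi
          subst hi'
          rw [hAι i]
          by_cases hw : w (ι i) = 0
          · rw [hw, mul_zero, add_zero]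
            apply hsign' i
            simp [hσ', hw, hσk]
          · have hwlt : w (ι i) < 0 := lt_of_le_of_ne (hwneg (ι i) hσk) hw
            have hb := hsb i
            simp only [hbnds] at hb
            rw [if_pos ⟨hσk, hw⟩] at hb
            have h3 := (le_div_iff₀ (by linarith : (0:ℝ) < -(w (ι i)))).mp hb
            nlinarith
      · intro x hx
        show |u₀ x - ((∑ k, (A k + s * w k) * v k x) + (b' - s * K))| ≤ ε / 2
        have e1 : (∑ k, (A k + s * w k) * v k x)
            = (∑ k, A k * v k x) + s * (∑ k, w k * v k x) := by
          rw [Finset.mul_sum, ← Finset.sum_add_distrib]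
          apply Finset.sum_congr rfl
          intro i _
          ring
        have e2 : (∑ k, A k * v k x) = ∑ i, a' i * v (ι i) x := by
          rw [Fin.sum_univ_succAbove (fun k => A k * v k x) j₀, hAj₀, zero_mul, zero_add]
          apply Finset.sum_congr rfl
          intro i _
          rw [show j₀.succAbove i = ι i from rfl, hAι i]
        have e3 : (∑ k, w k * v k x) = K := by
          rw [hK]
          exact hΦconst x hx
        have hsum : (∑ k, (A k + s * w k) * v k x) + (b' - s * K)
            = (∑ i, a' i * v (ι i) x) + b' := by
          rw [e1, e2, e3]
          ring
        rw [hsum]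
        exact hbound' x hx
    · -- nondegenerate case : β > 0
      set c : ℝ := sSup ((fun x => Φ x + β * (u₀ x - ε/2)) '' X) with hc
      have hbdd : BddAbove ((fun x => Φ x + β * (u₀ x - ε/2)) '' X) := by
        refine ⟨Φ x₀ + β * (u₀ x₀ + ε/2), ?_⟩
        rintro r ⟨x, hx, rfl⟩
        exact hkey x hx x₀ hx₀
      have hne : ((fun x => Φ x + β * (u₀ x - ε/2)) '' X).Nonempty := ⟨_, x₀, hx₀, rfl⟩
      have hc1 : ∀ x ∈ X, Φ x + β * (u₀ x - ε/2) ≤ c := fun x hx => le_csSup hbdd ⟨x, hx, rfl⟩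
      have hc2 : ∀ x ∈ X, c ≤ Φ x + β * (u₀ x + ε/2) := by
        intro x hx
        apply csSup_le hne
        rintro r ⟨y, hy, rfl⟩
        exact hkey y hy x hx
      refine ⟨fun i => -(w i) / β, c / β, ?_, ?_⟩
      · intro i hσi
        exact div_nonneg (neg_nonneg.mpr (hwneg i hσi)) hβpos.le
      · intro x hx
        show |u₀ x - ((∑ i, -(w i) / β * v i x) + c / β)| ≤ ε / 2
        have hsum : (∑ i, -(w i) / β * v i x) = -(Φ x) / β := by
          have e : (∑ i, -(w i) / β * v i x) = (-(∑ i, w i * v i x)) / β := by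
            rw [← Finset.sum_neg_distrib, Finset.sum_div]
            apply Finset.sum_congr rfl
            intro i _
            ring
          rw [e]
        rw [hsum, abs_le]
        have h1 := hc1 x hx
        have h2 := hc2 x hx
        have hq1 : (u₀ x - ε/2) ≤ (c - Φ x)/β := by
          rw [le_div_iff₀ hβpos]
          nlinarith
        have hq2 : (c - Φ x)/β ≤ u₀ x + ε/2 := by
          rw [div_le_iff₀ hβpos]
          nlinarith
        have he : -(Φ x)/β + c/β = (c - Φ x)/β := by ring
        rw [he]
        constructor
        · linarith
        · linarith


/-- Theorem: aggregation with `ε`-Semistrong Pareto, general case.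
Let `ε ≥ 0` and let `(X, u₀, {u₁,…,u_N})` be a setting with vN-M utilities (no
topological assumptions).  Then `ε`-Semistrong Pareto holds iff there is a utilitarian
aggregator `w = Σᵢ aᵢ uᵢ + b` with all `aᵢ ≥ 0` and `‖u₀ − w‖∞ ≤ ε/2`. -/
theorem stmt6 {E : Type*} [AddCommGroup E] [Module ℝ E]
    {N : ℕ} (hN : 1 ≤ N) {ε : ℝ} (hε : 0 ≤ ε)
    (X : Set E) (hXne : X.Nonempty) (hXconv : Convex ℝ X)
    (u₀ : E → ℝ) (u : Fin N → E → ℝ)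
    (haff₀ : ∀ x ∈ X, ∀ y ∈ X, ∀ l : ℝ, 0 ≤ l → l ≤ 1 →
      u₀ (l • x + (1 - l) • y) = l * u₀ x + (1 - l) * u₀ y)
    (haff : ∀ i : Fin N, ∀ x ∈ X, ∀ y ∈ X, ∀ l : ℝ, 0 ≤ l → l ≤ 1 →
      u i (l • x + (1 - l) • y) = l * u i x + (1 - l) * u i y) :
    (∀ x ∈ X, ∀ y ∈ X, (∀ i, u i y ≤ u i x) → u₀ y - ε ≤ u₀ x) ↔
      (∃ (a : Fin N → ℝ) (b : ℝ), (∀ i, 0 ≤ a i) ∧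
        ∀ x ∈ X, |u₀ x - ((∑ i, a i * u i x) + b)| ≤ ε / 2) := by
  constructor
  · intro hpar
    obtain ⟨a, b, hsign, hbound⟩ := gen ε X hXne hXconv u₀ haff₀ N u (fun _ => true) haff
      (fun x hx y hy H => hpar x hx y hy (fun i => (H i).1 rfl))
    exact ⟨a, b, fun i => hsign i rfl, hbound⟩
  · rintro ⟨a, b, hsign, hbound⟩ x hx y hy hcomp
    have hw : (∑ i, a i * u i y) ≤ ∑ i, a i * u i x :=
      Finset.sum_le_sum fun i _ => mul_le_mul_of_nonneg_left (hcomp i) (hsign i)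
    have h1 := abs_le.mp (hbound x hx)
    have h2 := abs_le.mp (hbound y hy)
    linarith [h1.1, h2.2]
end

section
/- Let ε ≥ 0 and let (X, u₀, {u₁,…,u_N}) be a setting with vN-M utilities. The following are equivalent: (i) the pair (u₀, {u₁,…,u_N}) satisfies ε-Pareto Indifference; (ii) there exists a utilitarian aggregator w ∈ W with ‖u₀ − w‖∞ ≤ ε/2. -/
open Submodule

/-- Ambient space for the Riesz-extension argument. -/
abbrev stmt8FF (N : ℕ) : Type := ((Fin N → ℝ) × ℝ) × ℝ

/-- The convex cone generated by the epigraph of `u₀ + ε/2` (homogenized at level `1`)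
and minus the hypograph of `u₀ - ε/2` (homogenized at level `-1`). -/
def stmt8K {N : ℕ} (ε : ℝ) (T : Set ((Fin N → ℝ) × ℝ)) : Set (stmt8FF N) :=
  {z | ∃ l m : ℝ, ∃ p q : (Fin N → ℝ) × ℝ, ∃ t₁ t₂ : ℝ,
    p ∈ T ∧ q ∈ T ∧ 0 ≤ l ∧ 0 ≤ m ∧ p.2 + ε / 2 ≤ t₁ ∧ t₂ ≤ q.2 - ε / 2 ∧
    z = l • (((p.1, 1), t₁) : stmt8FF N) + m • ((-q.1, -1), -t₂)}

lemma stmt8comb {N : ℕ} {ε : ℝ} {T : Set ((Fin N → ℝ) × ℝ)} (hconv : Convex ℝ T)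
    {l₁ l₂ : ℝ} {p₁ p₂ : (Fin N → ℝ) × ℝ} (t₁ t₂ : ℝ)
    (hp₁ : p₁ ∈ T) (hp₂ : p₂ ∈ T) (hl₁ : 0 ≤ l₁) (hl₂ : 0 ≤ l₂) :
    ∃ l : ℝ, ∃ p, ∃ t : ℝ, 0 ≤ l ∧ p ∈ T ∧
      (p₁.2 + ε / 2 ≤ t₁ → p₂.2 + ε / 2 ≤ t₂ → p.2 + ε / 2 ≤ t) ∧
      (t₁ ≤ p₁.2 - ε / 2 → t₂ ≤ p₂.2 - ε / 2 → t ≤ p.2 - ε / 2) ∧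
      l₁ • (((p₁.1, 1), t₁) : stmt8FF N) + l₂ • ((p₂.1, 1), t₂) = l • ((p.1, 1), t) := by
  rcases eq_or_lt_of_le (add_nonneg hl₁ hl₂) with h0 | hs
  · have h1 : l₁ = 0 := by linarith
    have h2 : l₂ = 0 := by linarith
    exact ⟨0, p₁, t₁, le_refl _, hp₁, fun h _ => h, fun h _ => h, by simp [h1, h2]⟩
  · have hsne : l₁ + l₂ ≠ 0 := ne_of_gt hs
    have hmem : (l₁ / (l₁ + l₂)) • p₁ + (l₂ / (l₁ + l₂)) • p₂ ∈ T :=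
      hconv hp₁ hp₂ (div_nonneg hl₁ hs.le) (div_nonneg hl₂ hs.le) (by field_simp)
    have hsnd : ((l₁ / (l₁ + l₂)) • p₁ + (l₂ / (l₁ + l₂)) • p₂).2
        = l₁ / (l₁ + l₂) * p₁.2 + l₂ / (l₁ + l₂) * p₂.2 := by
      simp [smul_eq_mul]
    refine ⟨l₁ + l₂, (l₁ / (l₁ + l₂)) • p₁ + (l₂ / (l₁ + l₂)) • p₂,
      (l₁ * t₁ + l₂ * t₂) / (l₁ + l₂), hs.le, hmem, ?_, ?_, ?_⟩
    · intro hb₁ hb₂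
      rw [hsnd, ← sub_nonneg]
      have k1 : l₁ * (p₁.2 + ε / 2) ≤ l₁ * t₁ := mul_le_mul_of_nonneg_left hb₁ hl₁
      have k2 : l₂ * (p₂.2 + ε / 2) ≤ l₂ * t₂ := mul_le_mul_of_nonneg_left hb₂ hl₂
      have : (l₁ * t₁ + l₂ * t₂) / (l₁ + l₂)
          - (l₁ / (l₁ + l₂) * p₁.2 + l₂ / (l₁ + l₂) * p₂.2 + ε / 2)
          = ((l₁ * t₁ - l₁ * (p₁.2 + ε/2)) + (l₂ * t₂ - l₂ * (p₂.2 + ε/2))) / (l₁ + l₂) := by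
        field_simp
        ring
      rw [this]
      exact div_nonneg (by linarith) hs.le
    · intro hb₁ hb₂
      rw [hsnd, ← sub_nonneg]
      have k1 : l₁ * t₁ ≤ l₁ * (p₁.2 - ε / 2) := mul_le_mul_of_nonneg_left hb₁ hl₁
      have k2 : l₂ * t₂ ≤ l₂ * (p₂.2 - ε / 2) := mul_le_mul_of_nonneg_left hb₂ hl₂
      have : (l₁ / (l₁ + l₂) * p₁.2 + l₂ / (l₁ + l₂) * p₂.2 - ε / 2)
          - (l₁ * t₁ + l₂ * t₂) / (l₁ + l₂)
          = ((l₁ * (p₁.2 - ε/2) - l₁ * t₁) + (l₂ * (p₂.2 - ε/2) - l₂ * t₂)) / (l₁ + l₂) := by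
        field_simp
        ring
      rw [this]
      exact div_nonneg (by linarith) hs.le
    · simp only [Prod.ext_iff, Prod.fst_add, Prod.snd_add, Prod.smul_fst, Prod.smul_snd,
        smul_eq_mul]
      refine ⟨⟨?_, by ring⟩, by field_simp⟩
      funext i
      simp only [Prod.fst_add, Prod.smul_fst, Pi.add_apply, Pi.smul_apply, smul_eq_mul]
      field_simp

lemma stmt8K_zero {N : ℕ} {ε : ℝ} {T : Set ((Fin N → ℝ) × ℝ)} (hT : T.Nonempty) :
    (0 : stmt8FF N) ∈ stmt8K ε T := by
  obtain ⟨p₀, hp₀⟩ := hT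
  exact ⟨0, 0, p₀, p₀, p₀.2 + ε / 2, p₀.2 - ε / 2, hp₀, hp₀, le_refl _, le_refl _,
    le_refl _, le_refl _, by simp⟩

lemma stmt8K_smul {N : ℕ} {ε : ℝ} {T : Set ((Fin N → ℝ) × ℝ)} {c : ℝ} (hc : 0 < c)
    {z : stmt8FF N} (hz : z ∈ stmt8K ε T) : c • z ∈ stmt8K ε T := by
  obtain ⟨l, m, p, q, t₁, t₂, hp, hq, hl, hm, h1, h2, rfl⟩ := hz
  exact ⟨c * l, c * m, p, q, t₁, t₂, hp, hq, by positivity, by positivity, h1, h2, by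
    rw [smul_add, smul_smul, smul_smul]⟩

lemma stmt8K_add {N : ℕ} {ε : ℝ} {T : Set ((Fin N → ℝ) × ℝ)} (hconv : Convex ℝ T)
    {z₁ z₂ : stmt8FF N} (hz₁ : z₁ ∈ stmt8K ε T) (hz₂ : z₂ ∈ stmt8K ε T) :
    z₁ + z₂ ∈ stmt8K ε T := by
  obtain ⟨l₁, m₁, p₁, q₁, t₁, s₁, hp₁, hq₁, hl₁, hm₁, ht₁, hs₁, rfl⟩ := hz₁
  obtain ⟨l₂, m₂, p₂, q₂, t₂, s₂, hp₂, hq₂, hl₂, hm₂, ht₂, hs₂, rfl⟩ := hz₂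
  obtain ⟨l, p, t, hl, hp, hb, -, heq⟩ := stmt8comb hconv t₁ t₂ hp₁ hp₂ hl₁ hl₂
  obtain ⟨m, q, s, hm, hq, -, hb', heq'⟩ := stmt8comb hconv s₁ s₂ hq₁ hq₂ hm₁ hm₂
  refine ⟨l, m, p, q, t, s, hp, hq, hl, hm, hb ht₁ ht₂, hb' hs₁ hs₂, ?_⟩
  have hneg : ∀ (q : (Fin N → ℝ) × ℝ) (s : ℝ),
      (((-q.1, -1), -s) : stmt8FF N) = -((q.1, 1), s) := by
    intro q s; rfl
  calc l₁ • (((p₁.1, 1), t₁) : stmt8FF N) + m₁ • ((-q₁.1, -1), -s₁)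
        + (l₂ • (((p₂.1, 1), t₂) : stmt8FF N) + m₂ • ((-q₂.1, -1), -s₂))
      = (l₁ • (((p₁.1, 1), t₁) : stmt8FF N) + l₂ • ((p₂.1, 1), t₂))
        + (m₁ • (((-q₁.1, -1), -s₁) : stmt8FF N) + m₂ • ((-q₂.1, -1), -s₂)) := by
        abel
    _ = l • (((p.1, 1), t) : stmt8FF N) + m • ((-q.1, -1), -s) := by
        rw [heq, hneg, hneg, hneg, smul_neg, smul_neg, smul_neg, ← neg_add, heq']

lemma stmt8K_negfst {N : ℕ} {ε : ℝ} {T : Set ((Fin N → ℝ) × ℝ)}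
    {σ : (Fin N → ℝ) × ℝ} {t : ℝ} (hz : ((σ, t) : stmt8FF N) ∈ stmt8K ε T) :
    ∃ t' : ℝ, ((-σ, t') : stmt8FF N) ∈ stmt8K ε T := by
  obtain ⟨l, m, p, q, t₁, t₂, hp, hq, hl, hm, h1, h2, hrep⟩ := hz
  refine ⟨m * (q.2 + ε / 2) + l * (-(p.2 - ε / 2)),
    m, l, q, p, q.2 + ε / 2, p.2 - ε / 2, hq, hp, hm, hl, le_refl _, le_refl _, ?_⟩
  have hσ : σ = l • ((p.1, 1) : (Fin N → ℝ) × ℝ) + m • (-q.1, -1) := congrArg Prod.fst hrep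
  refine Prod.ext ?_ ?_
  · show -σ = m • ((q.1, 1) : (Fin N → ℝ) × ℝ) + l • (-p.1, -1)
    rw [hσ]
    refine Prod.ext ?_ ?_
    · show -(l • p.1 + m • (-q.1)) = m • q.1 + l • (-p.1)
      funext i
      simp only [Pi.neg_apply, Pi.add_apply, Pi.smul_apply, Pi.neg_apply, smul_eq_mul]
      ring
    · show -(l • (1:ℝ) + m • (-1 : ℝ)) = m • (1:ℝ) + l • (-1 : ℝ)
      simp only [smul_eq_mul]; ring
  · show m * (q.2 + ε / 2) + l * (-(p.2 - ε / 2))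
      = m • (q.2 + ε / 2) + l • (-(p.2 - ε / 2))
    simp only [smul_eq_mul]

lemma stmt8K_third {N : ℕ} {ε : ℝ} {T : Set ((Fin N → ℝ) × ℝ)}
    (hpar : ∀ p ∈ T, ∀ q ∈ T, p.1 = q.1 → p.2 - ε ≤ q.2) {c : ℝ}
    (hz : ((0, c) : stmt8FF N) ∈ stmt8K ε T) : 0 ≤ c := by
  obtain ⟨l, m, p, q, t₁, t₂, hp, hq, hl, hm, h1, h2, hrep⟩ := hz
  have hfst : (0 : (Fin N → ℝ) × ℝ) = l • ((p.1, 1) : (Fin N → ℝ) × ℝ) + m • (-q.1, -1) :=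
    congrArg Prod.fst hrep
  have hc : c = l * t₁ + m * (-t₂) := congrArg Prod.snd hrep
  have hlm : l = m := by
    have := congrArg Prod.snd hfst
    simp only [Prod.snd_zero, Prod.snd_add, Prod.smul_snd, smul_eq_mul] at this
    linarith
  rcases eq_or_lt_of_le hl with h0 | hlpos
  · rw [hc, ← h0, ← hlm, ← h0]; ring_nf; exact le_refl _
  · have hfst1 : (0 : Fin N → ℝ) = l • p.1 + m • (-q.1) := congrArg Prod.fst hfst
    have hpq : p.1 = q.1 := by
      funext i
      have := congrFun hfst1 i
      simp only [Pi.zero_apply, Pi.add_apply, Pi.smul_apply, Pi.neg_apply, smul_eq_mul] at this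
      have hml : m = l := hlm.symm
      rw [hml] at this
      have : l * (p.1 i - q.1 i) = 0 := by linarith
      rcases mul_eq_zero.mp this with h | h
      · exact absurd h (ne_of_gt hlpos)
      · linarith
    have hqp : q.2 - ε ≤ p.2 := hpar q hq p hp hpq.symm
    have : t₂ ≤ t₁ := by linarith
    rw [hc, ← hlm]
    nlinarith

lemma stmt8key {N : ℕ} {ε : ℝ} {T : Set ((Fin N → ℝ) × ℝ)}
    (hTne : T.Nonempty) (hconv : Convex ℝ T)
    (hpar : ∀ p ∈ T, ∀ q ∈ T, p.1 = q.1 → p.2 - ε ≤ q.2) :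
    ∃ (a : Fin N → ℝ) (b : ℝ), ∀ p ∈ T, |p.2 - ((∑ i, a i * p.1 i) + b)| ≤ ε / 2 := by
  classical
  set S : Submodule ℝ ((Fin N → ℝ) × ℝ) := Submodule.span ℝ (Prod.fst '' stmt8K ε T) with hS
  obtain ⟨V, hV⟩ := S.exists_isCompl
  set KV : Set (stmt8FF N) := {z | ∃ k ∈ stmt8K ε T, ∃ w ∈ V, z = k + (w, 0)} with hKVdef
  have hKV_smul : ∀ c : ℝ, 0 < c → ∀ z ∈ KV, c • z ∈ KV := by
    rintro c hc z ⟨k, hk, w, hw, rfl⟩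
    exact ⟨c • k, stmt8K_smul hc hk, c • w, V.smul_mem c hw, by
      rw [smul_add]; congr 1; exact Prod.ext rfl (smul_zero c)⟩
  have hKV_add : ∀ {z₁ z₂ : stmt8FF N}, z₁ ∈ KV → z₂ ∈ KV → z₁ + z₂ ∈ KV := by
    rintro z₁ z₂ ⟨k₁, hk₁, w₁, hw₁, rfl⟩ ⟨k₂, hk₂, w₂, hw₂, rfl⟩
    refine ⟨k₁ + k₂, stmt8K_add hconv hk₁ hk₂, w₁ + w₂, V.add_mem hw₁ hw₂, ?_⟩
    have : ((w₁ + w₂ : (Fin N → ℝ) × ℝ), (0:ℝ)) = (w₁, (0:ℝ)) + (w₂, 0) :=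
      Prod.ext rfl (by rw [Prod.snd_add]; norm_num)
    rw [this]; abel
  set Kh : ConvexCone ℝ (stmt8FF N) :=
    { carrier := KV
      smul_mem' := fun c hc z hz => hKV_smul c hc z hz
      add_mem' := fun _ h₁ _ h₂ => hKV_add h₁ h₂ } with hKh
  set e : stmt8FF N := ((0, 0), 1) with he_def
  have he : e ≠ 0 := by
    intro h
    have := congrArg Prod.snd h
    simp [he_def] at this
  set f : stmt8FF N →ₗ.[ℝ] ℝ := LinearPMap.mkSpanSingleton e 1 he with hf
  have nonneg : ∀ x : f.domain, (x : stmt8FF N) ∈ Kh → 0 ≤ f x := by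
    rintro ⟨xv, hxv⟩ hx
    obtain ⟨c, hc⟩ := Submodule.mem_span_singleton.mp hxv
    subst hc
    have hfx : f ⟨c • e, hxv⟩ = c := by
      have h := LinearPMap.mkSpanSingleton'_apply (σ := RingHom.id ℝ) e (1:ℝ)
        (fun c' hc' => by
          rcases smul_eq_zero.1 hc' with h0 | h0
          · simp [h0]
          · exact absurd h0 he) c hxv
      simp only [smul_eq_mul, mul_one] at h
      exact h
    rw [hfx]
    have hx'' : c • e ∈ KV := hx
    obtain ⟨k, hk, w, hw, hrep⟩ := hx''
    have hfst : k.1 + w = 0 := by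
      have h := congrArg Prod.fst hrep
      simp only [he_def, Prod.smul_mk, Prod.fst_add, smul_zero] at h
      exact h.symm
    have hk1S : k.1 ∈ S := Submodule.subset_span ⟨k, hk, rfl⟩
    have hk1V : k.1 ∈ V := by
      rw [eq_neg_of_add_eq_zero_left hfst]; exact V.neg_mem hw
    have hk10 : k.1 = 0 := Submodule.disjoint_def.mp hV.disjoint k.1 hk1S hk1V
    have hw0 : w = 0 := by
      have := hfst; rw [hk10, zero_add] at this; exact this
    have hkeq : k = ((0, c) : stmt8FF N) := by
      rw [hw0] at hrep
      have : (((0 : (Fin N → ℝ) × ℝ), (0:ℝ)) : stmt8FF N) = 0 := rfl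
      rw [this, add_zero] at hrep
      rw [← hrep, he_def, Prod.smul_mk, Prod.smul_mk, smul_zero, smul_zero, smul_eq_mul, mul_one,
        Prod.mk_zero_zero]
    exact stmt8K_third hpar (hkeq ▸ hk)
  have hQ : ∀ σ ∈ S, ∃ t : ℝ, ((σ, t) : stmt8FF N) ∈ stmt8K ε T := by
    intro σ hσ
    refine Submodule.span_induction ?_ ?_ ?_ ?_ hσ
    · rintro x ⟨k, hk, rfl⟩
      exact ⟨k.2, by simpa using hk⟩
    · exact ⟨0, stmt8K_zero hTne⟩
    · rintro x y hx hy ⟨t₁, h₁⟩ ⟨t₂, h₂⟩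
      exact ⟨t₁ + t₂, stmt8K_add hconv h₁ h₂⟩
    · rintro a x hx ⟨t, h⟩
      rcases lt_trichotomy a 0 with hneg | h0 | hpos
      · obtain ⟨t', h'⟩ := stmt8K_negfst h
        refine ⟨(-a) * t', ?_⟩
        have h2 := stmt8K_smul (neg_pos.mpr hneg) h'
        have : (-a) • ((-x, t') : stmt8FF N) = ((a • x, -a * t') : stmt8FF N) := by
          rw [Prod.smul_mk, smul_neg, neg_smul, neg_neg, smul_eq_mul]
        rwa [this] at h2
      · exact ⟨0, by rw [h0, zero_smul]; exact stmt8K_zero hTne⟩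
      · exact ⟨a * t, stmt8K_smul hpos h⟩
  have dense : ∀ z : stmt8FF N, ∃ x : f.domain, (x : stmt8FF N) + z ∈ Kh := by
    intro z
    have hz1 : z.1 ∈ S ⊔ V := by rw [hV.sup_eq_top]; exact Submodule.mem_top
    obtain ⟨σ, hσ, w, hw, hsum⟩ := Submodule.mem_sup.mp hz1
    obtain ⟨t', hk⟩ := hQ σ hσ
    refine ⟨⟨(t' - z.2) • e, Submodule.smul_mem _ _ (Submodule.mem_span_singleton_self e)⟩,
      ⟨(σ, t'), hk, w, hw, ?_⟩⟩
    show (t' - z.2) • e + z = (σ, t') + (w, 0)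
    refine Prod.ext ?_ ?_
    · show (t' - z.2) • ((0, 0) : (Fin N → ℝ) × ℝ) + z.1 = σ + w
      rw [Prod.mk_zero_zero, smul_zero, zero_add, ← hsum]
    · show (t' - z.2) • (1 : ℝ) + z.2 = t' + 0
      rw [smul_eq_mul, mul_one]; ring
  obtain ⟨g, hgf, hgK⟩ := riesz_extension (Kh.toPointedCone (by
    show (0 : stmt8FF N) ∈ KV
    exact ⟨0, stmt8K_zero hTne, 0, V.zero_mem, by rw [Prod.mk_zero_zero, add_zero]⟩)) f nonneg dense
  have hge : g e = 1 := by
    have h1 := hgf ⟨e, Submodule.mem_span_singleton_self e⟩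
    have h2 := LinearPMap.mkSpanSingleton_apply (σ := RingHom.id ℝ) ℝ ℝ he (1 : ℝ)
    exact h1.trans h2
  set L : (Fin N → ℝ) →ₗ[ℝ] ℝ :=
    g.comp ((LinearMap.inl ℝ ((Fin N → ℝ) × ℝ) ℝ).comp (LinearMap.inl ℝ (Fin N → ℝ) ℝ)) with hL
  have hLv : ∀ v : Fin N → ℝ, L v = g ((v, 0), 0) := fun v => rfl
  have hsplit : ∀ (v : Fin N → ℝ) (s t : ℝ),
      g ((v, s), t) = L v + s * g ((0, 1), 0) + t := by
    intro v s t
    have hdec : (((v, s), t) : stmt8FF N)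
        = ((v, 0), 0) + s • ((((0 : Fin N → ℝ), 1), 0) : stmt8FF N) + t • e := by
      refine Prod.ext (Prod.ext ?_ ?_) ?_ <;> simp [he_def]
    rw [hdec, map_add, map_add, map_smul, map_smul, hge, ← hLv v]
    simp [smul_eq_mul]
  obtain ⟨p₀, hp₀⟩ := hTne
  refine ⟨fun i => -(L fun j => if i = j then 1 else 0), -(g ((0, 1), 0)), ?_⟩
  intro p hp
  have hsum : (∑ i, -(L fun j => if i = j then 1 else 0) * p.1 i) = -(L p.1) := by
    rw [LinearMap.pi_apply_eq_sum_univ L p.1, ← Finset.sum_neg_distrib]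
    exact Finset.sum_congr rfl fun i _ => by rw [smul_eq_mul]; ring
  have mem1 : (((p.1, 1), p.2 + ε / 2) : stmt8FF N) ∈ Kh := by
    refine ⟨((p.1, 1), p.2 + ε / 2),
      ⟨1, 0, p, p₀, p.2 + ε / 2, p₀.2 - ε / 2, hp, hp₀, zero_le_one, le_refl 0,
        le_refl _, le_refl _, ?_⟩, 0, V.zero_mem, ?_⟩
    · rw [one_smul, zero_smul, add_zero]
    · rw [Prod.mk_zero_zero, add_zero]
  have mem2 : (((-p.1, -1), -(p.2 - ε / 2)) : stmt8FF N) ∈ Kh := by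
    refine ⟨((-p.1, -1), -(p.2 - ε / 2)),
      ⟨0, 1, p₀, p, p₀.2 + ε / 2, p.2 - ε / 2, hp₀, hp, le_refl 0, zero_le_one,
        le_refl _, le_refl _, ?_⟩, 0, V.zero_mem, ?_⟩
    · rw [one_smul, zero_smul, zero_add]
    · rw [Prod.mk_zero_zero, add_zero]
  have h1 := hgK _ mem1
  have h2 := hgK _ mem2
  rw [hsplit] at h1 h2
  rw [map_neg] at h2
  show |p.2 - ((∑ i, -(L fun j => if i = j then 1 else 0) * p.1 i) + -(g ((0, 1), 0)))| ≤ ε / 2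
  rw [hsum, abs_le]
  constructor
  · linarith
  · linarith


/-- Theorem: aggregation with `ε`-Pareto Indifference.
Let `ε ≥ 0` and let `(X, u₀, {u₁,…,u_N})` be a setting with vN-M utilities.  Then
`ε`-Pareto Indifference holds iff there is a utilitarian aggregator
`w = Σᵢ aᵢ uᵢ + b` (weights of arbitrary sign) with `‖u₀ − w‖∞ ≤ ε/2`. -/
theorem stmt8 {E : Type*} [AddCommGroup E] [Module ℝ E]
    {N : ℕ} (hN : 1 ≤ N) {ε : ℝ} (hε : 0 ≤ ε)
    (X : Set E) (hXne : X.Nonempty) (hXconv : Convex ℝ X)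
    (u₀ : E → ℝ) (u : Fin N → E → ℝ)
    (haff₀ : ∀ x ∈ X, ∀ y ∈ X, ∀ l : ℝ, 0 ≤ l → l ≤ 1 →
      u₀ (l • x + (1 - l) • y) = l * u₀ x + (1 - l) * u₀ y)
    (haff : ∀ i : Fin N, ∀ x ∈ X, ∀ y ∈ X, ∀ l : ℝ, 0 ≤ l → l ≤ 1 →
      u i (l • x + (1 - l) • y) = l * u i x + (1 - l) * u i y) :
    (∀ x ∈ X, ∀ y ∈ X, (∀ i, u i x = u i y) → u₀ y - ε ≤ u₀ x) ↔
      (∃ (a : Fin N → ℝ) (b : ℝ),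
        ∀ x ∈ X, |u₀ x - ((∑ i, a i * u i x) + b)| ≤ ε / 2) := by
  constructor
  · intro hPI
    set T : Set ((Fin N → ℝ) × ℝ) := (fun x => ((fun i => u i x), u₀ x)) '' X with hT
    have hTne : T.Nonempty := hXne.image _
    have hconv : Convex ℝ T := by
      rintro p ⟨x, hx, rfl⟩ q ⟨y, hy, rfl⟩ α β hα hβ hαβ
      have hβ' : β = 1 - α := by linarith
      have hα1 : α ≤ 1 := by linarith
      refine ⟨α • x + (1 - α) • y, hXconv hx hy hα (by linarith) (by ring), ?_⟩
      subst hβ'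
      refine Prod.ext ?_ ?_
      · show (fun i => u i (α • x + (1 - α) • y)) = α • (fun i => u i x) + (1 - α) • (fun i => u i y)
        funext i
        simp only [Pi.add_apply, Pi.smul_apply, smul_eq_mul]
        exact haff i x hx y hy α hα hα1
      · show u₀ (α • x + (1 - α) • y) = α • u₀ x + (1 - α) • u₀ y
        simp only [smul_eq_mul]
        exact haff₀ x hx y hy α hα hα1
    have hpar : ∀ p ∈ T, ∀ q ∈ T, p.1 = q.1 → p.2 - ε ≤ q.2 := by
      rintro p ⟨x, hx, rfl⟩ q ⟨y, hy, rfl⟩ h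
      exact hPI y hy x hx fun i => (congrFun h i).symm
    obtain ⟨a, b, hab⟩ := stmt8key hTne hconv hpar
    exact ⟨a, b, fun x hx => hab _ ⟨x, hx, rfl⟩⟩
  · rintro ⟨a, b, hab⟩ x hx y hy hxy
    have h1 := hab x hx
    have h2 := hab y hy
    have hs : (∑ i, a i * u i x) = ∑ i, a i * u i y :=
      Finset.sum_congr rfl fun i _ => by rw [hxy i]
    rw [abs_le] at h1 h2
    linarith [h1.1, h1.2, h2.1, h2.2]
end

section
/- Let ε ≥ 0 and let (X, u₀, {u₁,…,u_N}) be a setting with vN-M utilities satisfying Sequential ε-Strong Pareto. Then for each fixed i ∈ {1,…,N} there exist a real number a₀ ≥ 0 and real numbers a_j ≥ 0 for j ∈ {1,…,N} \ {i} such that for all x, y ∈ X: a₀(u₀(y) − u₀(x)) + Σ_{j≠i} a_j (u_j(x) − u_j(y)) + (u_i(x) − u_i(y)) ≤ a₀ ε. -/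
open Filter Topology

set_option maxHeartbeats 2000000


/-- Sequential `ε`-Strong Pareto for the pair `(u₀, {u₁,…,u_N})` on `X`:
(a) there are no `x, y ∈ X` with `u₀(x) < u₀(y) − ε` and `uᵢ(x) ≥ uᵢ(y)` for all `i`;
(b) there are no sequences `(x_n), (y_n)` in `X` and index `i` with
`uᵢ(x_n) > uᵢ(y_n)` for all `n`,
`liminf (u_j(x_n) − u_j(y_n))/(uᵢ(x_n) − uᵢ(y_n)) ≥ 0` for all `j ≠ i`, and
`liminf (u₀(y_n) − u₀(x_n) − ε)/(uᵢ(x_n) − uᵢ(y_n)) ≥ 0`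
(limits inferior taken in the extended reals). -/
def SequentialStrongPareto {E : Type*} {N : ℕ} (X : Set E) (ε : ℝ)
    (u₀ : E → ℝ) (u : Fin N → E → ℝ) : Prop :=
  (¬ ∃ x ∈ X, ∃ y ∈ X, u₀ x < u₀ y - ε ∧ ∀ i, u i y ≤ u i x) ∧
  (¬ ∃ (xs ys : ℕ → E) (i : Fin N), (∀ n, xs n ∈ X) ∧ (∀ n, ys n ∈ X) ∧
      (∀ n, u i (ys n) < u i (xs n)) ∧
      (∀ j, j ≠ i → (0 : EReal) ≤ Filter.liminf
        (fun n => (((u j (xs n) - u j (ys n)) / (u i (xs n) - u i (ys n)) : ℝ) : EReal))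
        Filter.atTop) ∧
      (0 : EReal) ≤ Filter.liminf
        (fun n => (((u₀ (ys n) - u₀ (xs n) - ε) / (u i (xs n) - u i (ys n)) : ℝ) : EReal))
        Filter.atTop)

/-- Let `ε ≥ 0` and let `(X, u₀, {u₁,…,u_N})` be a setting with vN-M
utilities satisfying Sequential `ε`-Strong Pareto.  Then for each fixed `i` there exist
`a₀ ≥ 0` and `a_j ≥ 0` for `j ≠ i` such that for all `x, y ∈ X`:
`a₀(u₀(y) − u₀(x)) + Σ_{j≠i} a_j (u_j(x) − u_j(y)) + (uᵢ(x) − uᵢ(y)) ≤ a₀ ε`. -/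
theorem stmt10 {E : Type*} [AddCommGroup E] [Module ℝ E]
    {N : ℕ} (hN : 1 ≤ N) {ε : ℝ} (hε : 0 ≤ ε)
    (X : Set E) (hXne : X.Nonempty) (hXconv : Convex ℝ X)
    (u₀ : E → ℝ) (u : Fin N → E → ℝ)
    (haff₀ : ∀ x ∈ X, ∀ y ∈ X, ∀ l : ℝ, 0 ≤ l → l ≤ 1 →
      u₀ (l • x + (1 - l) • y) = l * u₀ x + (1 - l) * u₀ y)
    (haff : ∀ i : Fin N, ∀ x ∈ X, ∀ y ∈ X, ∀ l : ℝ, 0 ≤ l → l ≤ 1 →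
      u i (l • x + (1 - l) • y) = l * u i x + (1 - l) * u i y)
    (hPareto : SequentialStrongPareto X ε u₀ u) :
    ∀ i : Fin N, ∃ (a₀ : ℝ) (a : Fin N → ℝ), 0 ≤ a₀ ∧ (∀ j, 0 ≤ a j) ∧
      ∀ x ∈ X, ∀ y ∈ X,
        a₀ * (u₀ y - u₀ x) + (∑ j ∈ Finset.univ.erase i, a j * (u j x - u j y)) +
            (u i x - u i y) ≤ a₀ * ε := by
  have hPareto2 := hPareto.2
  classical
  intro i
  obtain ⟨x₀, hx₀⟩ := hXne
  set φ : E → E → (Option (Fin N) → ℝ) :=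
    fun x y k => Option.elim k (u₀ y - u₀ x - ε) (fun j => u j x - u j y) with hφdef
  -- biaffinity
  have hbi : ∀ x₁ ∈ X, ∀ y₁ ∈ X, ∀ x₂ ∈ X, ∀ y₂ ∈ X, ∀ l : ℝ, 0 ≤ l → l ≤ 1 →
      φ (l • x₁ + (1 - l) • x₂) (l • y₁ + (1 - l) • y₂)
        = l • φ x₁ y₁ + (1 - l) • φ x₂ y₂ := by
    intro x₁ hx₁ y₁ hy₁ x₂ hx₂ y₂ hy₂ l hl0 hl1
    funext k
    cases k with
    | none =>
      simp only [hφdef, Option.elim, Pi.add_apply, Pi.smul_apply, smul_eq_mul]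
      rw [haff₀ x₁ hx₁ x₂ hx₂ l hl0 hl1, haff₀ y₁ hy₁ y₂ hy₂ l hl0 hl1]; ring
    | some j =>
      simp only [hφdef, Option.elim, Pi.add_apply, Pi.smul_apply, smul_eq_mul]
      rw [haff j x₁ hx₁ x₂ hx₂ l hl0 hl1, haff j y₁ hy₁ y₂ hy₂ l hl0 hl1]; ring
  set C : Set (Option (Fin N) → ℝ) :=
    {c | ∃ t : ℝ, 0 ≤ t ∧ ∃ x ∈ X, ∃ y ∈ X, ∃ w : Option (Fin N) → ℝ,
      (∀ k, 0 ≤ w k) ∧ w (some i) = 0 ∧ c = t • φ x y - w} with hCdef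
  have hDC : ∀ x ∈ X, ∀ y ∈ X, φ x y ∈ C := by
    intro x hx y hy
    exact ⟨1, zero_le_one, x, hx, y, hy, 0, fun k => le_refl 0, rfl, by simp⟩
  have h0C : (0 : Option (Fin N) → ℝ) ∈ C :=
    ⟨0, le_refl 0, x₀, hx₀, x₀, hx₀, 0, fun k => le_refl 0, rfl, by simp⟩
  have hnegC : ∀ k, k ≠ some i → -(Pi.single k (1:ℝ)) ∈ C := by
    intro k hk
    refine ⟨0, le_refl 0, x₀, hx₀, x₀, hx₀, Pi.single k 1, ?_, ?_, by simp⟩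
    · intro k'
      rcases eq_or_ne k' k with rfl | h
      · simp
      · simp [Pi.single_eq_of_ne h]
    · simp [Pi.single_eq_of_ne (Ne.symm hk)]
  have hscale : ∀ c ∈ C, ∀ s : ℝ, 0 ≤ s → s • c ∈ C := by
    rintro c ⟨t, ht, x, hx, y, hy, w, hw, hwi, rfl⟩ s hs
    refine ⟨s * t, mul_nonneg hs ht, x, hx, y, hy, s • w, fun k => by
      simpa using mul_nonneg hs (hw k), by simp [hwi], ?_⟩
    rw [smul_sub, smul_smul]
  have hconv : Convex ℝ C := by
    rintro c₁ ⟨t₁, ht₁, x₁, hx₁, y₁, hy₁, w₁, hw₁, hw₁i, rfl⟩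
      c₂ ⟨t₂, ht₂, x₂, hx₂, y₂, hy₂, w₂, hw₂, hw₂i, rfl⟩ p q hp hq hpq
    rcases eq_or_lt_of_le (add_nonneg (mul_nonneg hp ht₁) (mul_nonneg hq ht₂)) with hT | hT
    · -- p*t₁ + q*t₂ = 0
      have h1 : p * t₁ = 0 := by nlinarith [mul_nonneg hp ht₁, mul_nonneg hq ht₂]
      have h2 : q * t₂ = 0 := by nlinarith [mul_nonneg hp ht₁, mul_nonneg hq ht₂]
      refine ⟨0, le_refl 0, x₀, hx₀, x₀, hx₀, p • w₁ + q • w₂, fun k => by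
        simpa using add_nonneg (mul_nonneg hp (hw₁ k)) (mul_nonneg hq (hw₂ k)),
        by simp [hw₁i, hw₂i], ?_⟩
      rw [smul_sub, smul_sub]
      funext k
      simp only [Pi.add_apply, Pi.sub_apply, Pi.smul_apply, Pi.zero_apply, smul_eq_mul,
        zero_mul, zero_sub]
      have e1 : p * (t₁ * φ x₁ y₁ k) = 0 := by rw [← mul_assoc, h1, zero_mul]
      have e2 : q * (t₂ * φ x₂ y₂ k) = 0 := by rw [← mul_assoc, h2, zero_mul]
      linarith [e1, e2]
    · set T := p * t₁ + q * t₂ with hTdef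
      set l := p * t₁ / T with hldef
      have hl0 : 0 ≤ l := div_nonneg (mul_nonneg hp ht₁) hT.le
      have hl1 : l ≤ 1 := by
        rw [hldef, div_le_one hT]
        nlinarith [mul_nonneg hq ht₂]
      have h1l : 1 - l = q * t₂ / T := by
        field_simp [hldef]
        have e : T * l = p * t₁ := by rw [hldef]; field_simp
        linarith
      refine ⟨T, hT.le, l • x₁ + (1 - l) • x₂, hXconv hx₁ hx₂ hl0 (by linarith) (by ring),
        l • y₁ + (1 - l) • y₂, hXconv hy₁ hy₂ hl0 (by linarith) (by ring),
        p • w₁ + q • w₂, fun k => by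
          simpa using add_nonneg (mul_nonneg hp (hw₁ k)) (mul_nonneg hq (hw₂ k)),
        by simp [hw₁i, hw₂i], ?_⟩
      rw [hbi x₁ hx₁ y₁ hy₁ x₂ hx₂ y₂ hy₂ l hl0 hl1]
      have e1 : T * l = p * t₁ := by rw [hldef]; field_simp
      have e2 : T * (1 - l) = q * t₂ := by rw [h1l]; field_simp
      clear_value T l
      funext k
      simp only [Pi.add_apply, Pi.sub_apply, Pi.smul_apply, smul_eq_mul]
      linear_combination (-φ x₁ y₁ k) * e1 + (-φ x₂ y₂ k) * e2
  -- the key non-membership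
  have hnotmem : (Pi.single (some i) (1:ℝ)) ∉ closure C := by
    intro hmem
    rw [mem_closure_iff_seq_limit] at hmem
    obtain ⟨c, hcC, hclim⟩ := hmem
    choose t ht x hx y hy w hw hwi hc using hcC
    have hcoord : ∀ k, Tendsto (fun n => c n k) atTop (𝓝 ((Pi.single (some i) (1:ℝ) : Option (Fin N) → ℝ) k)) := by
      intro k
      exact (tendsto_pi_nhds.1 hclim) k
    have hci : Tendsto (fun n => t n * φ (x n) (y n) (some i)) atTop (𝓝 1) := by
      have := hcoord (some i)
      simp only [Pi.single_eq_same] at this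
      convert this using 2 with n
      rw [hc n]
      simp [hwi n]
    have hev : ∀ᶠ n in atTop, (1:ℝ)/2 < t n * φ (x n) (y n) (some i) := by
      have : (1:ℝ)/2 < 1 := by norm_num
      exact hci.eventually_const_lt this
    obtain ⟨n₀, hn₀⟩ := eventually_atTop.1 hev
    -- shifted sequences
    set xs : ℕ → E := fun m => x (n₀ + m) with hxs
    set ys : ℕ → E := fun m => y (n₀ + m) with hys
    have hb : ∀ m, 1/2 < t (n₀ + m) * φ (xs m) (ys m) (some i) := fun m =>
      hn₀ (n₀ + m) (Nat.le_add_right _ _)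
    have htpos : ∀ m, 0 < t (n₀ + m) := by
      intro m
      rcases (ht (n₀ + m)).lt_or_eq with h | h
      · exact h
      · exfalso; have := hb m; rw [← h, zero_mul] at this; linarith
    have hφipos : ∀ m, 0 < φ (xs m) (ys m) (some i) := by
      intro m
      have h1 := hb m
      have h2 := htpos m
      nlinarith
    -- ratio liminf
    have hliminf : ∀ k, k ≠ some i →
        (0 : EReal) ≤ liminf (fun m =>
          ((φ (xs m) (ys m) k / φ (xs m) (ys m) (some i) : ℝ) : EReal)) atTop := by
      intro k hk
      have hck : Tendsto (fun n => c n k) atTop (𝓝 0) := by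
        have := hcoord k
        rwa [Pi.single_eq_of_ne hk] at this
      -- eventual lower bounds on t*φ_k
      have hlow : ∀ n, c n k ≤ t n * φ (x n) (y n) k := by
        intro n
        rw [hc n]
        simp only [Pi.sub_apply, Pi.smul_apply, smul_eq_mul]
        linarith [hw n k]
      have key : ∀ δ : ℝ, 0 < δ → ∀ᶠ m in atTop,
          (-δ : ℝ) ≤ φ (xs m) (ys m) k / φ (xs m) (ys m) (some i) := by
        intro δ hδ
        have h1 : ∀ᶠ n in atTop, -δ/2 < c n k :=
          hck.eventually_const_lt (by linarith)
        obtain ⟨n₁, hn₁⟩ := eventually_atTop.1 h1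
        refine eventually_atTop.2 ⟨n₁, fun m hm => ?_⟩
        have hm' : n₁ ≤ n₀ + m := le_trans hm (Nat.le_add_left _ _)
        have h2 : -δ/2 < t (n₀ + m) * φ (xs m) (ys m) k := lt_of_lt_of_le (hn₁ _ hm') (hlow _)
        have h3 := hb m
        have h4 := htpos m
        have h5 := hφipos m
        rw [le_div_iff₀ h5]
        -- -δ * φ_i ≤ φ_k. Multiply by t > 0 : -δ * (t φ_i) ≤ t φ_k.
        have h6 : -δ * (t (n₀+m) * φ (xs m) (ys m) (some i)) ≤ t (n₀+m) * φ (xs m) (ys m) k := by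
          nlinarith
        nlinarith
      have hkey2 : ∀ δ : ℝ, 0 < δ → ((-δ : ℝ) : EReal) ≤ liminf (fun m =>
          ((φ (xs m) (ys m) k / φ (xs m) (ys m) (some i) : ℝ) : EReal)) atTop := by
        intro δ hδ
        refine le_liminf_of_le (by isBoundedDefault) ?_
        filter_upwards [key δ hδ] with m hm
        exact_mod_cast hm
      by_contra hneg
      push_neg at hneg
      obtain ⟨r, hr1, hr2⟩ := EReal.lt_iff_exists_real_btwn.1 hneg
      have hr0 : r < 0 := by exact_mod_cast hr2
      have h := hkey2 (-r) (by linarith)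
      rw [neg_neg] at h
      exact absurd (lt_of_le_of_lt h hr1) (lt_irrefl _)
    -- contradiction with Pareto (b)
    refine hPareto2 ⟨xs, ys, i, fun m => hx (n₀+m), fun m => hy (n₀+m), ?_, ?_, ?_⟩
    · intro m
      have := hφipos m
      simpa [hφdef, sub_pos] using this
    · intro j hj
      have := hliminf (some j) (by simpa using hj)
      simpa [hφdef] using this
    · have := hliminf none (by simp)
      simpa [hφdef] using this
  -- separation
  obtain ⟨f, ub, hfa, hfx⟩ := geometric_hahn_banach_closed_point
    (hconv.closure) isClosed_closure hnotmem
  have hub0 : 0 < ub := by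
    have := hfa 0 (subset_closure h0C)
    simpa using this
  have hfC : ∀ cc ∈ C, f cc ≤ 0 := by
    intro cc hcc
    by_contra h
    push_neg at h
    have hs : (0:ℝ) < ub / f cc + 1 := by positivity
    have := hfa ((ub / f cc + 1) • cc) (subset_closure (hscale cc hcc _ hs.le))
    rw [map_smul, smul_eq_mul] at this
    have : (ub / f cc + 1) * f cc = ub + f cc := by field_simp
    nlinarith [hfa ((ub / f cc + 1) • cc) (subset_closure (hscale cc hcc _ hs.le)),
      map_smul f (ub / f cc + 1) cc]
  set lam : Option (Fin N) → ℝ := fun k => f (Pi.single k 1) with hlam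
  have hlami : 0 < lam (some i) := lt_trans hub0 hfx
  have hlamnn : ∀ k, k ≠ some i → 0 ≤ lam k := by
    intro k hk
    have := hfC _ (hnegC k hk)
    rw [map_neg] at this
    linarith
  have hexpand : ∀ cc : Option (Fin N) → ℝ, f cc = ∑ k, cc k * lam k := by
    intro cc
    have h1 : (∑ k, cc k • (Pi.single k 1 : Option (Fin N) → ℝ)) = cc := by
      have h2 : ∀ k, cc k • (Pi.single k 1 : Option (Fin N) → ℝ) = Pi.single k (cc k) := by
        intro k
        funext k'
        rcases eq_or_ne k' k with rfl | h
        · simp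
        · simp [Pi.single_eq_of_ne h]
      rw [Finset.sum_congr rfl (fun k _ => h2 k)]
      exact Finset.univ_sum_single cc
    have h3 : f cc = f (∑ k, cc k • (Pi.single k 1 : Option (Fin N) → ℝ)) := by rw [h1]
    rw [h3, map_sum]
    exact Finset.sum_congr rfl fun k _ => by rw [map_smul, smul_eq_mul]
  have hineq : ∀ x ∈ X, ∀ y ∈ X, ∑ k, φ x y k * lam k ≤ 0 := by
    intro x hx y hy
    rw [← hexpand]
    exact hfC _ (hDC x hx y hy)
  refine ⟨lam none / lam (some i), fun j => lam (some j) / lam (some i),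
    div_nonneg (hlamnn none (by simp)) hlami.le,
    fun j => by
      rcases eq_or_ne j i with rfl | h
      · exact div_nonneg hlami.le hlami.le
      · exact div_nonneg (hlamnn (some j) (by simpa using h)) hlami.le,
    ?_⟩
  intro x hx y hy
  have key := hineq x hx y hy
  rw [Fintype.sum_option] at key
  have hsplit : ∑ j : Fin N, φ x y (some j) * lam (some j)
      = (∑ j ∈ Finset.univ.erase i, φ x y (some j) * lam (some j))
        + φ x y (some i) * lam (some i) := by
    rw [Finset.sum_erase_add _ _ (Finset.mem_univ i)]
  rw [hsplit] at key
  -- now key : φnone * lam none + (∑erase + φi*lami) ≤ 0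
  have hφn : φ x y none = u₀ y - u₀ x - ε := rfl
  have hφs : ∀ j, φ x y (some j) = u j x - u j y := fun j => rfl
  set L := lam (some i) with hL
  have hLne : L ≠ 0 := ne_of_gt hlami
  have hsum : ∑ j ∈ Finset.univ.erase i, lam (some j) / L * (u j x - u j y)
      = (∑ j ∈ Finset.univ.erase i, φ x y (some j) * lam (some j)) / L := by
    rw [Finset.sum_div]
    congr 1
    funext j
    rw [hφs]
    field_simp
  rw [hsum]
  set S := ∑ j ∈ Finset.univ.erase i, φ x y (some j) * lam (some j) with hS
  rw [hφn, hφs] at key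
  have hgoal : lam none / L * ε - (lam none / L * (u₀ y - u₀ x) + S / L + (u i x - u i y))
      = -((u₀ y - u₀ x - ε) * lam none + (S + (u i x - u i y) * L)) / L := by
    field_simp
    ring
  have hfinal : (0:ℝ) ≤ -((u₀ y - u₀ x - ε) * lam none + (S + (u i x - u i y) * L)) / L :=
    div_nonneg (by linarith) hlami.le
  linarith [hgoal ▸ hfinal]
end
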